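/- arXiv:2409.03903 — 7 statements merged into one kernel-verified Lean document; each statement's English description precedes it below -/
import Mathlib

section
/- Let k ≥ 1, q > k, R* ≥ 1 and R ≥ R* be integers, and set R' = R + R*·T(q−1, k−1). If Γ(R, R*, q−1, k, k) is nonempty, then Γ(R', R*, q, k, k) is nonempty; that is, from a (q−1,k)-alphabet reduction pair of arrays of strength k with R rows in which the row (0,1,...,q−2) has multiplicity R* in the second array, one can construct a (q,k)-alphabet reduction pair of arrays of strength k with R' rows in which the row (0,1,...,q−1) has multiplicity R* in the second array. -/
/-- `T(a,b) = Σ_{r=0}^{b} C(a,r)·C(a−1−r, b−r)`. -/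
def T (a b : ℕ) : ℕ :=
  ∑ r ∈ Finset.range (b + 1), Nat.choose a r * Nat.choose (a - 1 - r) (b - r)

/-- `(Ψ, Φ)` is a `(q,p)`-alphabet reduction pair of arrays (ARPA) of strength `k`:
both arrays have `R` rows, `q` columns indexed by `Σ_q` and entries in `Σ_q`;
`Φ` contains at least one row equal to `(0, 1, ..., q-1)` (i.e. the identity);
every row of `Ψ` takes at most `p` pairwise distinct values; and for every `k` pairwise
distinct columns and every `v ∈ Σ_q^k`, `Ψ` and `Φ` have the same number of rows whose
restriction to these columns equals `v`. -/
def IsARPA (q p k R : ℕ) (Ψ Φ : Fin R → Fin q → Fin q) : Prop :=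
  (∃ r, ∀ j : Fin q, Φ r j = j) ∧
  (∀ r, (Finset.univ.image (Ψ r)).card ≤ p) ∧
  (∀ c : Fin k → Fin q, StrictMono c → ∀ v : Fin k → Fin q,
    (Finset.univ.filter fun r => ∀ s, Ψ r (c s) = v s).card =
      (Finset.univ.filter fun r => ∀ s, Φ r (c s) = v s).card)

/-- `Γ(R, R*, q, p, k)` is nonempty: there is a `(q,p)`-ARPA of strength `k` with `R` rows
in which the row `(0, 1, ..., q-1)` occurs exactly `R*` times in `Φ`. -/
def GammaNonempty (R Rstar q p k : ℕ) : Prop :=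
  ∃ Ψ Φ : Fin R → Fin q → Fin q, IsARPA q p k R Ψ Φ ∧
    (Finset.univ.filter fun r => ∀ j : Fin q, Φ r j = j).card = Rstar

/-- `γ(q,p,k)`: the supremum of `R*/R` over all integers `R ≥ R* > 0` such that
`Γ(R, R*, q, p, k)` is nonempty. -/
noncomputable def gammaARPA (q p k : ℕ) : ℝ :=
  sSup {x : ℝ | ∃ R Rstar : ℕ, 0 < Rstar ∧ Rstar ≤ R ∧ GammaNonempty R Rstar q p k ∧
    x = (Rstar : ℝ) / R}

open Finset

namespace ARlem



/-- auxiliary alternating sum -/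
def G (a n t : ℕ) : ℤ :=
  ∑ e ∈ Finset.range (t+1), (-1:ℤ)^e * (Nat.choose a e) * (Nat.choose (n-1+t-e) (t-e))

lemma G_zero (a n : ℕ) : G a n 0 = 1 := by
  simp [G]

lemma G_key (b n t : ℕ) (hn : 1 ≤ n) : G b n (t+1) =
    (∑ e ∈ Finset.range (t+1),
      (-1:ℤ)^(e+1) * (Nat.choose b (e+1)) * (Nat.choose (n-1+t-e) (t-e)))
    + (Nat.choose (n+t) (t+1)) := by
  rw [G, Finset.sum_range_succ']
  congr 1
  · apply Finset.sum_congr rfl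
    intro e he
    have h1 : n - 1 + (t+1) - (e+1) = n - 1 + t - e := by omega
    have h2 : t + 1 - (e+1) = t - e := by omega
    rw [h1, h2]
  · have h1 : n - 1 + (t+1) - 0 = n + t := by omega
    simp [h1]

lemma G_rec1 (a n t : ℕ) (hn : 1 ≤ n) : G (a+1) n (t+1) + G a n t = G a n (t+1) := by
  rw [G_key (a+1) n t hn, G_key a n t hn]
  have : (G a n t : ℤ) = ∑ e ∈ Finset.range (t+1),
      (-1:ℤ)^e * (Nat.choose a e) * (Nat.choose (n-1+t-e) (t-e)) := rfl
  rw [this, add_right_comm, ← Finset.sum_add_distrib]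
  congr 1
  apply Finset.sum_congr rfl
  intro e he
  rw [Nat.choose_succ_succ a e]
  push_cast
  ring

lemma G_rec2 (a n t : ℕ) (hn : 1 ≤ n) :
    G a (n+1) (t+1) = G a (n+1) t + G a n (t+1) := by
  have hL : G a (n+1) (t+1) =
      (∑ e ∈ Finset.range (t+1), (-1:ℤ)^e * (Nat.choose a e) *
        ((Nat.choose (n+t-e) (t-e)) + (Nat.choose (n+t-e) (t+1-e))))
      + (-1:ℤ)^(t+1) * (Nat.choose a (t+1)) * (Nat.choose n 0) := by
    rw [G, Finset.sum_range_succ]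
    congr 1
    · apply Finset.sum_congr rfl
      intro e he
      simp only [Finset.mem_range] at he
      have h1 : n + 1 - 1 + (t+1) - e = (n + t - e) + 1 := by omega
      have h2 : t + 1 - e = (t - e) + 1 := by omega
      rw [h1, h2, Nat.choose_succ_succ]
      push_cast
      ring
    · have h1 : n + 1 - 1 + (t+1) - (t+1) = n := by omega
      have h2 : t + 1 - (t+1) = 0 := by omega
      rw [h1, h2]
  have hR2 : G a n (t+1) =
      (∑ e ∈ Finset.range (t+1), (-1:ℤ)^e * (Nat.choose a e) * (Nat.choose (n+t-e) (t+1-e)))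
      + (-1:ℤ)^(t+1) * (Nat.choose a (t+1)) * (Nat.choose n 0) := by
    rw [G, Finset.sum_range_succ]
    congr 1
    · apply Finset.sum_congr rfl
      intro e he
      have h1 : n - 1 + (t+1) - e = n + t - e := by omega
      rw [h1]
    · have h1 : n - 1 + (t+1) - (t+1) = n - 1 := by omega
      have h2 : t + 1 - (t+1) = 0 := by omega
      rw [h1, h2]
      simp
  have hR1 : G a (n+1) t =
      ∑ e ∈ Finset.range (t+1), (-1:ℤ)^e * (Nat.choose a e) * (Nat.choose (n+t-e) (t-e)) := by
    rw [G]
    apply Finset.sum_congr rfl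
    intro e he
    have h1 : n + 1 - 1 + t - e = n + t - e := by omega
    rw [h1]
  rw [hL, hR2, hR1]
  have hsplit : ∑ e ∈ Finset.range (t+1), (-1:ℤ)^e * (Nat.choose a e) *
        ((Nat.choose (n+t-e) (t-e)) + (Nat.choose (n+t-e) (t+1-e)))
      = (∑ e ∈ Finset.range (t+1), (-1:ℤ)^e * (Nat.choose a e) * (Nat.choose (n+t-e) (t-e)))
      + (∑ e ∈ Finset.range (t+1), (-1:ℤ)^e * (Nat.choose a e) * (Nat.choose (n+t-e) (t+1-e))) := by
    rw [← Finset.sum_add_distrib]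
    apply Finset.sum_congr rfl
    intro e he
    ring
  rw [hsplit]
  ring

lemma alt_one : ∀ T : ℕ, (∑ e ∈ Finset.range (T+1), (-1:ℤ)^e * (Nat.choose 1 e))
    = if T = 0 then 1 else 0 := by
  intro T
  induction T with
  | zero => simp
  | succ T ih =>
    rw [Finset.sum_range_succ, ih]
    rcases Nat.eq_zero_or_pos T with h | h
    · subst h; norm_num
    · have : Nat.choose 1 (T+1) = 0 := Nat.choose_eq_zero_of_lt (by omega)
      rw [this]
      have : T ≠ 0 := by omega
      simp [this]

lemma G_one (t : ℕ) : G 1 1 t = if t = 0 then 1 else 0 := by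
  have : G 1 1 t = ∑ e ∈ Finset.range (t+1), (-1:ℤ)^e * (Nat.choose 1 e) := by
    rw [G]
    apply Finset.sum_congr rfl
    intro e he
    simp only [Finset.mem_range] at he
    have h1 : 1 - 1 + t - e = t - e := by omega
    rw [h1, Nat.choose_self]
    push_cast; ring
  rw [this, alt_one]

lemma G_diag : ∀ n, 1 ≤ n → ∀ t, G n n t = if t = 0 then 1 else 0 := by
  intro n hn
  induction n, hn using Nat.le_induction with
  | base => exact G_one
  | succ n hn ih =>
    intro t
    cases t with
    | zero => simp [G_zero]
    | succ t =>
      have h1 := G_rec1 n (n+1) t (by omega)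
      have h2 := G_rec2 n n t hn
      have h3 := ih (t+1)
      have : (if t + 1 = 0 then (1:ℤ) else 0) = 0 := by simp
      rw [this] at h3 ⊢
      linarith



lemma strength_finset {n k R : ℕ} (hkn : k ≤ n) (F Gm : Fin R → Fin n → Fin n)
    (hstr : ∀ c : Fin k → Fin n, StrictMono c → ∀ v : Fin k → Fin n,
      (Finset.univ.filter fun r => ∀ s, F r (c s) = v s).card =
        (Finset.univ.filter fun r => ∀ s, Gm r (c s) = v s).card) :
    ∀ d (D : Finset (Fin n)) (u : Fin n → Fin n), D.card + d = k →
      (Finset.univ.filter fun r => ∀ jx ∈ D, F r jx = u jx).card =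
        (Finset.univ.filter fun r => ∀ jx ∈ D, Gm r jx = u jx).card := by
  intro d
  induction d with
  | zero =>
    intro D u hcard
    rw [Nat.add_zero] at hcard
    set c : Fin k → Fin n := fun s => D.orderEmbOfFin hcard s with hc
    have hmono : StrictMono c := (D.orderEmbOfFin hcard).strictMono
    have hmem : ∀ s, c s ∈ D := fun s => D.orderEmbOfFin_mem hcard s
    have hsurj : ∀ jx ∈ D, ∃ s, c s = jx := by
      intro jx hjx
      have := D.range_orderEmbOfFin hcard
      have : (jx : Fin n) ∈ Set.range (D.orderEmbOfFin hcard) := by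
        rw [this]; exact hjx
      obtain ⟨s, hs⟩ := this
      exact ⟨s, hs⟩
    have hiff : ∀ (H : Fin n → Fin n), (∀ jx ∈ D, H jx = u jx) ↔ (∀ s, H (c s) = u (c s)) := by
      intro H
      constructor
      · intro h s; exact h (c s) (hmem s)
      · intro h jx hjx
        obtain ⟨s, rfl⟩ := hsurj jx hjx
        exact h s
    have e1 : (Finset.univ.filter fun r => ∀ jx ∈ D, F r jx = u jx) =
        (Finset.univ.filter fun r => ∀ s, F r (c s) = (u ∘ c) s) := by
      apply Finset.filter_congr; intro r _; simpa using hiff (F r)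
    have e2 : (Finset.univ.filter fun r => ∀ jx ∈ D, Gm r jx = u jx) =
        (Finset.univ.filter fun r => ∀ s, Gm r (c s) = (u ∘ c) s) := by
      apply Finset.filter_congr; intro r _; simpa using hiff (Gm r)
    rw [e1, e2]
    exact hstr c hmono (u ∘ c)
  | succ d ih =>
    intro D u hcard
    have hDlt : D.card < n := by omega
    have hne : D ≠ Finset.univ := by
      intro h
      rw [h, Finset.card_univ, Fintype.card_fin] at hDlt
      omega
    obtain ⟨x, hx⟩ : ∃ x, x ∉ D := by
      by_contra hall
      push_neg at hall
      exact hne (Finset.eq_univ_iff_forall.mpr hall)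
    have split : ∀ (H : Fin R → Fin n → Fin n),
        (Finset.univ.filter fun r => ∀ jx ∈ D, H r jx = u jx).card =
        ∑ y : Fin n, (Finset.univ.filter fun r =>
          ∀ jx ∈ insert x D, H r jx = Function.update u x y jx).card := by
      intro H
      rw [Finset.card_eq_sum_card_fiberwise
        (f := fun r => H r x) (t := Finset.univ) (fun r _ => Finset.mem_univ _)]
      apply Finset.sum_congr rfl
      intro y _
      rw [Finset.filter_filter]
      congr 1
      apply Finset.filter_congr
      intro r _
      simp only [Finset.mem_insert]
      constructor
      · intro ⟨h1, h2⟩ jx hjx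
        rcases hjx with rfl | hjx
        · rw [Function.update_self]; exact h2
        · rw [Function.update_of_ne (by rintro rfl; exact hx hjx)]
          exact h1 jx hjx
      · intro h
        refine ⟨fun jx hjx => ?_, ?_⟩
        · have := h jx (Or.inr hjx)
          rwa [Function.update_of_ne (by rintro rfl; exact hx hjx)] at this
        · have := h x (Or.inl rfl)
          rwa [Function.update_self] at this
    rw [split F, split Gm]
    apply Finset.sum_congr rfl
    intro y _
    exact ih (insert x D) (Function.update u x y)
      (by rw [Finset.card_insert_of_notMem hx]; omega)



def mult (m j : ℕ) (S : Finset (Fin m)) : ℕ :=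
  if S.card ≤ j then Nat.choose (m - 1 - S.card) (j - S.card) else 0

abbrev Idx (m j : ℕ) := Σ S : Finset (Fin m), Fin (mult m j S)

lemma card_Idx (m j : ℕ) : Fintype.card (Idx m j) = T m j := by
  classical
  rw [Fintype.card_sigma]
  simp only [Fintype.card_fin]
  have h1 : (∑ S : Finset (Fin m), mult m j S)
      = ∑ S ∈ Finset.univ.filter (fun S : Finset (Fin m) => S.card ≤ j),
          Nat.choose (m - 1 - S.card) (j - S.card) := by
    rw [Finset.sum_filter]
    apply Finset.sum_congr rfl
    intro S _
    rw [mult]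
  rw [h1]
  rw [← Finset.sum_fiberwise_of_maps_to (g := fun S : Finset (Fin m) => S.card)
    (t := Finset.range (j+1)) (fun S hS => by
      simp only [Finset.mem_filter] at hS
      refine Finset.mem_range.mpr ?_
      show S.card < j + 1
      omega)]
  rw [T]
  apply Finset.sum_congr rfl
  intro r hr
  have hrj : r ≤ j := by
    have := Finset.mem_range.mp hr
    omega
  have hset : (Finset.univ.filter (fun S : Finset (Fin m) => S.card ≤ j)).filter
      (fun S => S.card = r) = Finset.powersetCard r (Finset.univ : Finset (Fin m)) := by
    ext S
    simp only [Finset.mem_filter, Finset.mem_univ, true_and,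
      Finset.mem_powersetCard_univ]
    constructor
    · rintro ⟨_, h⟩; exact h
    · intro h; exact ⟨by omega, h⟩
  rw [hset]
  have hconst : ∀ S ∈ Finset.powersetCard r (Finset.univ : Finset (Fin m)),
      Nat.choose (m - 1 - S.card) (j - S.card) = Nat.choose (m - 1 - r) (j - r) := by
    intro S hS
    rw [Finset.mem_powersetCard_univ] at hS
    rw [hS]
  rw [Finset.sum_congr rfl hconst, Finset.sum_const, Finset.card_powersetCard,
    Finset.card_univ, Fintype.card_fin, smul_eq_mul]

noncomputable def blockEquiv (R Rstar m j : ℕ) : (Fin R ⊕ (Fin Rstar × Idx m j)) ≃ Fin (R + Rstar * T m j) :=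
  (Equiv.sumCongr (Equiv.refl _)
    ((Equiv.prodCongr (Equiv.refl _) (Fintype.equivFinOfCardEq (card_Idx m j))).trans
      finProdFinEquiv)).trans finSumFinEquiv

lemma count_split (R Rstar m j : ℕ) (f : Fin R → Fin (m+1) → Fin (m+1))
    (g : Finset (Fin m) → Fin (m+1) → Fin (m+1))
    (p : (Fin (m+1) → Fin (m+1)) → Prop) [DecidablePred p] :
    (Finset.univ.filter fun r =>
        p ((Sum.elim f (fun z : Fin Rstar × Idx m j => g z.2.1))
            ((blockEquiv R Rstar m j).symm r))).card
    = (Finset.univ.filter fun a => p (f a)).card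
      + Rstar * ∑ S : Finset (Fin m), mult m j S * (if p (g S) then 1 else 0) := by
  classical
  rw [Finset.card_filter, Finset.card_filter]
  rw [← Equiv.sum_comp (blockEquiv R Rstar m j)
    (fun r => if p ((Sum.elim f (fun z : Fin Rstar × Idx m j => g z.2.1))
      ((blockEquiv R Rstar m j).symm r)) then (1:ℕ) else 0)]
  simp only [Equiv.symm_apply_apply]
  rw [Fintype.sum_sum_type]
  congr 1
  rw [Fintype.sum_prod_type]
  have hinner : ∀ bb : Fin Rstar,
      (∑ i : Idx m j, if p ((Sum.elim f (fun z : Fin Rstar × Idx m j => g z.2.1))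
          (Sum.inr (bb, i))) then (1:ℕ) else 0)
      = ∑ S : Finset (Fin m), mult m j S * (if p (g S) then 1 else 0) := by
    intro bb
    simp only [Sum.elim_inr]
    rw [← Finset.univ_sigma_univ, Finset.sum_sigma]
    apply Finset.sum_congr rfl
    intro S _
    have hr : (∑ s : Fin (mult m j S), if p (g (⟨S, s⟩ : Idx m j).fst) then (1:ℕ) else 0)
        = ∑ _s : Fin (mult m j S), (if p (g S) then (1:ℕ) else 0) := rfl
    refine hr.trans ?_
    rw [Finset.sum_const, Finset.card_univ, Fintype.card_fin, smul_eq_mul]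
  rw [Finset.sum_congr rfl (fun bb _ => hinner bb), Finset.sum_const, Finset.card_univ,
    Fintype.card_fin, smul_eq_mul]


lemma star (m j : ℕ) (hjm : j < m) (C' B : Finset (Fin m)) (hBC : B ⊆ C') (hC : C'.card = j) :
    ∑ S : Finset (Fin m), mult m j S * (if (S.card % 2 = j % 2 ∧ S ∩ C' = B) then 1 else 0)
    = (∑ S : Finset (Fin m), mult m j S *
        (if (¬(S.card % 2 = j % 2) ∧ S ∩ C' = B) then 1 else 0))
      + (if B = C' then 1 else 0) := by
  classical
  have hb : B.card ≤ j := hC ▸ Finset.card_le_card hBC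
  set b := B.card with hbdef
  set t := j - b with htdef
  set n := m - j with hndef
  have hn1 : 1 ≤ n := by omega
  -- the integer identity
  have hZ : (∑ S ∈ Finset.univ.filter (fun S : Finset (Fin m) => S ∩ C' = B),
      ((-1:ℤ)^(j - S.card) * (mult m j S : ℤ))) = if B = C' then 1 else 0 := by
    have hD : (Finset.univ \ C' : Finset (Fin m)).card = n := by
      rw [Finset.card_sdiff_of_subset (Finset.subset_univ _), Finset.card_univ, Fintype.card_fin, hC]
    have hbij : (∑ S ∈ Finset.univ.filter (fun S : Finset (Fin m) => S ∩ C' = B),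
        ((-1:ℤ)^(j - S.card) * (mult m j S : ℤ)))
        = ∑ E ∈ (Finset.univ \ C').powerset,
            ((-1:ℤ)^(j - (b + E.card)) *
              (if b + E.card ≤ j then (Nat.choose (m - 1 - (b + E.card)) (j - (b + E.card)) : ℤ) else 0)) := by
      apply Finset.sum_nbij' (i := fun S => S \ B) (j := fun E => B ∪ E)
      · intro S hS
        simp only [Finset.mem_filter] at hS
        rw [Finset.mem_powerset]
        intro x hx
        rw [Finset.mem_sdiff] at hx ⊢
        refine ⟨Finset.mem_univ _, fun hxC => ?_⟩
        have : x ∈ S ∩ C' := Finset.mem_inter.mpr ⟨hx.1, hxC⟩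
        rw [hS.2] at this
        exact hx.2 this
      · intro E hE
        rw [Finset.mem_powerset] at hE
        simp only [Finset.mem_filter, Finset.mem_univ, true_and]
        apply Finset.Subset.antisymm
        · intro x hx
          rw [Finset.mem_inter, Finset.mem_union] at hx
          rcases hx.1 with h | h
          · exact h
          · exact absurd hx.2 (by have := hE h; rw [Finset.mem_sdiff] at this; exact this.2)
        · intro x hx
          exact Finset.mem_inter.mpr ⟨Finset.mem_union_left _ hx, hBC hx⟩
      · intro S hS
        simp only [Finset.mem_filter] at hS
        have hBS : B ⊆ S := by
          rw [← hS.2]; exact Finset.inter_subset_left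
        exact Finset.union_sdiff_of_subset hBS
      · intro E hE
        rw [Finset.mem_powerset] at hE
        apply Finset.union_sdiff_cancel_left
        rw [Finset.disjoint_left]
        intro x hxB hxE
        have := hE hxE
        rw [Finset.mem_sdiff] at this
        exact this.2 (hBC hxB)
      · intro S hS
        simp only [Finset.mem_filter] at hS
        have hBS : B ⊆ S := by rw [← hS.2]; exact Finset.inter_subset_left
        have hcard : S.card = b + (S \ B).card := by
          have := Finset.card_sdiff_add_card_eq_card hBS
          omega
        rw [← hcard, mult]
        push_cast
        rfl
    rw [hbij]
    have hgrp : (∑ E ∈ (Finset.univ \ C').powerset,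
        ((-1:ℤ)^(j - (b + E.card)) *
          (if b + E.card ≤ j then (Nat.choose (m - 1 - (b + E.card)) (j - (b + E.card)) : ℤ) else 0)))
        = ∑ e ∈ Finset.range (n+1), (Nat.choose n e : ℤ) *
            ((-1:ℤ)^(j - (b + e)) *
              (if b + e ≤ j then (Nat.choose (m - 1 - (b + e)) (j - (b + e)) : ℤ) else 0)) := by
      rw [← Finset.sum_fiberwise_of_maps_to (g := fun E : Finset (Fin m) => E.card)
        (t := Finset.range (n+1)) (fun E hE => by
          rw [Finset.mem_powerset] at hE
          refine Finset.mem_range.mpr ?_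
          show E.card < n + 1
          have h1 := Finset.card_le_card hE
          omega)]
      apply Finset.sum_congr rfl
      intro e he
      have hset : ((Finset.univ \ C').powerset.filter (fun E => E.card = e))
          = Finset.powersetCard e (Finset.univ \ C') := by
        rw [Finset.powersetCard_eq_filter]
      rw [hset]
      have hconst : ∀ E ∈ Finset.powersetCard e (Finset.univ \ C'),
          ((-1:ℤ)^(j - (b + E.card)) *
            (if b + E.card ≤ j then (Nat.choose (m - 1 - (b + E.card)) (j - (b + E.card)) : ℤ) else 0))
          = ((-1:ℤ)^(j - (b + e)) *
            (if b + e ≤ j then (Nat.choose (m - 1 - (b + e)) (j - (b + e)) : ℤ) else 0)) := by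
        intro E hE
        rw [Finset.mem_powersetCard] at hE
        rw [hE.2]
      rw [Finset.sum_congr rfl hconst, Finset.sum_const, Finset.card_powersetCard, hD,
        nsmul_eq_mul]
    rw [hgrp]
    have h1 : (∑ e ∈ Finset.range (n+1), (Nat.choose n e : ℤ) *
        ((-1:ℤ)^(j - (b + e)) *
          (if b + e ≤ j then (Nat.choose (m - 1 - (b + e)) (j - (b + e)) : ℤ) else 0)))
        = ∑ e ∈ Finset.range (n+t+1), (Nat.choose n e : ℤ) *
        ((-1:ℤ)^(j - (b + e)) *
          (if b + e ≤ j then (Nat.choose (m - 1 - (b + e)) (j - (b + e)) : ℤ) else 0)) := by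
      apply Finset.sum_subset
      · intro e he
        simp only [Finset.mem_range] at he ⊢
        omega
      · intro e _ he
        simp only [Finset.mem_range] at he
        have hch : Nat.choose n e = 0 := Nat.choose_eq_zero_of_lt (by omega)
        rw [hch]
        push_cast
        ring
    have h2 : (∑ e ∈ Finset.range (t+1), (Nat.choose n e : ℤ) *
        ((-1:ℤ)^(j - (b + e)) *
          (if b + e ≤ j then (Nat.choose (m - 1 - (b + e)) (j - (b + e)) : ℤ) else 0)))
        = ∑ e ∈ Finset.range (n+t+1), (Nat.choose n e : ℤ) *
        ((-1:ℤ)^(j - (b + e)) *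
          (if b + e ≤ j then (Nat.choose (m - 1 - (b + e)) (j - (b + e)) : ℤ) else 0)) := by
      apply Finset.sum_subset
      · intro e he
        simp only [Finset.mem_range] at he ⊢
        omega
      · intro e _ he
        simp only [Finset.mem_range] at he
        have hguard : ¬ (b + e ≤ j) := by omega
        rw [if_neg hguard]
        ring
    have h3 : (∑ e ∈ Finset.range (t+1), (Nat.choose n e : ℤ) *
        ((-1:ℤ)^(j - (b + e)) *
          (if b + e ≤ j then (Nat.choose (m - 1 - (b + e)) (j - (b + e)) : ℤ) else 0)))
        = (-1:ℤ)^t * G n n t := by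
      rw [G, Finset.mul_sum]
      apply Finset.sum_congr rfl
      intro e he
      simp only [Finset.mem_range] at he
      have hguard : b + e ≤ j := by omega
      rw [if_pos hguard]
      have e1 : m - 1 - (b + e) = n - 1 + t - e := by omega
      have e2 : j - (b + e) = t - e := by omega
      rw [e1, e2]
      have hsign : (-1:ℤ)^(t-e) = (-1:ℤ)^t * (-1:ℤ)^e := by
        have : t + e = (t - e) + 2 * e := by omega
        have h4 : (-1:ℤ)^(t+e) = (-1:ℤ)^(t-e) := by
          rw [this, pow_add, pow_mul]
          norm_num
        rw [← h4, pow_add]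
      rw [hsign]
      ring
    rw [h1, ← h2, h3, G_diag n hn1 t]
    by_cases ht : t = 0
    · have hBC' : B = C' := by
        apply Finset.eq_of_subset_of_card_le hBC
        omega
      rw [if_pos ht, if_pos hBC', ht]
      norm_num
    · have hBC' : ¬ (B = C') := by
        intro hEq
        rw [hEq] at hbdef
        omega
      rw [if_neg ht, if_neg hBC']
      ring
  -- from the integer identity to the ℕ identity
  have cP : ∑ S : Finset (Fin m), mult m j S * (if (S.card % 2 = j % 2 ∧ S ∩ C' = B) then 1 else 0)
      = ∑ S ∈ (Finset.univ.filter (fun S : Finset (Fin m) => S ∩ C' = B)).filter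
          (fun S => S.card % 2 = j % 2), mult m j S := by
    rw [Finset.filter_filter, Finset.sum_filter]
    apply Finset.sum_congr rfl
    intro S _
    by_cases hcond : S.card % 2 = j % 2 ∧ S ∩ C' = B
    · rw [if_pos hcond, if_pos ⟨hcond.2, hcond.1⟩, mul_one]
    · rw [if_neg hcond, if_neg (fun hc => hcond ⟨hc.2, hc.1⟩), mul_zero]
  have cQ : ∑ S : Finset (Fin m), mult m j S * (if (¬(S.card % 2 = j % 2) ∧ S ∩ C' = B) then 1 else 0)
      = ∑ S ∈ (Finset.univ.filter (fun S : Finset (Fin m) => S ∩ C' = B)).filter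
          (fun S => ¬ (S.card % 2 = j % 2)), mult m j S := by
    rw [Finset.filter_filter, Finset.sum_filter]
    apply Finset.sum_congr rfl
    intro S _
    by_cases hcond : ¬(S.card % 2 = j % 2) ∧ S ∩ C' = B
    · rw [if_pos hcond, if_pos ⟨hcond.2, hcond.1⟩, mul_one]
    · rw [if_neg hcond, if_neg (fun hc => hcond ⟨hc.2, hc.1⟩), mul_zero]
  have hsplit := Finset.sum_filter_add_sum_filter_not
    (Finset.univ.filter (fun S : Finset (Fin m) => S ∩ C' = B))
    (fun S => S.card % 2 = j % 2)
    (fun S => (-1:ℤ)^(j - S.card) * (mult m j S : ℤ))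
  have hP : ∑ S ∈ (Finset.univ.filter (fun S : Finset (Fin m) => S ∩ C' = B)).filter
      (fun S => S.card % 2 = j % 2), ((-1:ℤ)^(j - S.card) * (mult m j S : ℤ))
      = ∑ S ∈ (Finset.univ.filter (fun S : Finset (Fin m) => S ∩ C' = B)).filter
          (fun S => S.card % 2 = j % 2), (mult m j S : ℤ) := by
    apply Finset.sum_congr rfl
    intro S hS
    simp only [Finset.mem_filter] at hS
    by_cases hcd : S.card ≤ j
    · have heven : Even (j - S.card) := by
        rw [Nat.even_iff]
        omega
      rw [heven.neg_one_pow, one_mul]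
    · rw [mult, if_neg hcd]
      push_cast
      ring
  have hQ : ∑ S ∈ (Finset.univ.filter (fun S : Finset (Fin m) => S ∩ C' = B)).filter
      (fun S => ¬(S.card % 2 = j % 2)), ((-1:ℤ)^(j - S.card) * (mult m j S : ℤ))
      = -∑ S ∈ (Finset.univ.filter (fun S : Finset (Fin m) => S ∩ C' = B)).filter
          (fun S => ¬(S.card % 2 = j % 2)), (mult m j S : ℤ) := by
    rw [← Finset.sum_neg_distrib]
    apply Finset.sum_congr rfl
    intro S hS
    simp only [Finset.mem_filter] at hS
    by_cases hcd : S.card ≤ j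
    · have hodd : Odd (j - S.card) := by
        rw [Nat.odd_iff]
        omega
      rw [hodd.neg_one_pow]
      ring
    · rw [mult, if_neg hcd]
      push_cast
      ring
  rw [cP, cQ]
  rw [hP, hQ] at hsplit
  rw [← hsplit] at hZ
  have hcast1 : ((∑ S ∈ (Finset.univ.filter (fun S : Finset (Fin m) => S ∩ C' = B)).filter
      (fun S => S.card % 2 = j % 2), mult m j S : ℕ) : ℤ)
      = ∑ S ∈ (Finset.univ.filter (fun S : Finset (Fin m) => S ∩ C' = B)).filter
          (fun S => S.card % 2 = j % 2), (mult m j S : ℤ) := by push_cast; rfl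
  have hcast2 : ((∑ S ∈ (Finset.univ.filter (fun S : Finset (Fin m) => S ∩ C' = B)).filter
      (fun S => ¬(S.card % 2 = j % 2)), mult m j S : ℕ) : ℤ)
      = ∑ S ∈ (Finset.univ.filter (fun S : Finset (Fin m) => S ∩ C' = B)).filter
          (fun S => ¬(S.card % 2 = j % 2)), (mult m j S : ℤ) := by push_cast; rfl
  by_cases hB : B = C'
  · rw [if_pos hB] at hZ ⊢
    rw [← hcast1, ← hcast2] at hZ
    omega
  · rw [if_neg hB] at hZ ⊢
    rw [← hcast1, ← hcast2] at hZ
    omega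




def uRow (m : ℕ) (S : Finset (Fin m)) : Fin (m+1) → Fin (m+1) := fun x =>
  if h : (x : ℕ) < m then (if (⟨(x : ℕ), h⟩ : Fin m) ∈ S then x else Fin.last m) else Fin.last m

def wRow (m : ℕ) (S : Finset (Fin m)) : Fin (m+1) → Fin (m+1) := fun x =>
  if h : (x : ℕ) < m then (if (⟨(x : ℕ), h⟩ : Fin m) ∈ S then x else Fin.last m) else 0

def gP (m j : ℕ) (S : Finset (Fin m)) : Fin (m+1) → Fin (m+1) :=
  if S.card % 2 = j % 2 then uRow m S else wRow m S

def gQ (m j : ℕ) (S : Finset (Fin m)) : Fin (m+1) → Fin (m+1) :=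
  if S.card % 2 = j % 2 then wRow m S else uRow m S

def extRow (m : ℕ) (hm : 0 < m) (f : Fin m → Fin m) : Fin (m+1) → Fin (m+1) := fun x =>
  Fin.castSucc (f (if h : (x : ℕ) < m then (⟨(x : ℕ), h⟩ : Fin m) else ⟨0, hm⟩))

lemma uRow_eq_wRow_of_lt (m : ℕ) (S : Finset (Fin m)) (x : Fin (m+1)) (hx : (x:ℕ) < m) :
    uRow m S x = wRow m S x := by
  rw [uRow, wRow, dif_pos hx, dif_pos hx]

lemma uRow_last (m : ℕ) (S : Finset (Fin m)) : uRow m S (Fin.last m) = Fin.last m := by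
  rw [uRow, dif_neg (by simp)]

lemma wRow_last (m : ℕ) (S : Finset (Fin m)) : wRow m S (Fin.last m) = 0 := by
  rw [wRow, dif_neg (by simp)]

lemma extRow_last (m : ℕ) (hm : 0 < m) (f : Fin m → Fin m) :
    extRow m hm f (Fin.last m) = Fin.castSucc (f ⟨0, hm⟩) := by
  rw [extRow, dif_neg (by simp)]

lemma extRow_castSucc (m : ℕ) (hm : 0 < m) (f : Fin m → Fin m) (y : Fin m) :
    extRow m hm f (Fin.castSucc y) = Fin.castSucc (f y) := by
  rw [extRow, dif_pos (by simp [y.isLt] : ((Fin.castSucc y : Fin (m+1)) : ℕ) < m)]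
  congr 1

lemma forall_last_iff {j : ℕ} (P : Fin (j+1) → Prop) :
    (∀ s, P s) ↔ (∀ s : Fin j, P s.castSucc) ∧ P (Fin.last j) :=
  ⟨fun h => ⟨fun s => h _, h _⟩, fun h s => Fin.lastCases h.2 h.1 s⟩

lemma filter_split_card {α : Type*} [Fintype α] (P Q : α → Prop)
    [DecidablePred P] [DecidablePred Q] :
    (Finset.univ.filter (fun a => P a)).card
      = (Finset.univ.filter (fun a => P a ∧ Q a)).card
        + (Finset.univ.filter (fun a => P a ∧ ¬ Q a)).card := by
  rw [← Finset.card_filter_add_card_filter_not (s := Finset.univ.filter P) (p := Q),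
    Finset.filter_filter, Finset.filter_filter]

lemma card_filter_and_const {α : Type*} [Fintype α] (IdP P : α → Prop)
    [DecidablePred IdP] [DecidablePred P] (Cond : Prop) [Decidable Cond]
    (hiff : ∀ a, IdP a → (P a ↔ Cond)) :
    (Finset.univ.filter (fun a => P a ∧ IdP a)).card
      = if Cond then (Finset.univ.filter (fun a => IdP a)).card else 0 := by
  by_cases hC : Cond
  · rw [if_pos hC]
    congr 1
    apply Finset.filter_congr
    intro a _
    exact ⟨fun h => h.2, fun hid => ⟨(hiff a hid).mpr hC, hid⟩⟩
  · rw [if_neg hC, Finset.card_eq_zero, Finset.filter_eq_empty_iff]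
    intro a _
    rintro ⟨hP, hid⟩
    exact hC ((hiff a hid).mp hP)

/-- block identity, abstract version -/
lemma K4' (m j : ℕ) (hjm : j < m) (Pat : Finset (Fin m) → Prop) [DecidablePred Pat]
    (C' B : Finset (Fin m)) (hBC : B ⊆ C') (hC : C'.card = j)
    (hPatB : ∀ S, Pat S ↔ S ∩ C' = B) (VId : Prop) [Decidable VId] (hVId : VId ↔ B = C')
    (w0 wl : Prop) [Decidable w0] [Decidable wl] (hnb : ¬(w0 ∧ wl)) :
    ((∑ S : Finset (Fin m), mult m j S * (if ((S.card % 2 = j % 2) ∧ Pat S ∧ wl) then 1 else 0))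
     + (∑ S : Finset (Fin m), mult m j S * (if (¬(S.card % 2 = j % 2) ∧ Pat S ∧ w0) then 1 else 0)))
    + (if (VId ∧ w0) then 1 else 0)
    = ((∑ S : Finset (Fin m), mult m j S * (if ((S.card % 2 = j % 2) ∧ Pat S ∧ w0) then 1 else 0))
     + (∑ S : Finset (Fin m), mult m j S * (if (¬(S.card % 2 = j % 2) ∧ Pat S ∧ wl) then 1 else 0)))
    + (if (VId ∧ wl) then 1 else 0) := by
  have hstar := star m j hjm C' B hBC hC
  have hz1 : ∀ (w' : Prop) (_ : Decidable w') (_ : ¬ w'),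
      (∑ S : Finset (Fin m), mult m j S * (if ((S.card % 2 = j % 2) ∧ Pat S ∧ w') then 1 else 0)) = 0 := by
    intro w' inst hw'
    apply Finset.sum_eq_zero
    intro S _
    rw [if_neg (fun h => hw' h.2.2), mul_zero]
  have hz2 : ∀ (w' : Prop) (_ : Decidable w') (_ : ¬ w'),
      (∑ S : Finset (Fin m), mult m j S * (if (¬(S.card % 2 = j % 2) ∧ Pat S ∧ w') then 1 else 0)) = 0 := by
    intro w' inst hw'
    apply Finset.sum_eq_zero
    intro S _
    rw [if_neg (fun h => hw' h.2.2), mul_zero]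
  have hp1 : ∀ (w' : Prop) (_ : Decidable w') (_ : w'),
      (∑ S : Finset (Fin m), mult m j S * (if ((S.card % 2 = j % 2) ∧ Pat S ∧ w') then 1 else 0))
      = ∑ S : Finset (Fin m), mult m j S * (if ((S.card % 2 = j % 2) ∧ S ∩ C' = B) then 1 else 0) := by
    intro w' inst hw'
    apply Finset.sum_congr rfl
    intro S _
    congr 1
    apply if_congr _ rfl rfl
    rw [hPatB S]
    tauto
  have hp2 : ∀ (w' : Prop) (_ : Decidable w') (_ : w'),
      (∑ S : Finset (Fin m), mult m j S * (if (¬(S.card % 2 = j % 2) ∧ Pat S ∧ w') then 1 else 0))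
      = ∑ S : Finset (Fin m), mult m j S * (if (¬(S.card % 2 = j % 2) ∧ S ∩ C' = B) then 1 else 0) := by
    intro w' inst hw'
    apply Finset.sum_congr rfl
    intro S _
    congr 1
    apply if_congr _ rfl rfl
    rw [hPatB S]
    tauto
  by_cases hw0 : w0
  · have hwl : ¬ wl := fun hwl => hnb ⟨hw0, hwl⟩
    rw [hz1 wl _ hwl, hz2 wl _ hwl, hp1 w0 _ hw0, hp2 w0 _ hw0]
    have hV : (if (VId ∧ w0) then (1:ℕ) else 0) = if B = C' then 1 else 0 := by
      apply if_congr _ rfl rfl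
      rw [hVId]
      tauto
    have hV2 : (if (VId ∧ wl) then (1:ℕ) else 0) = 0 := if_neg (fun h => hwl h.2)
    rw [hV, hV2]
    omega
  · by_cases hwl : wl
    · rw [hz1 w0 _ hw0, hz2 w0 _ hw0, hp1 wl _ hwl, hp2 wl _ hwl]
      have hV2 : (if (VId ∧ w0) then (1:ℕ) else 0) = 0 := if_neg (fun h => hw0 h.2)
      have hV : (if (VId ∧ wl) then (1:ℕ) else 0) = if B = C' then 1 else 0 := by
        apply if_congr _ rfl rfl
        rw [hVId]
        tauto
      rw [hV2, hV]
      omega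
    · rw [hz1 w0 _ hw0, hz2 w0 _ hw0, hz1 wl _ hwl, hz2 wl _ hwl]
      have hV2 : (if (VId ∧ w0) then (1:ℕ) else 0) = 0 := if_neg (fun h => hw0 h.2)
      have hV3 : (if (VId ∧ wl) then (1:ℕ) else 0) = 0 := if_neg (fun h => hwl h.2)
      rw [hV2, hV3]

def fPsi (m : ℕ) (hm : 0 < m) {R : ℕ} (Ψ : Fin R → Fin m → Fin m) :
    Fin R → Fin (m+1) → Fin (m+1) := fun a => extRow m hm (Ψ a)

def fPhi (m : ℕ) (hm : 0 < m) {R : ℕ} (Φ : Fin R → Fin m → Fin m) :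
    Fin R → Fin (m+1) → Fin (m+1) :=
  fun a => if (∀ x, Φ a x = x) then (fun y => y) else extRow m hm (Φ a)

lemma extRow_lt (m : ℕ) (hm : 0 < m) (f : Fin m → Fin m) (x : Fin (m+1)) (hx : (x:ℕ) < m) :
    extRow m hm f x = Fin.castSucc (f ⟨(x:ℕ), hx⟩) := by
  rw [extRow, dif_pos hx]

lemma extRow_not_id (m : ℕ) (hm : 0 < m) (f : Fin m → Fin m) (hf : ¬ ∀ x, f x = x) :
    ¬ ∀ x, extRow m hm f x = x := by
  intro hall
  apply hf
  intro x
  have := hall (Fin.castSucc x)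
  rw [extRow_castSucc] at this
  exact Fin.castSucc_injective m this

lemma gQ_not_id (m j : ℕ) (hjm : j < m) (S : Finset (Fin m)) (hS : S.card ≤ j) :
    ¬ (∀ x, gQ m j S x = x) := by
  intro hall
  by_cases hpar : S.card % 2 = j % 2
  · have := hall (Fin.last m)
    rw [gQ, if_pos hpar, wRow_last] at this
    have hval := congrArg Fin.val this
    simp at hval
    omega
  · have hne : S ≠ Finset.univ := by
      intro hu
      rw [hu, Finset.card_univ, Fintype.card_fin] at hS
      omega
    obtain ⟨x₀, hx₀⟩ : ∃ x₀, x₀ ∉ S := by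
      by_contra hcc
      push_neg at hcc
      exact hne (Finset.eq_univ_iff_forall.mpr hcc)
    have := hall (Fin.castSucc x₀)
    rw [gQ, if_neg hpar, uRow, dif_pos (by simpa using x₀.isLt :
      ((Fin.castSucc x₀ : Fin (m+1)) : ℕ) < m)] at this
    have hmk : (⟨((Fin.castSucc x₀ : Fin (m+1)) : ℕ), by simpa using x₀.isLt⟩ : Fin m) = x₀ :=
      Fin.ext rfl
    rw [if_neg (by rw [hmk]; exact hx₀)] at this
    have hval := congrArg Fin.val this
    simp at hval
    omega

lemma fPhi_id_count (m : ℕ) (hm : 0 < m) {R Rstar : ℕ} (Φ : Fin R → Fin m → Fin m)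
    (hidc : (Finset.univ.filter fun r => ∀ x : Fin m, Φ r x = x).card = Rstar) :
    (Finset.univ.filter fun a => ∀ x, fPhi m hm Φ a x = x).card = Rstar := by
  rw [← hidc]
  congr 1
  apply Finset.filter_congr
  intro a _
  by_cases hid : ∀ x, Φ a x = x
  · rw [fPhi, if_pos hid]
    simp [hid]
  · rw [fPhi, if_neg hid]
    exact iff_of_false (extRow_not_id m hm (Φ a) hid) hid

lemma mult_card_le (m j : ℕ) {S : Finset (Fin m)} (hS : mult m j S ≠ 0) : S.card ≤ j := by
  by_contra hc
  exact hS (if_neg hc)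

theorem key (m j R Rstar : ℕ) (hjm : j < m) (hRs : 1 ≤ Rstar)
    (h : GammaNonempty R Rstar m (j+1) (j+1)) :
    GammaNonempty (R + Rstar * T m j) Rstar (m+1) (j+1) (j+1) := by
  classical
  obtain ⟨Ψ, Φ, ⟨⟨hex, hdiv, hstr⟩, hidc⟩⟩ := h
  have hm : 0 < m := by omega
  have hblock0 : (∑ S : Finset (Fin m), mult m j S * (if (∀ x, gQ m j S x = x) then 1 else 0)) = 0 := by
    apply Finset.sum_eq_zero
    intro S _
    by_cases hS0 : mult m j S = 0
    · rw [hS0, zero_mul]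
    · rw [if_neg (gQ_not_id m j hjm S (mult_card_le m j hS0)), mul_zero]
  have hidcount : (Finset.univ.filter fun r : Fin (R + Rstar * T m j) =>
      ∀ x, (Sum.elim (fPhi m hm Φ) (fun z : Fin Rstar × Idx m j => gQ m j z.2.1)
        ((blockEquiv R Rstar m j).symm r)) x = x).card = Rstar := by
    have hcs := count_split R Rstar m j (fPhi m hm Φ) (gQ m j) (p := fun fcn => ∀ x, fcn x = x)
    refine hcs.trans ?_
    rw [fPhi_id_count m hm Φ hidc, hblock0, Nat.mul_zero, Nat.add_zero]
  refine ⟨fun r => Sum.elim (fPsi m hm Ψ) (fun z : Fin Rstar × Idx m j => gP m j z.2.1)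
      ((blockEquiv R Rstar m j).symm r),
    fun r => Sum.elim (fPhi m hm Φ) (fun z : Fin Rstar × Idx m j => gQ m j z.2.1)
      ((blockEquiv R Rstar m j).symm r), ⟨?_, ?_, ?_⟩, ?_⟩
  · -- existence of an identity row
    have hpos : 0 < (Finset.univ.filter fun r : Fin (R + Rstar * T m j) =>
        ∀ x, (Sum.elim (fPhi m hm Φ) (fun z : Fin Rstar × Idx m j => gQ m j z.2.1)
          ((blockEquiv R Rstar m j).symm r)) x = x).card := by
      rw [hidcount]; omega
    obtain ⟨r, hr⟩ := Finset.card_pos.mp hpos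
    exact ⟨r, (Finset.mem_filter.mp hr).2⟩
  · -- diversity
    intro r
    rcases hsum : (blockEquiv R Rstar m j).symm r with a | z
    · have hrow : (fun x => Sum.elim (fPsi m hm Ψ) (fun z : Fin Rstar × Idx m j => gP m j z.2.1)
          ((blockEquiv R Rstar m j).symm r) x) = fPsi m hm Ψ a := by
        rw [hsum]; rfl
      show (Finset.univ.image fun x => Sum.elim (fPsi m hm Ψ)
        (fun z : Fin Rstar × Idx m j => gP m j z.2.1) ((blockEquiv R Rstar m j).symm r) x).card ≤ j+1
      rw [hrow]
      have hsub : Finset.univ.image (fPsi m hm Ψ a)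
          ⊆ (Finset.univ.image (Ψ a)).image Fin.castSucc := by
        intro y hy
        obtain ⟨x, _, hx⟩ := Finset.mem_image.mp hy
        rw [fPsi, extRow] at hx
        exact Finset.mem_image.mpr ⟨_, Finset.mem_image.mpr ⟨_, Finset.mem_univ _, rfl⟩, hx⟩
      calc (Finset.univ.image (fPsi m hm Ψ a)).card
          ≤ ((Finset.univ.image (Ψ a)).image Fin.castSucc).card := Finset.card_le_card hsub
        _ ≤ (Finset.univ.image (Ψ a)).card := Finset.card_image_le
        _ ≤ j+1 := hdiv a
    · set S := z.2.1 with hSdef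
      have hcard : S.card ≤ j := by
        apply mult_card_le m j
        intro h0
        have hlt := z.2.2.isLt
        rw [hSdef] at h0
        omega
      have hrow : (fun x => Sum.elim (fPsi m hm Ψ) (fun z : Fin Rstar × Idx m j => gP m j z.2.1)
          ((blockEquiv R Rstar m j).symm r) x) = gP m j S := by
        rw [hsum]; rfl
      show (Finset.univ.image fun x => Sum.elim (fPsi m hm Ψ)
        (fun z : Fin Rstar × Idx m j => gP m j z.2.1) ((blockEquiv R Rstar m j).symm r) x).card ≤ j+1
      rw [hrow]
      by_cases hpar : S.card % 2 = j % 2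
      · have hsub : Finset.univ.image (gP m j S)
            ⊆ insert (Fin.last m) (S.image Fin.castSucc) := by
          intro y hy
          obtain ⟨x, _, hx⟩ := Finset.mem_image.mp hy
          rw [gP, if_pos hpar, uRow] at hx
          by_cases hxm : (x : ℕ) < m
          · rw [dif_pos hxm] at hx
            by_cases hmem : (⟨(x:ℕ), hxm⟩ : Fin m) ∈ S
            · rw [if_pos hmem] at hx
              refine Finset.mem_insert_of_mem (Finset.mem_image.mpr ⟨⟨(x:ℕ), hxm⟩, hmem, ?_⟩)
              rw [← hx]
              exact Fin.ext rfl
            · rw [if_neg hmem] at hx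
              rw [← hx]; exact Finset.mem_insert_self _ _
          · rw [dif_neg hxm] at hx
            rw [← hx]; exact Finset.mem_insert_self _ _
        calc (Finset.univ.image (gP m j S)).card
            ≤ (insert (Fin.last m) (S.image Fin.castSucc)).card := Finset.card_le_card hsub
          _ ≤ (S.image Fin.castSucc).card + 1 := Finset.card_insert_le _ _
          _ ≤ S.card + 1 := by have := Finset.card_image_le (f := Fin.castSucc) (s := S); omega
          _ ≤ j + 1 := by omega
      · have hne : S.card ≠ j := fun he => hpar (by rw [he])
        have hsub : Finset.univ.image (gP m j S)
            ⊆ insert (0 : Fin (m+1)) (insert (Fin.last m) (S.image Fin.castSucc)) := by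
          intro y hy
          obtain ⟨x, _, hx⟩ := Finset.mem_image.mp hy
          rw [gP, if_neg hpar, wRow] at hx
          by_cases hxm : (x : ℕ) < m
          · rw [dif_pos hxm] at hx
            by_cases hmem : (⟨(x:ℕ), hxm⟩ : Fin m) ∈ S
            · rw [if_pos hmem] at hx
              refine Finset.mem_insert_of_mem (Finset.mem_insert_of_mem
                (Finset.mem_image.mpr ⟨⟨(x:ℕ), hxm⟩, hmem, ?_⟩))
              rw [← hx]
              exact Fin.ext rfl
            · rw [if_neg hmem] at hx
              rw [← hx]
              exact Finset.mem_insert_of_mem (Finset.mem_insert_self _ _)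
          · rw [dif_neg hxm] at hx
            rw [← hx]; exact Finset.mem_insert_self _ _
        calc (Finset.univ.image (gP m j S)).card
            ≤ (insert (0:Fin (m+1)) (insert (Fin.last m) (S.image Fin.castSucc))).card :=
              Finset.card_le_card hsub
          _ ≤ (insert (Fin.last m) (S.image Fin.castSucc)).card + 1 := Finset.card_insert_le _ _
          _ ≤ ((S.image Fin.castSucc).card + 1) + 1 := by
              have := Finset.card_insert_le (Fin.last m) (S.image Fin.castSucc); omega
          _ ≤ (S.card + 1) + 1 := by
              have := Finset.card_image_le (f := Fin.castSucc) (s := S); omega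
          _ ≤ j + 1 := by omega
  · -- strength
    intro c hc v
    have hcsΨ := count_split R Rstar m j (fPsi m hm Ψ) (gP m j)
      (p := fun fcn => ∀ s, fcn (c s) = v s)
    have hcsΦ := count_split R Rstar m j (fPhi m hm Φ) (gQ m j)
      (p := fun fcn => ∀ s, fcn (c s) = v s)
    refine hcsΨ.trans (Eq.trans ?_ hcsΦ.symm)
    show (Finset.univ.filter fun a => ∀ s, fPsi m hm Ψ a (c s) = v s).card
        + Rstar * (∑ S : Finset (Fin m), mult m j S *
            (if (∀ s, gP m j S (c s) = v s) then 1 else 0))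
      = (Finset.univ.filter fun a => ∀ s, fPhi m hm Φ a (c s) = v s).card
        + Rstar * (∑ S : Finset (Fin m), mult m j S *
            (if (∀ s, gQ m j S (c s) = v s) then 1 else 0))
    by_cases hA : ∀ s : Fin (j+1), (c s : ℕ) < m
    · -- Case A : the last column is not used
      have hblockS : (∑ S : Finset (Fin m), mult m j S *
            (if (∀ s, gP m j S (c s) = v s) then 1 else 0))
          = ∑ S : Finset (Fin m), mult m j S *
            (if (∀ s, gQ m j S (c s) = v s) then 1 else 0) := by
        apply Finset.sum_congr rfl
        intro S _
        have hiff : (∀ s, gP m j S (c s) = v s) ↔ (∀ s, gQ m j S (c s) = v s) := by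
          have hgs : ∀ s, gP m j S (c s) = gQ m j S (c s) := by
            intro s
            rw [gP, gQ]
            by_cases hpar : S.card % 2 = j % 2
            · rw [if_pos hpar, if_pos hpar, uRow_eq_wRow_of_lt m S _ (hA s)]
            · rw [if_neg hpar, if_neg hpar, uRow_eq_wRow_of_lt m S _ (hA s)]
          exact forall_congr' fun s => by rw [hgs s]
        rw [if_congr hiff rfl rfl]
      set ctil : Fin (j+1) → Fin m := fun s => ⟨(c s : ℕ), hA s⟩ with hctil
      have hcmono : StrictMono ctil := by
        intro a b hab
        have h1 := hc hab
        rw [Fin.lt_def] at h1 ⊢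
        exact h1
      have hfPsieq : ∀ (a : Fin R) (s : Fin (j+1)),
          fPsi m hm Ψ a (c s) = Fin.castSucc (Ψ a (ctil s)) := by
        intro a s
        show extRow m hm (Ψ a) (c s) = Fin.castSucc (Ψ a (ctil s))
        rw [extRow_lt m hm (Ψ a) (c s) (hA s)]
      have hfPhieq : ∀ (a : Fin R) (s : Fin (j+1)),
          fPhi m hm Φ a (c s) = Fin.castSucc (Φ a (ctil s)) := by
        intro a s
        show (if (∀ x, Φ a x = x) then (fun y => y) else extRow m hm (Φ a)) (c s)
          = Fin.castSucc (Φ a (ctil s))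
        by_cases hid : ∀ x, Φ a x = x
        · rw [if_pos hid, hid (ctil s)]
          exact (Fin.ext rfl : c s = Fin.castSucc (ctil s))
        · rw [if_neg hid]
          rw [extRow_lt m hm (Φ a) (c s) (hA s)]
      by_cases hv : ∀ s : Fin (j+1), (v s : ℕ) < m
      · set vtil : Fin (j+1) → Fin m := fun s => ⟨(v s : ℕ), hv s⟩ with hvtil
        have hlift : ∀ (y : Fin m) (s : Fin (j+1)),
            (Fin.castSucc y = v s) ↔ (y = vtil s) := by
          intro y s
          constructor
          · intro he
            apply Fin.ext
            have := congrArg Fin.val he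
            simpa using this
          · intro he
            rw [he]
            exact Fin.ext rfl
        have hfilΨ : (Finset.univ.filter fun a => ∀ s, fPsi m hm Ψ a (c s) = v s)
            = (Finset.univ.filter fun a => ∀ s, Ψ a (ctil s) = vtil s) := by
          apply Finset.filter_congr
          intro a _
          apply forall_congr'
          intro s
          rw [hfPsieq a s, hlift]
        have hfilΦ : (Finset.univ.filter fun a => ∀ s, fPhi m hm Φ a (c s) = v s)
            = (Finset.univ.filter fun a => ∀ s, Φ a (ctil s) = vtil s) := by
          apply Finset.filter_congr
          intro a _
          apply forall_congr'
          intro s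
          rw [hfPhieq a s, hlift]
        rw [hfilΨ, hfilΦ, hblockS, hstr ctil hcmono vtil]
      · push_neg at hv
        obtain ⟨s₀, hs₀⟩ := hv
        have hzΨ : (Finset.univ.filter fun a => ∀ s, fPsi m hm Ψ a (c s) = v s) = ∅ := by
          rw [Finset.filter_eq_empty_iff]
          intro a _
          intro hall
          have h1 := hall s₀
          rw [hfPsieq a s₀] at h1
          have h2 := congrArg Fin.val h1
          simp only [Fin.coe_castSucc] at h2
          have := (Ψ a (ctil s₀)).isLt
          omega
        have hzΦ : (Finset.univ.filter fun a => ∀ s, fPhi m hm Φ a (c s) = v s) = ∅ := by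
          rw [Finset.filter_eq_empty_iff]
          intro a _
          intro hall
          have h1 := hall s₀
          rw [hfPhieq a s₀] at h1
          have h2 := congrArg Fin.val h1
          simp only [Fin.coe_castSucc] at h2
          have := (Φ a (ctil s₀)).isLt
          omega
        rw [hzΨ, hzΦ, hblockS]
    · -- Case B : the last column is used
      push_neg at hA
      obtain ⟨s₀, hs₀⟩ := hA
      have hclast : c (Fin.last j) = Fin.last m := by
        have h1 : (c s₀ : ℕ) = m := by
          have := (c s₀).isLt
          omega
        have h2 : (c s₀ : ℕ) ≤ (c (Fin.last j) : ℕ) := hc.monotone (Fin.le_last s₀)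
        have h3 := (c (Fin.last j)).isLt
        apply Fin.ext
        simp only [Fin.val_last]
        omega
      have hlt : ∀ s : Fin j, (c s.castSucc : ℕ) < m := by
        intro s
        have hlt' := hc (Fin.castSucc_lt_last s)
        rw [hclast, Fin.lt_def] at hlt'
        simpa using hlt'
      set c' : Fin j → Fin m := fun s => ⟨(c s.castSucc : ℕ), hlt s⟩ with hc'def
      have hc'mono : StrictMono c' := by
        intro a b hab
        rw [Fin.lt_def]
        show (c a.castSucc : ℕ) < (c b.castSucc : ℕ)
        have h1 := hc (show a.castSucc < b.castSucc by rwa [Fin.castSucc_lt_castSucc_iff])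
        rwa [Fin.lt_def] at h1
      have hc'inj : Function.Injective c' := hc'mono.injective
      set w : Fin (m+1) := v (Fin.last j) with hwdef
      set vc : Fin j → Fin (m+1) := fun s => v s.castSucc with hvcdef
      have hcs : ∀ s, Fin.castSucc (c' s) = c s.castSucc := fun s => Fin.ext rfl
      have hdec : ∀ f : Fin (m+1) → Fin (m+1),
          (∀ s, f (c s) = v s)
            ↔ ((∀ s : Fin j, f (c s.castSucc) = vc s) ∧ f (Fin.last m) = w) := by
        intro f
        constructor
        · intro hh
          refine ⟨fun s => hh s.castSucc, ?_⟩
          rw [← hclast]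
          exact hh (Fin.last j)
        · rintro ⟨h1, h2⟩ s
          induction s using Fin.lastCases with
          | last => rw [hclast]; exact h2
          | cast i => exact h1 i
      set VId : Prop := ∀ s : Fin j, vc s = Fin.castSucc (c' s) with hVIddef
      -- old Ψ part
      have hΨold : (Finset.univ.filter fun a => ∀ s, fPsi m hm Ψ a (c s) = v s)
          = (Finset.univ.filter fun a => (∀ s : Fin j, Fin.castSucc (Ψ a (c' s)) = vc s)
              ∧ Fin.castSucc (Ψ a ⟨0, hm⟩) = w) := by
        apply Finset.filter_congr
        intro a _
        rw [hdec (fPsi m hm Ψ a)]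
        apply and_congr
        · apply forall_congr'
          intro s
          have h1 : fPsi m hm Ψ a (c s.castSucc) = Fin.castSucc (Ψ a (c' s)) := by
            show extRow m hm (Ψ a) (c s.castSucc) = _
            rw [extRow_lt m hm (Ψ a) _ (hlt s)]
          rw [h1]
        · have h1 : fPsi m hm Ψ a (Fin.last m) = Fin.castSucc (Ψ a ⟨0, hm⟩) := by
            show extRow m hm (Ψ a) (Fin.last m) = _
            rw [extRow_last]
          rw [h1]
      -- old Φ part
      have hΦoldsplit := filter_split_card (fun a => ∀ s, fPhi m hm Φ a (c s) = v s)
        (fun a => ∀ x, Φ a x = x)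
      have hΦid : (Finset.univ.filter fun a =>
            (∀ s, fPhi m hm Φ a (c s) = v s) ∧ (∀ x, Φ a x = x)).card
          = if (VId ∧ w = Fin.last m) then Rstar else 0 := by
        rw [card_filter_and_const (fun a => ∀ x, Φ a x = x)
          (fun a => ∀ s, fPhi m hm Φ a (c s) = v s) (VId ∧ w = Fin.last m) ?_, hidc]
        intro a hid
        have hfa : ∀ y, fPhi m hm Φ a y = y := by
          intro y
          show (if (∀ x, Φ a x = x) then (fun y => y) else extRow m hm (Φ a)) y = y
          rw [if_pos hid]
        constructor
        · intro hall
          constructor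
          · intro s
            have h1 := hall s.castSucc
            rw [hfa] at h1
            rw [hcs s]
            exact h1.symm
          · have h1 := hall (Fin.last j)
            rw [hfa, hclast] at h1
            exact h1.symm
        · rintro ⟨h1, h2⟩ s
          rw [hfa]
          induction s using Fin.lastCases with
          | last =>
            rw [hclast]
            exact h2.symm
          | cast i =>
            have h3 := h1 i
            rw [hcs i] at h3
            exact h3.symm
      have hΦnid : (Finset.univ.filter fun a =>
            (∀ s, fPhi m hm Φ a (c s) = v s) ∧ ¬(∀ x, Φ a x = x))
          = (Finset.univ.filter fun a =>
            ((∀ s : Fin j, Fin.castSucc (Φ a (c' s)) = vc s)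
              ∧ Fin.castSucc (Φ a ⟨0, hm⟩) = w) ∧ ¬(∀ x, Φ a x = x)) := by
        apply Finset.filter_congr
        intro a _
        apply and_congr_left
        intro hnid
        rw [hdec (fPhi m hm Φ a)]
        apply and_congr
        · apply forall_congr'
          intro s
          have h1 : fPhi m hm Φ a (c s.castSucc) = Fin.castSucc (Φ a (c' s)) := by
            show (if (∀ x, Φ a x = x) then (fun y => y) else extRow m hm (Φ a)) (c s.castSucc) = _
            rw [if_neg hnid, extRow_lt m hm (Φ a) _ (hlt s)]
          rw [h1]
        · have h1 : fPhi m hm Φ a (Fin.last m) = Fin.castSucc (Φ a ⟨0, hm⟩) := by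
            show (if (∀ x, Φ a x = x) then (fun y => y) else extRow m hm (Φ a)) (Fin.last m) = _
            rw [if_neg hnid, extRow_last]
          rw [h1]
      -- K1 : equality for the full old arrays by strength of (Ψ, Φ)
      have hK1 : (Finset.univ.filter fun a => (∀ s : Fin j, Fin.castSucc (Ψ a (c' s)) = vc s)
            ∧ Fin.castSucc (Ψ a ⟨0, hm⟩) = w).card
          = (Finset.univ.filter fun a => (∀ s : Fin j, Fin.castSucc (Φ a (c' s)) = vc s)
            ∧ Fin.castSucc (Φ a ⟨0, hm⟩) = w).card := by
        by_cases hvOK : (∀ s : Fin j, (vc s : ℕ) < m) ∧ (w : ℕ) < m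
        · obtain ⟨hv1, hv2⟩ := hvOK
          set vt : Fin j → Fin m := fun s => ⟨(vc s : ℕ), hv1 s⟩ with hvtdef
          set wt : Fin m := ⟨(w : ℕ), hv2⟩ with hwtdef
          have htr : ∀ (H : Fin m → Fin m),
              ((∀ s : Fin j, Fin.castSucc (H (c' s)) = vc s) ∧ Fin.castSucc (H ⟨0, hm⟩) = w)
              ↔ ((∀ s : Fin j, H (c' s) = vt s) ∧ H ⟨0, hm⟩ = wt) := by
            intro H
            apply and_congr
            · apply forall_congr'
              intro s
              constructor
              · intro he
                apply Fin.ext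
                have := congrArg Fin.val he
                simpa using this
              · intro he
                rw [he]
                exact Fin.ext rfl
            · constructor
              · intro he
                apply Fin.ext
                have := congrArg Fin.val he
                simpa using this
              · intro he
                rw [he]
                exact Fin.ext rfl
          have hfilΨ : (Finset.univ.filter fun a => (∀ s : Fin j, Fin.castSucc (Ψ a (c' s)) = vc s)
                ∧ Fin.castSucc (Ψ a ⟨0, hm⟩) = w)
              = (Finset.univ.filter fun a => (∀ s : Fin j, Ψ a (c' s) = vt s) ∧ Ψ a ⟨0, hm⟩ = wt) :=
            Finset.filter_congr fun a _ => htr (Ψ a)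
          have hfilΦ : (Finset.univ.filter fun a => (∀ s : Fin j, Fin.castSucc (Φ a (c' s)) = vc s)
                ∧ Fin.castSucc (Φ a ⟨0, hm⟩) = w)
              = (Finset.univ.filter fun a => (∀ s : Fin j, Φ a (c' s) = vt s) ∧ Φ a ⟨0, hm⟩ = wt) :=
            Finset.filter_congr fun a _ => htr (Φ a)
          rw [hfilΨ, hfilΦ]
          by_cases hzero : ∃ s₁, c' s₁ = (⟨0, hm⟩ : Fin m)
          · obtain ⟨s₁, hs₁⟩ := hzero
            by_cases hvw : vt s₁ = wt
            · have hred : ∀ (H : Fin m → Fin m),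
                  ((∀ s : Fin j, H (c' s) = vt s) ∧ H ⟨0, hm⟩ = wt)
                  ↔ (∀ s : Fin j, H (c' s) = vt s) := by
                intro H
                refine ⟨fun hh => hh.1, fun hh => ⟨hh, ?_⟩⟩
                rw [← hs₁, hh s₁, hvw]
              set D : Finset (Fin m) := Finset.univ.image c' with hDdef
              set u : Fin m → Fin m :=
                fun x => if hx : ∃ s, c' s = x then vt hx.choose else wt with hudef
              have huc : ∀ s, u (c' s) = vt s := by
                intro s
                have hex2 : ∃ t, c' t = c' s := ⟨s, rfl⟩
                show (if hx : ∃ t, c' t = c' s then vt hx.choose else wt) = vt s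
                rw [dif_pos hex2]
                have heq : hex2.choose = s := hc'inj hex2.choose_spec
                rw [heq]
              have hfinform : ∀ (H : Fin m → Fin m),
                  (∀ s : Fin j, H (c' s) = vt s) ↔ (∀ x ∈ D, H x = u x) := by
                intro H
                constructor
                · intro hh x hx
                  obtain ⟨s, _, rfl⟩ := Finset.mem_image.mp hx
                  rw [hh s, huc s]
                · intro hh s
                  have hmem : c' s ∈ D := Finset.mem_image_of_mem _ (Finset.mem_univ s)
                  rw [← huc s]
                  exact hh _ hmem
              have hDcard : D.card + 1 = j + 1 := by
                rw [hDdef, Finset.card_image_of_injective _ hc'inj, Finset.card_univ,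
                  Fintype.card_fin]
              have hsf := strength_finset (n := m) (k := j+1) (by omega) Ψ Φ hstr 1 D u hDcard
              have hfil2Ψ : (Finset.univ.filter fun a =>
                    (∀ s : Fin j, Ψ a (c' s) = vt s) ∧ Ψ a ⟨0, hm⟩ = wt)
                  = (Finset.univ.filter fun a => ∀ x ∈ D, Ψ a x = u x) :=
                Finset.filter_congr fun a _ => (hred (Ψ a)).trans (hfinform (Ψ a))
              have hfil2Φ : (Finset.univ.filter fun a =>
                    (∀ s : Fin j, Φ a (c' s) = vt s) ∧ Φ a ⟨0, hm⟩ = wt)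
                  = (Finset.univ.filter fun a => ∀ x ∈ D, Φ a x = u x) :=
                Finset.filter_congr fun a _ => (hred (Φ a)).trans (hfinform (Φ a))
              rw [hfil2Ψ, hfil2Φ]
              exact hsf
            · have hzz : ∀ (H : Fin m → Fin m),
                  ¬ ((∀ s : Fin j, H (c' s) = vt s) ∧ H ⟨0, hm⟩ = wt) := by
                intro H hcon
                apply hvw
                rw [← hcon.1 s₁, hs₁, hcon.2]
              have he1 : (Finset.univ.filter fun a =>
                  (∀ s : Fin j, Ψ a (c' s) = vt s) ∧ Ψ a ⟨0, hm⟩ = wt) = ∅ := by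
                rw [Finset.filter_eq_empty_iff]
                exact fun a _ => hzz (Ψ a)
              have he2 : (Finset.univ.filter fun a =>
                  (∀ s : Fin j, Φ a (c' s) = vt s) ∧ Φ a ⟨0, hm⟩ = wt) = ∅ := by
                rw [Finset.filter_eq_empty_iff]
                exact fun a _ => hzz (Φ a)
              rw [he1, he2]
          · push_neg at hzero
            set D : Finset (Fin m) :=
              insert (⟨0, hm⟩ : Fin m) (Finset.univ.image c') with hDdef
            set u : Fin m → Fin m := fun x => if x = (⟨0, hm⟩ : Fin m) then wt
              else (if hx : ∃ s, c' s = x then vt hx.choose else wt) with hudef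
            have hu0 : u ⟨0, hm⟩ = wt := if_pos rfl
            have huc : ∀ s, u (c' s) = vt s := by
              intro s
              show (if c' s = (⟨0, hm⟩ : Fin m) then wt
                else (if hx : ∃ t, c' t = c' s then vt hx.choose else wt)) = vt s
              rw [if_neg (hzero s)]
              have hex2 : ∃ t, c' t = c' s := ⟨s, rfl⟩
              rw [dif_pos hex2]
              have heq : hex2.choose = s := hc'inj hex2.choose_spec
              rw [heq]
            have h0notin : (⟨0, hm⟩ : Fin m) ∉ Finset.univ.image c' := by
              intro hmem
              obtain ⟨s, _, hs⟩ := Finset.mem_image.mp hmem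
              exact hzero s hs
            have hfinform : ∀ (H : Fin m → Fin m),
                ((∀ s : Fin j, H (c' s) = vt s) ∧ H ⟨0, hm⟩ = wt) ↔ (∀ x ∈ D, H x = u x) := by
              intro H
              constructor
              · rintro ⟨h1, h2⟩ x hx
                rcases Finset.mem_insert.mp hx with rfl | hx'
                · rw [hu0]
                  exact h2
                · obtain ⟨s, _, rfl⟩ := Finset.mem_image.mp hx'
                  rw [huc]
                  exact h1 s
              · intro hh
                refine ⟨fun s => ?_, ?_⟩
                · rw [← huc s]
                  exact hh _ (Finset.mem_insert_of_mem
                    (Finset.mem_image_of_mem _ (Finset.mem_univ s)))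
                · rw [← hu0]
                  exact hh _ (Finset.mem_insert_self _ _)
            have hDcard : D.card + 0 = j + 1 := by
              rw [hDdef, Finset.card_insert_of_notMem h0notin,
                Finset.card_image_of_injective _ hc'inj, Finset.card_univ, Fintype.card_fin]
            have hsf := strength_finset (n := m) (k := j+1) (by omega) Ψ Φ hstr 0 D u hDcard
            have hfil2Ψ : (Finset.univ.filter fun a =>
                  (∀ s : Fin j, Ψ a (c' s) = vt s) ∧ Ψ a ⟨0, hm⟩ = wt)
                = (Finset.univ.filter fun a => ∀ x ∈ D, Ψ a x = u x) :=
              Finset.filter_congr fun a _ => hfinform (Ψ a)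
            have hfil2Φ : (Finset.univ.filter fun a =>
                  (∀ s : Fin j, Φ a (c' s) = vt s) ∧ Φ a ⟨0, hm⟩ = wt)
                = (Finset.univ.filter fun a => ∀ x ∈ D, Φ a x = u x) :=
              Finset.filter_congr fun a _ => hfinform (Φ a)
            rw [hfil2Ψ, hfil2Φ]
            exact hsf
        · have hbad : ∀ (H : Fin m → Fin m),
              ¬ ((∀ s : Fin j, Fin.castSucc (H (c' s)) = vc s)
                ∧ Fin.castSucc (H ⟨0, hm⟩) = w) := by
            intro H hcond
            apply hvOK
            constructor
            · intro s
              rw [← hcond.1 s]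
              simpa using (H (c' s)).isLt
            · rw [← hcond.2]
              simpa using (H ⟨0, hm⟩).isLt
          have he1 : (Finset.univ.filter fun a => (∀ s : Fin j, Fin.castSucc (Ψ a (c' s)) = vc s)
              ∧ Fin.castSucc (Ψ a ⟨0, hm⟩) = w) = ∅ := by
            rw [Finset.filter_eq_empty_iff]
            exact fun a _ => hbad (Ψ a)
          have he2 : (Finset.univ.filter fun a => (∀ s : Fin j, Fin.castSucc (Φ a (c' s)) = vc s)
              ∧ Fin.castSucc (Φ a ⟨0, hm⟩) = w) = ∅ := by
            rw [Finset.filter_eq_empty_iff]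
            exact fun a _ => hbad (Φ a)
          rw [he1, he2]
      -- K2 : extract the identity rows from the full Φ count
      have hK2 : (Finset.univ.filter fun a => (∀ s : Fin j, Fin.castSucc (Φ a (c' s)) = vc s)
            ∧ Fin.castSucc (Φ a ⟨0, hm⟩) = w).card
          = (if (VId ∧ w = (0 : Fin (m+1))) then Rstar else 0)
            + (Finset.univ.filter fun a =>
              ((∀ s : Fin j, Fin.castSucc (Φ a (c' s)) = vc s)
                ∧ Fin.castSucc (Φ a ⟨0, hm⟩) = w) ∧ ¬(∀ x, Φ a x = x)).card := by
        rw [filter_split_card (fun a => (∀ s : Fin j, Fin.castSucc (Φ a (c' s)) = vc s)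
          ∧ Fin.castSucc (Φ a ⟨0, hm⟩) = w) (fun a => ∀ x, Φ a x = x)]
        congr 1
        rw [card_filter_and_const (fun a => ∀ x, Φ a x = x) _ (VId ∧ w = (0 : Fin (m+1))) ?_,
          hidc]
        intro a hid
        constructor
        · rintro ⟨h1, h2⟩
          constructor
          · intro s
            rw [← h1 s, hid (c' s)]
          · rw [← h2, hid ⟨0, hm⟩]
            exact Fin.ext rfl
        · rintro ⟨h1, h2⟩
          constructor
          · intro s
            rw [hid (c' s)]
            exact (h1 s).symm
          · rw [hid ⟨0, hm⟩, h2]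
            exact Fin.ext rfl
      -- block identity K4
      have hwne : ¬((w = (0 : Fin (m+1))) ∧ (w = Fin.last m)) := by
        rintro ⟨h0, hl⟩
        rw [h0] at hl
        have := congrArg Fin.val hl
        simp only [Fin.val_last, Fin.val_zero] at this
        omega
      set PatP : Finset (Fin m) → Prop :=
        fun S => ∀ s : Fin j, vc s = (if c' s ∈ S then Fin.castSucc (c' s) else Fin.last m)
        with hPatdef
      have hmuU : ∀ S, (∀ s : Fin (j+1), uRow m S (c s) = v s)
          ↔ (PatP S ∧ w = Fin.last m) := by
        intro S
        rw [hdec (uRow m S)]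
        apply and_congr
        · apply forall_congr'
          intro s
          have hval : uRow m S (c s.castSucc)
              = (if c' s ∈ S then Fin.castSucc (c' s) else Fin.last m) := by
            by_cases hmemS : c' s ∈ S
            · rw [if_pos hmemS, uRow, dif_pos (hlt s), if_pos hmemS]
              exact (hcs s).symm
            · rw [if_neg hmemS, uRow, dif_pos (hlt s), if_neg hmemS]
          rw [hval]
          exact eq_comm
        · rw [uRow_last]
          exact eq_comm
      have hmuW : ∀ S, (∀ s : Fin (j+1), wRow m S (c s) = v s)
          ↔ (PatP S ∧ w = (0 : Fin (m+1))) := by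
        intro S
        rw [hdec (wRow m S)]
        apply and_congr
        · apply forall_congr'
          intro s
          have hval : wRow m S (c s.castSucc)
              = (if c' s ∈ S then Fin.castSucc (c' s) else Fin.last m) := by
            by_cases hmemS : c' s ∈ S
            · rw [if_pos hmemS, wRow, dif_pos (hlt s), if_pos hmemS]
              exact (hcs s).symm
            · rw [if_neg hmemS, wRow, dif_pos (hlt s), if_neg hmemS]
          rw [hval]
          exact eq_comm
        · rw [wRow_last]
          exact eq_comm
      have hSP : (∑ S : Finset (Fin m), mult m j S *
            (if (∀ s, gP m j S (c s) = v s) then 1 else 0))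
          = (∑ S : Finset (Fin m), mult m j S *
              (if ((S.card % 2 = j % 2) ∧ PatP S ∧ w = Fin.last m) then 1 else 0))
            + (∑ S : Finset (Fin m), mult m j S *
              (if (¬(S.card % 2 = j % 2) ∧ PatP S ∧ w = (0 : Fin (m+1))) then 1 else 0)) := by
        rw [← Finset.sum_add_distrib]
        apply Finset.sum_congr rfl
        intro S _
        rw [← Nat.left_distrib]
        congr 1
        by_cases hpar : S.card % 2 = j % 2
        · have h2 : (if (¬(S.card % 2 = j % 2) ∧ PatP S ∧ w = (0 : Fin (m+1)))
              then (1:ℕ) else 0) = 0 := if_neg (fun hcon => hcon.1 hpar)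
          have hgp : gP m j S = uRow m S := by rw [gP, if_pos hpar]
          rw [h2]
          simp only [Nat.add_zero]
          apply if_congr _ rfl rfl
          rw [hgp, hmuU S]
          exact ⟨fun hh => ⟨hpar, hh⟩, fun hh => hh.2⟩
        · have h2 : (if ((S.card % 2 = j % 2) ∧ PatP S ∧ w = Fin.last m)
              then (1:ℕ) else 0) = 0 := if_neg (fun hcon => hpar hcon.1)
          have hgp : gP m j S = wRow m S := by rw [gP, if_neg hpar]
          rw [h2]
          simp only [Nat.zero_add]
          apply if_congr _ rfl rfl
          rw [hgp, hmuW S]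
          exact ⟨fun hh => ⟨hpar, hh⟩, fun hh => hh.2⟩
      have hSQ : (∑ S : Finset (Fin m), mult m j S *
            (if (∀ s, gQ m j S (c s) = v s) then 1 else 0))
          = (∑ S : Finset (Fin m), mult m j S *
              (if ((S.card % 2 = j % 2) ∧ PatP S ∧ w = (0 : Fin (m+1))) then 1 else 0))
            + (∑ S : Finset (Fin m), mult m j S *
              (if (¬(S.card % 2 = j % 2) ∧ PatP S ∧ w = Fin.last m) then 1 else 0)) := by
        rw [← Finset.sum_add_distrib]
        apply Finset.sum_congr rfl
        intro S _
        rw [← Nat.left_distrib]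
        congr 1
        by_cases hpar : S.card % 2 = j % 2
        · have h2 : (if (¬(S.card % 2 = j % 2) ∧ PatP S ∧ w = Fin.last m)
              then (1:ℕ) else 0) = 0 := if_neg (fun hcon => hcon.1 hpar)
          have hgq : gQ m j S = wRow m S := by rw [gQ, if_pos hpar]
          rw [h2]
          simp only [Nat.add_zero]
          apply if_congr _ rfl rfl
          rw [hgq, hmuW S]
          exact ⟨fun hh => ⟨hpar, hh⟩, fun hh => hh.2⟩
        · have h2 : (if ((S.card % 2 = j % 2) ∧ PatP S ∧ w = (0 : Fin (m+1)))
              then (1:ℕ) else 0) = 0 := if_neg (fun hcon => hpar hcon.1)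
          have hgq : gQ m j S = uRow m S := by rw [gQ, if_neg hpar]
          rw [h2]
          simp only [Nat.zero_add]
          apply if_congr _ rfl rfl
          rw [hgq, hmuU S]
          exact ⟨fun hh => ⟨hpar, hh⟩, fun hh => hh.2⟩
      have hK4 : (∑ S : Finset (Fin m), mult m j S *
            (if (∀ s, gP m j S (c s) = v s) then 1 else 0))
            + (if (VId ∧ w = (0 : Fin (m+1))) then 1 else 0)
          = (∑ S : Finset (Fin m), mult m j S *
            (if (∀ s, gQ m j S (c s) = v s) then 1 else 0))
            + (if (VId ∧ w = Fin.last m) then 1 else 0) := by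
        rw [hSP, hSQ]
        by_cases hPatOK : ∀ s : Fin j, vc s = Fin.castSucc (c' s) ∨ vc s = Fin.last m
        · set Cf : Finset (Fin m) := Finset.univ.image c' with hCfdef
          set Bf : Finset (Fin m) :=
            (Finset.univ.filter (fun s => vc s = Fin.castSucc (c' s))).image c' with hBfdef
          have hBC : Bf ⊆ Cf := Finset.image_subset_image (Finset.filter_subset _ _)
          have hCc : Cf.card = j := by
            rw [hCfdef, Finset.card_image_of_injective _ hc'inj, Finset.card_univ,
              Fintype.card_fin]
          have hPatB : ∀ S, PatP S ↔ S ∩ Cf = Bf := by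
            intro S
            constructor
            · intro hp
              apply Finset.Subset.antisymm
              · intro x hx
                rw [Finset.mem_inter] at hx
                obtain ⟨s, _, rfl⟩ := Finset.mem_image.mp hx.2
                have h1 := hp s
                rw [if_pos hx.1] at h1
                exact Finset.mem_image.mpr
                  ⟨s, Finset.mem_filter.mpr ⟨Finset.mem_univ _, h1⟩, rfl⟩
              · intro x hx
                obtain ⟨s, hsf, rfl⟩ := Finset.mem_image.mp hx
                have hvs := (Finset.mem_filter.mp hsf).2
                rw [Finset.mem_inter]
                refine ⟨?_, Finset.mem_image_of_mem _ (Finset.mem_univ s)⟩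
                by_contra hnot
                have h1 := hp s
                rw [if_neg hnot] at h1
                rw [h1] at hvs
                have h2 := congrArg Fin.val hvs
                rw [Fin.val_last, Fin.coe_castSucc] at h2
                exact absurd h2.symm (Nat.ne_of_lt (c' s).isLt)
            · intro hSB s
              by_cases hmem : c' s ∈ S
              · rw [if_pos hmem]
                have h1 : c' s ∈ Bf := by
                  rw [← hSB]
                  exact Finset.mem_inter.mpr
                    ⟨hmem, Finset.mem_image_of_mem _ (Finset.mem_univ s)⟩
                obtain ⟨s₂, hs₂f, hs₂⟩ := Finset.mem_image.mp h1
                have heq : s₂ = s := hc'inj hs₂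
                subst heq
                exact (Finset.mem_filter.mp hs₂f).2
              · rw [if_neg hmem]
                rcases hPatOK s with hh | hh
                · exfalso
                  have h1 : c' s ∈ Bf := Finset.mem_image_of_mem _
                    (Finset.mem_filter.mpr ⟨Finset.mem_univ _, hh⟩)
                  rw [← hSB, Finset.mem_inter] at h1
                  exact hmem h1.1
                · exact hh
          have hVIdB : VId ↔ Bf = Cf := by
            constructor
            · intro hv
              rw [hBfdef, hCfdef]
              congr 1
              exact Finset.filter_true_of_mem (fun s _ => hv s)
            · intro hBfC s
              have h1 : c' s ∈ Bf := by
                rw [hBfC]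
                exact Finset.mem_image_of_mem _ (Finset.mem_univ s)
              obtain ⟨s₂, hs₂f, hs₂⟩ := Finset.mem_image.mp h1
              have heq : s₂ = s := hc'inj hs₂
              subst heq
              exact (Finset.mem_filter.mp hs₂f).2
          exact K4' m j hjm PatP Cf Bf hBC hCc hPatB VId hVIdB
            (w = (0 : Fin (m+1))) (w = Fin.last m) hwne
        · push_neg at hPatOK
          obtain ⟨s₁, hs₁a, hs₁b⟩ := hPatOK
          have hPatF : ∀ S, ¬ PatP S := by
            intro S hp
            have h1 := hp s₁
            by_cases hmem : c' s₁ ∈ S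
            · rw [if_pos hmem] at h1
              exact hs₁a h1
            · rw [if_neg hmem] at h1
              exact hs₁b h1
          have hVF : ¬ VId := fun hv => hs₁a (hv s₁)
          have hz1 : (∑ S : Finset (Fin m), mult m j S *
              (if ((S.card % 2 = j % 2) ∧ PatP S ∧ w = Fin.last m) then 1 else 0)) = 0 := by
            apply Finset.sum_eq_zero
            intro S _
            rw [if_neg (fun hcon => hPatF S hcon.2.1), mul_zero]
          have hz2 : (∑ S : Finset (Fin m), mult m j S *
              (if (¬(S.card % 2 = j % 2) ∧ PatP S ∧ w = (0:Fin (m+1))) then 1 else 0)) = 0 := by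
            apply Finset.sum_eq_zero
            intro S _
            rw [if_neg (fun hcon => hPatF S hcon.2.1), mul_zero]
          have hz3 : (∑ S : Finset (Fin m), mult m j S *
              (if ((S.card % 2 = j % 2) ∧ PatP S ∧ w = (0:Fin (m+1))) then 1 else 0)) = 0 := by
            apply Finset.sum_eq_zero
            intro S _
            rw [if_neg (fun hcon => hPatF S hcon.2.1), mul_zero]
          have hz4 : (∑ S : Finset (Fin m), mult m j S *
              (if (¬(S.card % 2 = j % 2) ∧ PatP S ∧ w = Fin.last m) then 1 else 0)) = 0 := by
            apply Finset.sum_eq_zero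
            intro S _
            rw [if_neg (fun hcon => hPatF S hcon.2.1), mul_zero]
          rw [hz1, hz2, hz3, hz4, if_neg (fun hcon => hVF hcon.1),
            if_neg (fun hcon => hVF hcon.1)]
      -- final arithmetic
      rw [hΨold, hΦoldsplit, hΦid, hΦnid, hK1, hK2]
      generalize hgen1 : (∑ S : Finset (Fin m), mult m j S *
        (if (∀ s, gP m j S (c s) = v s) then 1 else 0)) = SPv at hK4 ⊢
      generalize hgen2 : (∑ S : Finset (Fin m), mult m j S *
        (if (∀ s, gQ m j S (c s) = v s) then 1 else 0)) = SQv at hK4 ⊢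
      by_cases hc0 : VId ∧ w = (0 : Fin (m+1))
      · have hcl : ¬ (VId ∧ w = Fin.last m) := fun hcl => hwne ⟨hc0.2, hcl.2⟩
        rw [if_pos hc0, if_neg hcl] at hK4 ⊢
        have hq : SQv = SPv + 1 := by omega
        rw [hq, Nat.mul_add, Nat.mul_one]
        omega
      · by_cases hcl : VId ∧ w = Fin.last m
        · rw [if_neg hc0, if_pos hcl] at hK4 ⊢
          have hq : SPv = SQv + 1 := by omega
          rw [hq, Nat.mul_add, Nat.mul_one]
          omega
        · rw [if_neg hc0, if_neg hcl] at hK4 ⊢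
          have hq : SQv = SPv := by omega
          rw [hq]
  · -- multiplicity of the identity row
    exact hidcount

end ARlem


/-- Let `k ≥ 1`, `q > k`, `R* ≥ 1` and `R ≥ R*`, and set
`R' = R + R*·T(q−1, k−1)`. If `Γ(R, R*, q−1, k, k)` is nonempty then
`Γ(R', R*, q, k, k)` is nonempty. -/
theorem GammaNonempty_step
    (k q R Rstar : ℕ) (hk : 1 ≤ k) (hq : k < q) (hRs : 1 ≤ Rstar) (hR : Rstar ≤ R)
    (h : GammaNonempty R Rstar (q - 1) k k) :
    GammaNonempty (R + Rstar * T (q - 1) (k - 1)) Rstar q k k := by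
  obtain ⟨m, rfl⟩ : ∃ m, q = m + 1 := ⟨q - 1, by omega⟩
  obtain ⟨j, rfl⟩ : ∃ j, k = j + 1 := ⟨k - 1, by omega⟩
  have hjm : j < m := by omega
  have h' : GammaNonempty R Rstar m (j + 1) (j + 1) := by
    have e1 : m + 1 - 1 = m := rfl
    rw [e1] at h
    exact h
  have hres := ARlem.key m j R Rstar hjm hRs h'
  show GammaNonempty (R + Rstar * T m j) Rstar (m + 1) (j + 1) (j + 1)
  exact hres
end

section
/- For all natural numbers a and b with a > b ≥ 2, (T(a,b) + 1)/2 ≤ (2a − b)^b/(2·b!). -/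
open Finset

lemma aux_pow_add (x n : ℕ) : x^(n+1) + (n+1)*x^n ≤ (x+1)^(n+1) := by
  induction n with
  | zero => simp
  | succ n ih =>
    have h1 : x^(n+2) + (n+2)*x^(n+1) ≤ (x+1)*(x^(n+1) + (n+1)*x^n) := by
      have : (x+1)*(x^(n+1) + (n+1)*x^n) = x^(n+2) + (n+2)*x^(n+1) + (n+1)*x^n := by ring
      omega
    calc x^(n+1+1) + (n+1+1)*x^(n+1) ≤ (x+1)*(x^(n+1) + (n+1)*x^n) := h1
    _ ≤ (x+1)*(x+1)^(n+1) := Nat.mul_le_mul_left _ ih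
    _ = (x+1)^(n+1+1) := by ring

lemma aux_fact' (c : ℕ) : 2^(c+2) * (c+3).factorial ≤ (c+5)^(c+2) := by
  induction c with
  | zero => norm_num [Nat.factorial]
  | succ c ih =>
    calc 2^(c+1+2) * (c+1+3).factorial = 2*(c+4) * (2^(c+2)*(c+3).factorial) := by
          rw [show c+1+3 = c+3+1 by ring, Nat.factorial_succ]; ring
    _ ≤ 2*(c+4) * (c+5)^(c+2) := Nat.mul_le_mul_left _ ih
    _ = (c+5)^(c+3) + (c+3)*(c+5)^(c+2) := by ring
    _ ≤ (c+6)^(c+3) := aux_pow_add (c+5) (c+2)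

set_option maxHeartbeats 1000000 in
lemma main3 (a k : ℕ) (hab : k + 3 < a) :
    (Nat.factorial (k+3) : ℝ) * ((T a (k+3) : ℝ) + 1) ≤ (2*(a:ℝ) - (k+3))^(k+3) := by
  obtain ⟨A, hA⟩ : ∃ x : ℝ, (a:ℝ) = x := ⟨_, rfl⟩
  rw [hA]
  have hbA : ((k:ℝ)+3) < A := by rw [← hA]; exact_mod_cast hab
  have hA1 : ((k:ℝ)+3) + 1 ≤ A := by rw [← hA]; exact_mod_cast hab
  obtain ⟨m, hm⟩ : ∃ x : ℝ, x = A - ((k:ℝ)+3)/2 := ⟨_, rfl⟩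
  have hk0 : (0:ℝ) ≤ (k:ℝ) := Nat.cast_nonneg k
  have hm0 : 0 < m := by rw [hm]; linarith
  obtain ⟨P, hP⟩ : ∃ x : ℝ, x = ∏ j ∈ range (k+4), (A - (j:ℕ)) := ⟨_, rfl⟩
  obtain ⟨f, hf⟩ : ∃ F : ℕ → ℝ, F = fun j => (A - (j:ℕ)) * (A - ((k:ℝ)+3) + (j:ℕ)) := ⟨_, rfl⟩
  obtain ⟨Q, hQ⟩ : ∃ F : ℕ → ℝ, F = fun r => (∏ i ∈ range r, (A - (i:ℕ))) * (∏ i ∈ range (k+3 - r), (A - 1 - (r:ℕ) - (i:ℕ))) := ⟨_, rfl⟩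
  obtain ⟨g, hg⟩ : ∃ F : ℕ → ℝ, F = fun r => ((k+3).choose r : ℝ) * Q r := ⟨_, rfl⟩
  -- basic facts about f
  have hf_le : ∀ j : ℕ, f j ≤ m^2 := by
    intro j
    have h1 : m^2 - f j = (((k:ℝ)+3)/2 - j)^2 := by rw [hm, hf]; ring
    have h := sq_nonneg (((k:ℝ)+3)/2 - (j:ℝ))
    rw [← h1] at h
    linarith
  have hf_pos : ∀ j ≤ k+3, 0 < f j := by
    intro j hj
    have hjA : (j:ℝ) ≤ (k:ℝ)+3 := by exact_mod_cast hj
    have h1 : 0 < A - j := by linarith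
    have h2 : 0 < A - ((k:ℝ)+3) + j := by
      have : (0:ℝ) ≤ (j:ℝ) := Nat.cast_nonneg j
      linarith
    rw [hf]; exact mul_pos h1 h2
  have hf_symm : ∀ r ≤ k+3, f (k+3 - r) = f r := by
    intro r hr
    have hc : ((k+3 - r : ℕ) : ℝ) = ((k:ℝ)+3) - r := by
      rw [Nat.cast_sub hr]; push_cast; ring
    rw [hf]; dsimp only; rw [hc]; ring
  have hP_pos : 0 < P := by
    rw [hP]
    apply Finset.prod_pos
    intro j hj
    have : (j:ℝ) ≤ (k:ℝ)+3 := by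
      have := Nat.lt_succ_iff.mp (mem_range.mp hj)
      exact_mod_cast this
    linarith
  -- (F2) Q r * (A - r) = P
  have hQP : ∀ r ≤ k+3, Q r * (A - r) = P := by
    intro r hr
    have hsplit : P = (∏ i ∈ range (r+1), (A - i)) * ∏ i ∈ range (k+3 - r), (A - (((r+1)+i : ℕ) : ℝ)) := by
      rw [hP, show k + 4 = (r+1) + (k+3-r) by omega, prod_range_add]
    have hinner : ∀ i ∈ range (k+3 - r), (A - (((r+1)+i : ℕ):ℝ)) = A - 1 - r - i := by
      intro i _; push_cast; ring
    rw [hQ]; dsimp only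
    rw [hsplit, prod_congr rfl hinner, prod_range_succ]
    ring
  -- (F3) P * P = ∏ f
  have hP2 : P * P = ∏ j ∈ range (k+4), f j := by
    have hrefl : ∏ j ∈ range (k+4), (A - ((k+3 - j : ℕ):ℝ)) = P := by
      rw [hP, ← Finset.prod_range_reflect (fun j => A - (j:ℕ)) (k+4)]
      simp
    have hcast : ∀ j ∈ range (k+4), (A - ((k+3 - j : ℕ):ℝ)) = A - ((k:ℝ)+3) + j := by
      intro j hj
      rw [Nat.cast_sub (Nat.lt_succ_iff.mp (mem_range.mp hj))]; push_cast; ring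
    rw [hf]
    rw [Finset.prod_mul_distrib, ← hP, ← hrefl, prod_congr rfl hcast]
  -- products over subsets are ≤ (m^2)^card
  have hprod_le : ∀ t : Finset ℕ, t ⊆ range (k+4) → ∏ j ∈ t, f j ≤ (m^2)^(t.card) := by
    intro t ht
    calc ∏ j ∈ t, f j ≤ ∏ _j ∈ t, m^2 := by
          apply Finset.prod_le_prod
          · intro j hj
            exact (hf_pos j (Nat.lt_succ_iff.mp (mem_range.mp (ht hj)))).le
          · intro j _; exact hf_le j
    _ = (m^2)^(t.card) := prod_const _
  have hsqrt : ∀ X : ℝ, 0 ≤ X → P^2 ≤ X^2 → P ≤ X := by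
    intro X hX h
    exact (pow_le_pow_iff_left₀ hP_pos.le hX (two_ne_zero)).mp h
  -- (F7) P ≤ f r * m^(k+2)
  have hPle : ∀ r ≤ k+3, P ≤ f r * m^(k+2) := by
    intro r hr
    have hX : 0 ≤ f r * m^(k+2) := mul_nonneg (hf_pos r hr).le (by positivity)
    apply hsqrt _ hX
    by_cases h2r : k+3 - r = r
    · have hcast : (r:ℝ) = ((k:ℝ)+3)/2 := by
        have h2 : 2*r = k+3 := by omega
        have := congrArg (fun n : ℕ => (n:ℝ)) h2
        push_cast at this
        linarith
      have hfr : f r = m^2 := by rw [hf]; dsimp only; rw [hcast, hm]; ring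
      have h1 : P^2 ≤ (m^2)^(k+4) := by
        rw [sq, hP2]
        have := hprod_le (range (k+4)) (subset_refl _)
        rwa [card_range] at this
      calc P^2 ≤ (m^2)^(k+4) := h1
      _ = (f r * m^(k+2))^2 := by rw [hfr]; ring
    · have h1 : r ∈ range (k+4) := mem_range.mpr (by omega)
      have h2 : k+3 - r ∈ (range (k+4)).erase r := mem_erase.mpr ⟨by omega, mem_range.mpr (by omega)⟩
      have hsplit : ∏ j ∈ range (k+4), f j
          = f r * (f (k+3-r) * ∏ j ∈ ((range (k+4)).erase r).erase (k+3-r), f j) := by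
        rw [mul_prod_erase _ f h2, mul_prod_erase _ f h1]
      have hcard : (((range (k+4)).erase r).erase (k+3-r)).card = k+2 := by
        rw [card_erase_of_mem h2, card_erase_of_mem h1, card_range]
        omega
      have hsub : ((range (k+4)).erase r).erase (k+3-r) ⊆ range (k+4) :=
        (erase_subset _ _).trans (erase_subset _ _)
      have hrest := hprod_le _ hsub
      rw [hcard] at hrest
      have hfr := (hf_pos r hr).le
      calc P^2 = f r * (f r * ∏ j ∈ ((range (k+4)).erase r).erase (k+3-r), f j) := by
            rw [sq, hP2, hsplit, hf_symm r hr]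
      _ ≤ f r * (f r * (m^2)^(k+2)) := by
            apply mul_le_mul_of_nonneg_left _ hfr
            apply mul_le_mul_of_nonneg_left hrest hfr
      _ = (f r * m^(k+2))^2 := by ring
  -- (F8) P ≤ f 1 * (f 0 * m^k)
  have hPle1 : P ≤ f 1 * (f 0 * m^k) := by
    have hX : 0 ≤ f 1 * (f 0 * m^k) :=
      mul_nonneg (hf_pos 1 (by omega)).le (mul_nonneg (hf_pos 0 (by omega)).le (by positivity))
    apply hsqrt _ hX
    have h1 : 1 ∈ range (k+4) := mem_range.mpr (by omega)
    have h2 : k+2 ∈ (range (k+4)).erase 1 := mem_erase.mpr ⟨by omega, mem_range.mpr (by omega)⟩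
    have h3 : 0 ∈ ((range (k+4)).erase 1).erase (k+2) :=
      mem_erase.mpr ⟨by omega, mem_erase.mpr ⟨by omega, mem_range.mpr (by omega)⟩⟩
    have h4 : k+3 ∈ (((range (k+4)).erase 1).erase (k+2)).erase 0 :=
      mem_erase.mpr ⟨by omega, mem_erase.mpr ⟨by omega, mem_erase.mpr ⟨by omega, mem_range.mpr (by omega)⟩⟩⟩
    set t : Finset ℕ := ((((range (k+4)).erase 1).erase (k+2)).erase 0).erase (k+3) with ht
    have hsplit : ∏ j ∈ range (k+4), f j = f 1 * (f (k+2) * (f 0 * (f (k+3) * ∏ j ∈ t, f j))) := by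
      rw [ht, mul_prod_erase _ f h4, mul_prod_erase _ f h3, mul_prod_erase _ f h2,
        mul_prod_erase _ f h1]
    have hcard : t.card = k := by
      rw [ht, card_erase_of_mem h4, card_erase_of_mem h3, card_erase_of_mem h2,
        card_erase_of_mem h1, card_range]
      omega
    have hsub : t ⊆ range (k+4) := by
      rw [ht]
      exact (erase_subset _ _).trans ((erase_subset _ _).trans
        ((erase_subset _ _).trans (erase_subset _ _)))
    have hrest := hprod_le _ hsub
    rw [hcard] at hrest
    have hf1 := (hf_pos 1 (by omega)).le
    have hf0 := (hf_pos 0 (by omega)).le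
    have e1 : f (k+2) = f 1 := by
      have := hf_symm 1 (by omega)
      simpa using this
    have e0 : f (k+3) = f 0 := by
      have := hf_symm 0 (by omega)
      simpa using this
    calc P^2 = f 1 * (f 1 * (f 0 * (f 0 * ∏ j ∈ t, f j))) := by
          rw [sq, hP2, hsplit, e1, e0]
    _ ≤ f 1 * (f 1 * (f 0 * (f 0 * (m^2)^k))) := by
          apply mul_le_mul_of_nonneg_left _ hf1
          apply mul_le_mul_of_nonneg_left _ hf1
          apply mul_le_mul_of_nonneg_left _ hf0
          apply mul_le_mul_of_nonneg_left hrest hf0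
    _ = (f 1 * (f 0 * m^k))^2 := by ring
  -- (F1) factorial * term = g r
  have hgQ : ∀ r ∈ range (k+4),
      ((Nat.factorial (k+3) : ℕ) : ℝ) * ((a.choose r * Nat.choose (a-1-r) (k+3-r) : ℕ) : ℝ) = g r := by
    intro r hrr
    have hr : r ≤ k+3 := Nat.lt_succ_iff.mp (mem_range.mp hrr)
    have hnat : (k+3).factorial * (a.choose r * (a-1-r).choose (k+3-r))
        = (k+3).choose r * (a.descFactorial r * (a-1-r).descFactorial (k+3-r)) := by
      rw [Nat.descFactorial_eq_factorial_mul_choose a r,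
        Nat.descFactorial_eq_factorial_mul_choose (a-1-r) (k+3-r),
        ← Nat.choose_mul_factorial_mul_factorial hr]
      ring
    have hd1 : ((a.descFactorial r : ℕ) : ℝ) = ∏ i ∈ range r, (A - (i:ℕ)) := by
      rw [Nat.descFactorial_eq_prod_range, Nat.cast_prod]
      refine prod_congr rfl fun i hi => ?_
      have hia : i ≤ a := by have := mem_range.mp hi; omega
      rw [Nat.cast_sub hia, hA]
    have hd2 : (((a-1-r).descFactorial (k+3-r) : ℕ) : ℝ)
        = ∏ i ∈ range (k+3-r), (A - 1 - (r:ℕ) - (i:ℕ)) := by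
      rw [Nat.descFactorial_eq_prod_range, Nat.cast_prod]
      refine prod_congr rfl fun i hi => ?_
      have hi' : i < k+3-r := mem_range.mp hi
      have h1 : a - 1 - r - i = a - (1 + r + i) := by omega
      have h2 : 1 + r + i ≤ a := by omega
      rw [h1, Nat.cast_sub h2, ← hA]
      push_cast
      ring
    calc ((Nat.factorial (k+3) : ℕ) : ℝ) * ((a.choose r * Nat.choose (a-1-r) (k+3-r) : ℕ) : ℝ)
        = (((k+3).factorial * (a.choose r * (a-1-r).choose (k+3-r)) : ℕ) : ℝ) := by
          push_cast; ring
    _ = (((k+3).choose r * (a.descFactorial r * (a-1-r).descFactorial (k+3-r)) : ℕ) : ℝ) := by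
          rw [hnat]
    _ = g r := by
          rw [hg, hQ]; dsimp only
          rw [Nat.cast_mul, Nat.cast_mul, hd1, hd2]
  -- sum identity
  have hTS : ((Nat.factorial (k+3) : ℕ) : ℝ) * (T a (k+3) : ℝ) = ∑ r ∈ range (k+4), g r := by
    have hc : (T a (k+3) : ℝ)
        = ∑ r ∈ range (k+4), ((a.choose r * Nat.choose (a-1-r) (k+3-r) : ℕ) : ℝ) := by
      rw [T, Nat.cast_sum]
    rw [hc, Finset.mul_sum]
    exact sum_congr rfl hgQ
  -- reflection
  have hrefl : ∑ r ∈ range (k+4), g (k+3 - r) = ∑ r ∈ range (k+4), g r := by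
    have h := Finset.sum_range_reflect g (k+4)
    have h2 : ∀ r ∈ range (k+4), g (k+4-1-r) = g (k+3-r) := by
      intro r _
      have he : k+4-1-r = k+3-r := by omega
      rw [he]
    rw [← h]
    exact sum_congr rfl h2
  have hS2 : ∑ r ∈ range (k+4), (g r + g (k+3-r)) = 2 * ∑ r ∈ range (k+4), g r := by
    rw [sum_add_distrib, hrefl, two_mul]
  have h2m : 2*m = 2*A - ((k:ℝ)+3) := by rw [hm]; ring
  -- pairwise bound, generic r
  have hbound : ∀ r ≤ k+3, g r + g (k+3-r) ≤ ((k+3).choose r : ℝ) * (2 * m^(k+3)) := by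
    intro r hr
    have hfr := hf_pos r hr
    have hcs : ((k+3).choose (k+3-r) : ℝ) = ((k+3).choose r : ℝ) := by
      rw [Nat.choose_symm hr]
    have e1 : Q r * (A - r) = P := hQP r hr
    have e2 : Q (k+3-r) * (A - ((k+3-r:ℕ):ℝ)) = P := hQP (k+3-r) (by omega)
    have e2c : ((k+3-r:ℕ):ℝ) = (k:ℝ)+3 - r := by
      rw [Nat.cast_sub hr]; push_cast; ring
    rw [e2c] at e2
    have hpair : (g r + g (k+3-r)) * f r = ((k+3).choose r : ℝ) * ((2*m) * P) := by
      rw [hg]; dsimp only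
      rw [hcs, hf]; dsimp only
      rw [h2m]
      linear_combination ((k+3).choose r : ℝ) * ((A - ((k:ℝ)+3) + r) * e1 + (A - r) * e2)
    have hPr := hPle r hr
    have hC0 : (0:ℝ) ≤ ((k+3).choose r : ℝ) := Nat.cast_nonneg _
    rw [← mul_le_mul_iff_left₀ hfr, hpair]
    calc ((k+3).choose r : ℝ) * ((2*m) * P)
        ≤ ((k+3).choose r : ℝ) * ((2*m) * (f r * m^(k+2))) := by
          apply mul_le_mul_of_nonneg_left _ hC0
          apply mul_le_mul_of_nonneg_left hPr (by positivity)
    _ = ((k+3).choose r : ℝ) * (2 * m^(k+3)) * f r := by ring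
  -- improved bound for the pair {1, k+2}
  have hbound1 : g 1 + g (k+2) ≤ ((k:ℝ)+3) * (2*m*(f 0 * m^k)) := by
    have hfr := hf_pos 1 (by omega)
    have hcs : ((k+3).choose (k+2) : ℝ) = ((k:ℝ)+3) := by
      rw [show k+2 = (k+3)-1 by omega, Nat.choose_symm (by omega), Nat.choose_one_right]
      push_cast; ring
    have hc1 : ((k+3).choose 1 : ℝ) = ((k:ℝ)+3) := by
      rw [Nat.choose_one_right]; push_cast; ring
    have e1 : Q 1 * (A - ((1:ℕ):ℝ)) = P := hQP 1 (by omega)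
    have e2 : Q (k+2) * (A - ((k+2:ℕ):ℝ)) = P := hQP (k+2) (by omega)
    have e1c : ((1:ℕ):ℝ) = (1:ℝ) := by norm_num
    have e2c : ((k+2:ℕ):ℝ) = (k:ℝ)+2 := by push_cast; ring
    rw [e1c] at e1
    rw [e2c] at e2
    have hpair : (g 1 + g (k+2)) * f 1 = ((k:ℝ)+3) * ((2*m) * P) := by
      rw [hg]; dsimp only
      rw [hcs, hc1, hf]; dsimp only
      rw [h2m]
      push_cast
      linear_combination ((k:ℝ)+3) * ((A - ((k:ℝ)+3) + 1) * e1 + (A - 1) * e2)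
    rw [← mul_le_mul_iff_left₀ hfr, hpair]
    have hk3 : (0:ℝ) ≤ (k:ℝ)+3 := by linarith
    calc ((k:ℝ)+3) * ((2*m) * P)
        ≤ ((k:ℝ)+3) * ((2*m) * (f 1 * (f 0 * m^k))) := by
          apply mul_le_mul_of_nonneg_left _ hk3
          apply mul_le_mul_of_nonneg_left hPle1 (by positivity)
    _ = ((k:ℝ)+3) * (2*m*(f 0 * m^k)) * f 1 := by ring
  -- split the sum
  have hmem1 : 1 ∈ range (k+4) := mem_range.mpr (by omega)
  have hmem2 : k+2 ∈ (range (k+4)).erase 1 := mem_erase.mpr ⟨by omega, mem_range.mpr (by omega)⟩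
  obtain ⟨s2, hs2⟩ : ∃ x : Finset ℕ, x = ((range (k+4)).erase 1).erase (k+2) := ⟨_, rfl⟩
  have hsplit1 : ∑ r ∈ range (k+4), (g r + g (k+3-r))
      = (g 1 + g (k+2)) + ((g (k+2) + g 1) + ∑ r ∈ s2, (g r + g (k+3-r))) := by
    rw [hs2, ← Finset.add_sum_erase (range (k+4)) (fun r => g r + g (k+3-r)) hmem1,
      ← Finset.add_sum_erase ((range (k+4)).erase 1) (fun r => g r + g (k+3-r)) hmem2]
    have h1 : k+3-1 = k+2 := by omega
    have h2 : k+3-(k+2) = 1 := by omega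
    rw [h1, h2]
  -- binomial sums
  have hsumC : ∑ r ∈ range (k+4), (((k+3).choose r : ℕ) : ℝ) = 2^(k+3) := by
    rw [← Nat.cast_sum]
    have := Nat.sum_range_choose (k+3)
    rw [this]
    push_cast; ring
  have hC1 : (((k+3).choose 1 : ℕ):ℝ) = (k:ℝ)+3 := by
    rw [Nat.choose_one_right]; push_cast; ring
  have hC2 : (((k+3).choose (k+2) : ℕ):ℝ) = (k:ℝ)+3 := by
    rw [show k+2 = (k+3)-1 by omega, Nat.choose_symm (by omega), Nat.choose_one_right]
    push_cast; ring
  have hCs2 : ∑ r ∈ s2, (((k+3).choose r : ℕ) : ℝ) = 2^(k+3) - 2*((k:ℝ)+3) := by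
    have t1 := Finset.add_sum_erase (range (k+4)) (fun r => (((k+3).choose r : ℕ) : ℝ)) hmem1
    have t2 := Finset.add_sum_erase ((range (k+4)).erase 1)
      (fun r => (((k+3).choose r : ℕ) : ℝ)) hmem2
    rw [hs2]
    rw [hC1] at t1
    rw [hC2] at t2
    rw [hsumC] at t1
    linarith
  have hs2sum : ∑ r ∈ s2, (g r + g (k+3-r)) ≤ (2^(k+3) - 2*((k:ℝ)+3)) * (2*m^(k+3)) := by
    rw [← hCs2, sum_mul]
    apply sum_le_sum
    intro r hrr
    have hrb : r ≤ k+3 := by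
      have : r ∈ range (k+4) := by
        rw [hs2] at hrr
        exact (erase_subset _ _) ((erase_subset _ _) hrr)
      exact Nat.lt_succ_iff.mp (mem_range.mp this)
    exact hbound r hrb
  -- combine everything
  have hf0v : f 0 = A * (A - ((k:ℝ)+3)) := by
    rw [hf]; dsimp only; push_cast; ring
  have hmf : m^2 - f 0 = ((k:ℝ)+3)^2/4 := by rw [hm, hf0v]; ring
  have hSle : ∑ r ∈ range (k+4), g r ≤ 2^(k+3) * m^(k+3) - ((k:ℝ)+3)^3/2 * m^(k+1) := by
    have comb : 2 * ∑ r ∈ range (k+4), g r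
        ≤ 2*(((k:ℝ)+3) * (2*m*(f 0 * m^k))) + (2^(k+3) - 2*((k:ℝ)+3)) * (2*m^(k+3)) := by
      rw [← hS2, hsplit1]
      have hb1 := hbound1
      linarith [hs2sum, hbound1]
    have halg : 2*(((k:ℝ)+3) * (2*m*(f 0 * m^k))) + (2^(k+3) - 2*((k:ℝ)+3)) * (2*m^(k+3))
        = 2*(2^(k+3) * m^(k+3) - ((k:ℝ)+3)^3/2 * m^(k+1))
          - 4*((k:ℝ)+3)*m^(k+1)*(m^2 - f 0 - ((k:ℝ)+3)^2/4) := by ring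
    rw [halg] at comb
    rw [hmf] at comb
    linarith
  -- factorial bound
  have hfle : ((Nat.factorial (k+3) : ℕ) : ℝ) ≤ ((k:ℝ)+3)^3/2 * m^(k+1) := by
    have c1 : ((Nat.factorial (k+3) : ℕ) : ℝ) * 2^(k+2) ≤ ((k:ℝ)+5)^(k+2) := by
      have := aux_fact' k
      have hc := (Nat.cast_le (α := ℝ)).mpr this
      push_cast at hc
      linarith [hc]
    have c3 : ((k:ℝ)+5)/2 ≤ m := by rw [hm]; linarith
    have c4 : (((k:ℝ)+5)/2)^(k+1) ≤ m^(k+1) := by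
      apply pow_le_pow_left₀ (by positivity) c3
    have c5 : ((Nat.factorial (k+3) : ℕ) : ℝ) ≤ (((k:ℝ)+5)/2)^(k+2) := by
      rw [div_pow]
      rw [le_div_iff₀ (by positivity)]
      exact c1
    have c6 : (((k:ℝ)+5)/2)^(k+2) = ((k:ℝ)+5)/2 * (((k:ℝ)+5)/2)^(k+1) := by ring
    have c7 : ((k:ℝ)+5)/2 * (((k:ℝ)+5)/2)^(k+1) ≤ ((k:ℝ)+3)^3/2 * m^(k+1) := by
      have h1 : ((k:ℝ)+5)/2 ≤ ((k:ℝ)+3)^3/2 := by nlinarith [hk0]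
      have h2 : (0:ℝ) ≤ (((k:ℝ)+5)/2)^(k+1) := by positivity
      have h3 : (0:ℝ) ≤ ((k:ℝ)+3)^3/2 := by positivity
      calc ((k:ℝ)+5)/2 * (((k:ℝ)+5)/2)^(k+1) ≤ ((k:ℝ)+3)^3/2 * (((k:ℝ)+5)/2)^(k+1) :=
            mul_le_mul_of_nonneg_right h1 h2
      _ ≤ ((k:ℝ)+3)^3/2 * m^(k+1) := mul_le_mul_of_nonneg_left c4 h3
    calc ((Nat.factorial (k+3) : ℕ) : ℝ) ≤ (((k:ℝ)+5)/2)^(k+2) := c5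
    _ = ((k:ℝ)+5)/2 * (((k:ℝ)+5)/2)^(k+1) := c6
    _ ≤ ((k:ℝ)+3)^3/2 * m^(k+1) := c7
  -- finish
  have hgoal : 2*A - ((k:ℝ)+3) = 2*m := h2m.symm
  push_cast
  rw [show 2*A - ((k:ℝ)+3) = 2*m from hgoal, mul_pow]
  push_cast at hTS
  nlinarith [hTS, hSle, hfle]

lemma main2 (a : ℕ) (hab : 2 < a) :
    ((T a 2 : ℝ) + 1) / 2 ≤ (2 * (a : ℝ) - 2) ^ 2 / (2 * (Nat.factorial 2 : ℝ)) := by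
  have h3 : (3:ℝ) ≤ (a:ℝ) := by exact_mod_cast hab
  have hT : T a 2 = (a-1).choose 2 + a*(a-2) + a.choose 2 := by
    simp [T, Finset.sum_range_succ, Nat.choose_one_right, show a - 1 - 1 = a - 2 from by omega]
  rw [hT]
  push_cast [Nat.cast_choose_two, Nat.cast_sub (by omega : 1 ≤ a), Nat.cast_sub (by omega : 2 ≤ a),
    Nat.factorial]
  nlinarith [sq_nonneg ((a:ℝ) - 1)]

/-- For all natural numbers `a > b ≥ 2`,
`(T(a,b) + 1)/2 ≤ (2a − b)^b / (2·b!)`. -/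
theorem T_upper_bound (a b : ℕ) (hb : 2 ≤ b) (hab : b < a) :
    ((T a b : ℝ) + 1) / 2 ≤ (2 * (a : ℝ) - b) ^ b / (2 * (Nat.factorial b : ℝ)) := by
  rcases eq_or_lt_of_le hb with h2 | h3
  · obtain rfl : b = 2 := h2.symm
    exact main2 a hab
  · obtain ⟨k, rfl⟩ : ∃ k, b = k + 3 := ⟨b - 3, by omega⟩
    have key := main3 a k hab
    have hfb : (0:ℝ) < ((k+3).factorial : ℝ) := by exact_mod_cast (k+3).factorial_pos
    rw [div_le_div_iff₀ (by norm_num) (by positivity)]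
    push_cast at key ⊢
    nlinarith [key, hfb]
end

section
/- Let k ≥ 2, p ≥ k and q ≥ p be integers, and let I be a maximization instance of k CSP-q with n variables and opt(I) ≠ wor(I). Define opt(I | P_p(Σ_q)) := max over all p-element subsets T ⊆ Σ_q of max_{x ∈ T^n} v(I,x), the best objective value over solutions whose coordinates take at most p distinct values. Then (opt(I | P_p(Σ_q)) − wor(I))/(opt(I) − wor(I)) ≥ γ(q,p,k). -/
/-- An instance of the (maximization) problem `k CSP-q` with `n` variables:
`m` weighted constraints, where constraint `i` has positive weight `w i`,
arity `arity i ≤ k`, a strictly increasing tuple `idx i` of indices of the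
variables it depends on, and a constraint function `P i : Σ_q^{arity i} → ℝ`. -/
structure CSPInstance (q k n : ℕ) where
  m : ℕ
  w : Fin m → ℝ
  w_pos : ∀ i, 0 < w i
  arity : Fin m → ℕ
  arity_le : ∀ i, arity i ≤ k
  idx : (i : Fin m) → Fin (arity i) → Fin n
  idx_mono : ∀ i, StrictMono (idx i)
  P : (i : Fin m) → ((Fin (arity i) → Fin q) → ℝ)

namespace CSPInstance

variable {q k n : ℕ}

/-- The objective value `v(I, x)` of a solution `x ∈ Σ_q^n`. -/
def value (I : CSPInstance q k n) (x : Fin n → Fin q) : ℝ :=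
  ∑ i : Fin I.m, I.w i * I.P i (fun s => x (I.idx i s))

/-- `opt(I)`, the best (maximum) objective value. -/
noncomputable def opt (I : CSPInstance q k n) : ℝ := sSup (Set.range I.value)

/-- `wor(I)`, the worst (minimum) objective value. -/
noncomputable def wor (I : CSPInstance q k n) : ℝ := sInf (Set.range I.value)

/-- `E[v(I,X)]`, the average objective value over all `q^n` solutions. -/
noncomputable def avg (I : CSPInstance q k n) : ℝ :=
  (∑ x : Fin n → Fin q, I.value x) / (q : ℝ) ^ n

/-- A strong coloring of `I` with `ν` colors: an assignment of colors to variables such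
that the support of each constraint meets each color class in at most one index. -/
def StrongColoring (I : CSPInstance q k n) (ν : ℕ) : Prop :=
  ∃ c : Fin n → Fin ν, ∀ i : Fin I.m, Function.Injective (fun s => c (I.idx i s))

end CSPInstance

open Finset

lemma count_eq_aux {q k R t : ℕ} (G : Fin R → Fin q → Fin q)
    (e : Fin k → Fin q) (σ : Fin t → Fin k) (v : Fin t → Fin q) :
    (univ.filter fun r => ∀ s, G r (e (σ s)) = v s).card
      = ∑ w ∈ univ.filter (fun w : Fin k → Fin q => ∀ s, w (σ s) = v s),
          (univ.filter fun r => ∀ j, G r (e j) = w j).card := by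
  classical
  have hmap : ∀ r ∈ (univ.filter fun r => ∀ s, G r (e (σ s)) = v s),
      (fun j => G r (e j)) ∈ univ.filter (fun w : Fin k → Fin q => ∀ s, w (σ s) = v s) := by
    intro r hr
    simp only [Finset.mem_filter, Finset.mem_univ, true_and] at hr ⊢
    exact hr
  rw [Finset.card_eq_sum_card_fiberwise hmap]
  refine Finset.sum_congr rfl fun w hw => ?_
  simp only [Finset.mem_filter, Finset.mem_univ, true_and] at hw
  congr 1
  ext r
  simp only [Finset.mem_filter, Finset.mem_univ, true_and, funext_iff]
  constructor
  · rintro ⟨h1, h2⟩; exact h2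
  · intro h2; exact ⟨fun s => by rw [h2]; exact hw s, h2⟩

lemma count_eq {q k R t : ℕ} {Ψ Φ : Fin R → Fin q → Fin q}
    (hkq : k ≤ q)
    (h3 : ∀ c : Fin k → Fin q, StrictMono c → ∀ v : Fin k → Fin q,
      (univ.filter fun r => ∀ s, Ψ r (c s) = v s).card =
        (univ.filter fun r => ∀ s, Φ r (c s) = v s).card)
    (d : Fin t → Fin q) (hd : (univ.image d).card ≤ k) (v : Fin t → Fin q) :
    (univ.filter fun r => ∀ s, Ψ r (d s) = v s).card =
      (univ.filter fun r => ∀ s, Φ r (d s) = v s).card := by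
  classical
  obtain ⟨T, hdT, hT⟩ := Finset.exists_superset_card_eq hd (by simpa using hkq)
  set e : Fin k → Fin q := fun j => (T.orderIsoOfFin hT j : Fin q) with he
  have hemono : StrictMono e := fun a b h =>
    Subtype.coe_lt_coe.mpr ((T.orderIsoOfFin hT).strictMono h)
  have hds : ∀ s, d s ∈ T := fun s => hdT (Finset.mem_image_of_mem d (Finset.mem_univ s))
  set σ : Fin t → Fin k := fun s => (T.orderIsoOfFin hT).symm ⟨d s, hds s⟩ with hσ
  have heσ : ∀ s, e (σ s) = d s := by
    intro s
    simp only [he, hσ, ← Finset.coe_orderIsoOfFin_apply, OrderIso.apply_symm_apply]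
  have hrw : ∀ (G : Fin R → Fin q → Fin q),
      (univ.filter fun r => ∀ s, G r (d s) = v s)
        = (univ.filter fun r => ∀ s, G r (e (σ s)) = v s) := by
    intro G
    apply Finset.filter_congr
    intro r _
    simp only [heσ]
  rw [hrw Ψ, hrw Φ, count_eq_aux Ψ e σ v, count_eq_aux Φ e σ v]
  exact Finset.sum_congr rfl fun w _ => h3 e hemono w

lemma sum_rows_eq {q k R t : ℕ} {Ψ Φ : Fin R → Fin q → Fin q}
    (hkq : k ≤ q)
    (h3 : ∀ c : Fin k → Fin q, StrictMono c → ∀ v : Fin k → Fin q,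
      (univ.filter fun r => ∀ s, Ψ r (c s) = v s).card =
        (univ.filter fun r => ∀ s, Φ r (c s) = v s).card)
    (d : Fin t → Fin q) (hd : (univ.image d).card ≤ k)
    (F : (Fin t → Fin q) → ℝ) :
    ∑ r, F (fun s => Ψ r (d s)) = ∑ r, F (fun s => Φ r (d s)) := by
  classical
  have key : ∀ (G : Fin R → Fin q → Fin q),
      ∑ r, F (fun s => G r (d s))
        = ∑ v : Fin t → Fin q,
            ((univ.filter fun r => ∀ s, G r (d s) = v s).card : ℝ) * F v := by
    intro G
    rw [← Finset.sum_fiberwise univ (fun r => fun s => G r (d s)) (fun r => F (fun s => G r (d s)))]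
    refine Finset.sum_congr rfl fun v _ => ?_
    have : (univ.filter fun r => (fun s => G r (d s)) = v)
        = (univ.filter fun r => ∀ s, G r (d s) = v s) := by
      apply Finset.filter_congr; intro r _; simp [funext_iff]
    rw [← this, Finset.sum_congr rfl (fun r hr => by
      simp only [Finset.mem_filter] at hr; rw [hr.2]),
      Finset.sum_const, nsmul_eq_mul]
  rw [key Ψ, key Φ]
  exact Finset.sum_congr rfl fun v _ => by rw [count_eq hkq h3 d hd v]

/-- Let `k ≥ 2`, `p ≥ k`, `q ≥ p`, and let `I` be a maximization
instance of `k CSP-q` with `n` variables and `opt(I) ≠ wor(I)`. Writing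
`opt(I | P_p(Σ_q))` for the best objective value over solutions whose coordinates all lie
in some `p`-element subset `T ⊆ Σ_q`, we have
`(opt(I | P_p(Σ_q)) − wor(I)) / (opt(I) − wor(I)) ≥ γ(q,p,k)`. -/
theorem restricted_opt_diff_ratio
    (q p k n : ℕ) (hk : 2 ≤ k) (hpk : k ≤ p) (hqp : p ≤ q)
    (I : CSPInstance q k n) (hne : I.opt ≠ I.wor) :
    gammaARPA q p k ≤
      (sSup {x : ℝ | ∃ T : Finset (Fin q), T.card = p ∧
          ∃ y : Fin n → Fin q, (∀ j, y j ∈ T) ∧ x = I.value y} - I.wor) /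
        (I.opt - I.wor) := by

  classical
  have hq2 : 0 < q := by omega
  have hkq : k ≤ q := le_trans hpk hqp
  haveI : Nonempty (Fin q) := ⟨⟨0, hq2⟩⟩
  set Sres := {x : ℝ | ∃ T : Finset (Fin q), T.card = p ∧
      ∃ y : Fin n → Fin q, (∀ j, y j ∈ T) ∧ x = I.value y} with hSres
  have hfin : (Set.range I.value).Finite := Set.finite_range _
  have hnerange : (Set.range I.value).Nonempty := Set.range_nonempty _
  have hO : I.opt ∈ Set.range I.value := hnerange.csSup_mem hfin
  have hWle : ∀ x, I.wor ≤ I.value x := fun x => csInf_le hfin.bddBelow ⟨x, rfl⟩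
  have hOle : ∀ x, I.value x ≤ I.opt := fun x => le_csSup hfin.bddAbove ⟨x, rfl⟩
  have hOW : I.wor < I.opt := by
    refine lt_of_le_of_ne ?_ (Ne.symm hne)
    obtain ⟨x, hx⟩ := hO
    exact hx ▸ hWle x
  have hsub : Sres ⊆ Set.range I.value := by
    rintro x ⟨T, hT, y, hy, rfl⟩; exact ⟨y, rfl⟩
  have hSfin : Sres.Finite := hfin.subset hsub
  have hSne : Sres.Nonempty := by
    obtain ⟨T, -, hTc⟩ := Finset.exists_subset_card_eq (s := (Finset.univ : Finset (Fin q))) (n := p)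
      (by simpa using hqp)
    have hTne : T.Nonempty := Finset.card_pos.mp (by omega)
    obtain ⟨t0, ht0⟩ := hTne
    exact ⟨I.value (fun _ => t0), T, hTc, fun _ => t0, fun _ => ht0, rfl⟩
  have hWA : I.wor ≤ sSup Sres := by
    obtain ⟨x, hx⟩ := hsub (hSne.csSup_mem hSfin)
    exact hx ▸ hWle x
  apply Real.sSup_le
  · rintro x ⟨R, Rstar, hRstar, hRR, ⟨Ψ, Φ, ⟨-, h2, h3⟩, hcount⟩, rfl⟩
    obtain ⟨xs, hxs⟩ := hO
    -- key sum equality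
    have himg : ∀ i : Fin I.m, (Finset.univ.image (fun s => xs (I.idx i s))).card ≤ k :=
      fun i => le_trans (le_trans Finset.card_image_le (by simp)) (I.arity_le i)
    have hkey : ∑ r, I.value (fun j => Ψ r (xs j)) = ∑ r, I.value (fun j => Φ r (xs j)) := by
      have hG : ∀ G : Fin R → Fin q → Fin q, ∑ r, I.value (fun j => G r (xs j))
          = ∑ i, I.w i * ∑ r, I.P i (fun s => G r (xs (I.idx i s))) := by
        intro G
        unfold CSPInstance.value
        rw [Finset.sum_comm]
        exact Finset.sum_congr rfl fun i _ => by rw [Finset.mul_sum]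
      rw [hG Ψ, hG Φ]
      exact Finset.sum_congr rfl fun i _ => by
        rw [sum_rows_eq hkq h3 (fun s => xs (I.idx i s)) (himg i) (I.P i)]
    -- upper bound
    have hup : ∑ r, I.value (fun j => Ψ r (xs j)) ≤ (R : ℝ) * sSup Sres := by
      calc ∑ r, I.value (fun j => Ψ r (xs j)) ≤ ∑ _r : Fin R, sSup Sres := by
            refine Finset.sum_le_sum fun r _ => le_csSup hSfin.bddAbove ?_
            obtain ⟨T, hT1, hT2⟩ := Finset.exists_superset_card_eq (h2 r) (by simpa using hqp)
            exact ⟨T, hT2, fun j => Ψ r (xs j),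
              fun j => hT1 (Finset.mem_image_of_mem _ (Finset.mem_univ _)), rfl⟩
        _ = (R : ℝ) * sSup Sres := by simp [Finset.sum_const, mul_comm]
    -- lower bound
    have hlow : (Rstar : ℝ) * I.opt + ((R : ℝ) - Rstar) * I.wor
        ≤ ∑ r, I.value (fun j => Φ r (xs j)) := by
      rw [← Finset.sum_filter_add_sum_filter_not Finset.univ (fun r => ∀ j : Fin q, Φ r j = j)]
      have h1 : ∑ r ∈ Finset.univ.filter (fun r => ∀ j : Fin q, Φ r j = j),
          I.value (fun j => Φ r (xs j)) = (Rstar : ℝ) * I.opt := by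
        rw [Finset.sum_congr rfl (fun r hr => ?_), Finset.sum_const, hcount, nsmul_eq_mul]
        simp only [Finset.mem_filter] at hr
        rw [show (fun j => Φ r (xs j)) = xs from funext fun j => hr.2 (xs j), hxs]
      have hcard2 : (Finset.univ.filter (fun r => ¬ ∀ j : Fin q, Φ r j = j)).card = R - Rstar := by
        have := Finset.card_filter_add_card_filter_not
          (s := (Finset.univ : Finset (Fin R))) (p := fun r => ∀ j : Fin q, Φ r j = j)
        rw [Finset.card_univ, Fintype.card_fin, hcount] at this
        omega
      have h2' : ((R : ℝ) - Rstar) * I.wor ≤ ∑ r ∈ Finset.univ.filter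
          (fun r => ¬ ∀ j : Fin q, Φ r j = j), I.value (fun j => Φ r (xs j)) := by
        calc ((R : ℝ) - Rstar) * I.wor = ∑ _r ∈ Finset.univ.filter
              (fun r => ¬ ∀ j : Fin q, Φ r j = j), I.wor := by
              rw [Finset.sum_const, hcard2, nsmul_eq_mul, Nat.cast_sub hRR]
          _ ≤ _ := Finset.sum_le_sum fun r _ => hWle _
      linarith
    have hmain : (Rstar : ℝ) * I.opt + ((R : ℝ) - Rstar) * I.wor ≤ (R : ℝ) * sSup Sres := by
      linarith [hkey]
    have hRpos : (0 : ℝ) < R := by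
      have : 0 < R := lt_of_lt_of_le hRstar hRR
      exact_mod_cast this
    rw [div_le_div_iff₀ hRpos (by linarith)]
    linarith [hmain]
  · exact div_nonneg (sub_nonneg.2 hWA) (sub_nonneg.2 hOW.le)
end

section
/- Let k ≥ 2, p ≥ k, q ≥ p and R ≥ R* > 0 be integers, let (Ψ,Φ) ∈ Γ(R,R*,q,p,k), and let I be a maximization instance of k CSP-q with n variables and opt(I) ≠ wor(I). For a p-element subset T ⊆ Σ_q write opt(I(T)) := max_{x∈T^n} v(I,x) and wor(I(T)) := min_{x∈T^n} v(I,x). Let ρ ∈ [0,1] and suppose that for each p-element subset T ⊆ Σ_q a solution x(T) ∈ T^n satisfies v(I, x(T)) ≥ ρ·opt(I(T)) + (1−ρ)·wor(I(T)). Then max over p-element subsets T ⊆ Σ_q of v(I,x(T)) ≥ (ρ·R*/R)·opt(I) + (1 − ρ·R*/R)·wor(I); that is, the best of the solutions x(T) is (ρ·R*/R)-differential approximate on I. -/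
/-- `opt(I(T))`: the maximum objective value over solutions with all coordinates in `T`. -/
noncomputable def optOn {q k n : ℕ} (I : CSPInstance q k n) (T : Finset (Fin q)) : ℝ :=
  sSup {x : ℝ | ∃ y : Fin n → Fin q, (∀ j, y j ∈ T) ∧ x = I.value y}

/-- `wor(I(T))`: the minimum objective value over solutions with all coordinates in `T`. -/
noncomputable def worOn {q k n : ℕ} (I : CSPInstance q k n) (T : Finset (Fin q)) : ℝ :=
  sInf {x : ℝ | ∃ y : Fin n → Fin q, (∀ j, y j ∈ T) ∧ x = I.value y}

private lemma arpa_count_sets {q k R : ℕ}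
    (Ψ Φ : Fin R → Fin q → Fin q)
    (h3 : ∀ c : Fin k → Fin q, StrictMono c → ∀ v : Fin k → Fin q,
      (Finset.univ.filter fun r => ∀ s, Ψ r (c s) = v s).card =
        (Finset.univ.filter fun r => ∀ s, Φ r (c s) = v s).card)
    (hkq : k ≤ q) :
    ∀ (d : ℕ) (S : Finset (Fin q)), S.card + d = k → ∀ w : Fin q → Fin q,
      (Finset.univ.filter fun r => ∀ c ∈ S, Ψ r c = w c).card =
        (Finset.univ.filter fun r => ∀ c ∈ S, Φ r c = w c).card := by
  intro d
  induction d with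
  | zero =>
      intro S hS w
      have hSk : S.card = k := by omega
      set σ := S.orderIsoOfFin hSk with hσ
      have hc : StrictMono fun s : Fin k => (σ s : Fin q) :=
        fun a b hab => Subtype.coe_lt_coe.mpr (σ.strictMono hab)
      have key := h3 _ hc (fun s => w (σ s))
      have hiff : ∀ (Ψ' : Fin R → Fin q → Fin q) (r : Fin R),
          (∀ c ∈ S, Ψ' r c = w c) ↔ (∀ s : Fin k, Ψ' r (σ s) = w (σ s)) := by
        intro Ψ' r
        constructor
        · intro h s; exact h _ (σ s).2
        · intro h c hc'
          have := h (σ.symm ⟨c, hc'⟩)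
          simpa using this
      rw [Finset.filter_congr (fun r _ => hiff Ψ r),
        Finset.filter_congr (fun r _ => hiff Φ r)]
      exact key
  | succ d ih =>
      intro S hS w
      have hlt : S.card < q := by omega
      obtain ⟨e, he⟩ : ∃ e : Fin q, e ∉ S := by
        by_contra h
        push_neg at h
        have : S = Finset.univ := Finset.eq_univ_iff_forall.mpr h
        rw [this, Finset.card_univ, Fintype.card_fin] at hlt
        omega
      have key : ∀ Ψ' : Fin R → Fin q → Fin q,
          (Finset.univ.filter fun r => ∀ c ∈ S, Ψ' r c = w c).card =
          ∑ u : Fin q, (Finset.univ.filter fun r =>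
            ∀ c ∈ insert e S, Ψ' r c = Function.update w e u c).card := by
        intro Ψ'
        rw [Finset.card_eq_sum_card_fiberwise
          (f := fun r => Ψ' r e) (t := Finset.univ) (fun _ _ => Finset.mem_univ _)]
        refine Finset.sum_congr rfl fun u _ => ?_
        rw [Finset.filter_filter]
        apply congrArg
        apply Finset.filter_congr
        intro r _
        constructor
        · rintro ⟨h1, h2⟩ c hc
          rcases Finset.mem_insert.mp hc with rfl | hc'
          · rw [Function.update_self]; exact h2
          · rw [Function.update_of_ne (by rintro rfl; exact he hc')]
            exact h1 c hc'
        · intro h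
          refine ⟨fun c hc => ?_, ?_⟩
          · have := h c (Finset.mem_insert_of_mem hc)
            rwa [Function.update_of_ne (by rintro rfl; exact he hc)] at this
          · have := h e (Finset.mem_insert_self e S)
            rwa [Function.update_self] at this
      rw [key Ψ, key Φ]
      refine Finset.sum_congr rfl fun u _ => ?_
      exact ih (insert e S) (by rw [Finset.card_insert_of_notMem he]; omega) _

private lemma arpa_count_tuple {q k R t : ℕ}
    (Ψ Φ : Fin R → Fin q → Fin q)
    (h3 : ∀ c : Fin k → Fin q, StrictMono c → ∀ v : Fin k → Fin q,
      (Finset.univ.filter fun r => ∀ s, Ψ r (c s) = v s).card =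
        (Finset.univ.filter fun r => ∀ s, Φ r (c s) = v s).card)
    (hq : 0 < q) (hkq : k ≤ q) (ht : t ≤ k) (a v : Fin t → Fin q) :
    (Finset.univ.filter fun r => ∀ s, Ψ r (a s) = v s).card =
      (Finset.univ.filter fun r => ∀ s, Φ r (a s) = v s).card := by
  classical
  by_cases hcons : ∀ s1 s2, a s1 = a s2 → v s1 = v s2
  · set w : Fin q → Fin q := fun c => if h : ∃ s, a s = c then v h.choose else ⟨0, hq⟩ with hw
    have hiff : ∀ (Ψ' : Fin R → Fin q → Fin q) (r : Fin R),
        (∀ s, Ψ' r (a s) = v s) ↔ ∀ c ∈ Finset.univ.image a, Ψ' r c = w c := by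
      intro Ψ' r
      have hwval : ∀ s : Fin t, w (a s) = v s := by
        intro s
        have hex : ∃ s', a s' = a s := ⟨s, rfl⟩
        have : w (a s) = v hex.choose := dif_pos hex
        rw [this]
        exact hcons _ _ hex.choose_spec
      constructor
      · intro h c hc
        obtain ⟨s, -, rfl⟩ := Finset.mem_image.mp hc
        rw [hwval s]; exact h s
      · intro h s
        have := h (a s) (Finset.mem_image_of_mem a (Finset.mem_univ s))
        rwa [hwval s] at this
    have hcard : (Finset.univ.image a).card ≤ k := by
      calc (Finset.univ.image a).card ≤ (Finset.univ : Finset (Fin t)).card :=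
            Finset.card_image_le
        _ = t := by rw [Finset.card_univ, Fintype.card_fin]
        _ ≤ k := ht
    rw [Finset.filter_congr (fun r _ => hiff Ψ r),
      Finset.filter_congr (fun r _ => hiff Φ r)]
    exact arpa_count_sets Ψ Φ h3 hkq (k - (Finset.univ.image a).card) _ (by omega) w
  · push_neg at hcons
    obtain ⟨s1, s2, heq, hne⟩ := hcons
    have hemp : ∀ Ψ' : Fin R → Fin q → Fin q,
        (Finset.univ.filter fun r => ∀ s, Ψ' r (a s) = v s) = ∅ := by
      intro Ψ'
      rw [Finset.filter_eq_empty_iff]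
      intro r _ h
      exact hne (by rw [← h s1, heq, h s2])
    rw [hemp Ψ, hemp Φ]

private lemma sum_fiber_real {α β : Type*} [Fintype α] [Fintype β] [DecidableEq β]
    (F : α → β) (g : β → ℝ) :
    ∑ r, g (F r) = ∑ v, ((Finset.univ.filter fun r => F r = v).card : ℝ) * g v := by
  rw [← Finset.sum_fiberwise Finset.univ F (fun r => g (F r))]
  refine Finset.sum_congr rfl fun v _ => ?_
  rw [Finset.sum_congr rfl (fun r hr => by rw [(Finset.mem_filter.mp hr).2]),
    Finset.sum_const, nsmul_eq_mul]

private lemma sum_value_comp_eq {q k n R : ℕ}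
    (Ψ Φ : Fin R → Fin q → Fin q)
    (h3 : ∀ c : Fin k → Fin q, StrictMono c → ∀ v : Fin k → Fin q,
      (Finset.univ.filter fun r => ∀ s, Ψ r (c s) = v s).card =
        (Finset.univ.filter fun r => ∀ s, Φ r (c s) = v s).card)
    (hq : 0 < q) (hkq : k ≤ q) (I : CSPInstance q k n) (x : Fin n → Fin q) :
    ∑ r : Fin R, I.value (fun j => Ψ r (x j)) =
      ∑ r : Fin R, I.value (fun j => Φ r (x j)) := by
  classical
  simp only [CSPInstance.value]
  have swap : ∀ Ψ' : Fin R → Fin q → Fin q,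
      ∑ r : Fin R, ∑ i : Fin I.m, I.w i * I.P i (fun s => Ψ' r (x (I.idx i s))) =
      ∑ i : Fin I.m, ∑ r : Fin R, I.w i * I.P i (fun s => Ψ' r (x (I.idx i s))) :=
    fun Ψ' => Finset.sum_comm
  rw [swap Ψ, swap Φ]
  refine Finset.sum_congr rfl fun i _ => ?_
  rw [← Finset.mul_sum, ← Finset.mul_sum]
  congr 1
  rw [sum_fiber_real (fun r => fun s => Ψ r (x (I.idx i s))) (I.P i),
    sum_fiber_real (fun r => fun s => Φ r (x (I.idx i s))) (I.P i)]
  refine Finset.sum_congr rfl fun v _ => ?_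
  congr 2
  rw [Finset.filter_congr (fun r _ => funext_iff),
    Finset.filter_congr (fun r _ => funext_iff)]
  exact arpa_count_tuple Ψ Φ h3 hq hkq (I.arity_le i) (fun s => x (I.idx i s)) v

/-- Let `k ≥ 2`, `p ≥ k`, `q ≥ p`, `R ≥ R* > 0`, let
`(Ψ,Φ) ∈ Γ(R,R*,q,p,k)`, and let `I` be a maximization instance of `k CSP-q` with
`opt(I) ≠ wor(I)`. Suppose `ρ ∈ [0,1]` and for each `p`-element subset `T ⊆ Σ_q` a
solution `x(T) ∈ T^n` satisfies `v(I,x(T)) ≥ ρ·opt(I(T)) + (1−ρ)·wor(I(T))`. Then the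
best of the solutions `x(T)` is `(ρ·R*/R)`-differential approximate on `I`. -/
theorem best_subalphabet_solution_diff_apx
    (q p k n R Rstar : ℕ) (hk : 2 ≤ k) (hpk : k ≤ p) (hqp : p ≤ q)
    (hRs : 0 < Rstar) (hR : Rstar ≤ R)
    (Ψ Φ : Fin R → Fin q → Fin q) (hARPA : IsARPA q p k R Ψ Φ)
    (hcount : (Finset.univ.filter fun r => ∀ j : Fin q, Φ r j = j).card = Rstar)
    (I : CSPInstance q k n) (hne : I.opt ≠ I.wor)
    (ρ : ℝ) (hρ0 : 0 ≤ ρ) (hρ1 : ρ ≤ 1)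
    (xT : Finset (Fin q) → (Fin n → Fin q))
    (hmem : ∀ T : Finset (Fin q), T.card = p → ∀ j, xT T j ∈ T)
    (happx : ∀ T : Finset (Fin q), T.card = p →
      ρ * optOn I T + (1 - ρ) * worOn I T ≤ I.value (xT T)) :
    ∃ T : Finset (Fin q), T.card = p ∧
      ρ * ((Rstar : ℝ) / R) * I.opt + (1 - ρ * ((Rstar : ℝ) / R)) * I.wor ≤
        I.value (xT T) := by
  classical
  have hq : 0 < q := by omega
  have hkq : k ≤ q := le_trans hpk hqp
  have hRpos : 0 < R := lt_of_lt_of_le hRs hR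
  haveI : Nonempty (Fin q) := ⟨⟨0, hq⟩⟩
  have hfin : (Set.range I.value).Finite := Set.finite_range _
  have hrne : (Set.range I.value).Nonempty := Set.range_nonempty _
  obtain ⟨xstar, hxstar⟩ : ∃ x, I.value x = I.opt := hrne.csSup_mem hfin
  have hle_opt : ∀ x, I.value x ≤ I.opt := fun x => le_csSup hfin.bddAbove ⟨x, rfl⟩
  have hwor_le : ∀ x, I.wor ≤ I.value x := fun x => csInf_le hfin.bddBelow ⟨x, rfl⟩
  have hext : ∀ r : Fin R, ∃ T : Finset (Fin q),
      (Finset.univ.image (Ψ r)) ⊆ T ∧ T.card = p := by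
    intro r
    exact Finset.exists_superset_card_eq (hARPA.2.1 r) (by simpa using hqp)
  choose T hT1 hT2 using hext
  have hAfin : ∀ Tset : Finset (Fin q),
      {x : ℝ | ∃ y : Fin n → Fin q, (∀ j, y j ∈ Tset) ∧ x = I.value y}.Finite := fun Tset =>
    hfin.subset (by rintro x ⟨y, -, rfl⟩; exact ⟨y, rfl⟩)
  have hAne : ∀ r : Fin R,
      {x : ℝ | ∃ y : Fin n → Fin q, (∀ j, y j ∈ T r) ∧ x = I.value y}.Nonempty := by
    intro r
    obtain ⟨t0, ht0⟩ := Finset.card_pos.mp (show 0 < (T r).card by rw [hT2 r]; omega)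
    exact ⟨I.value fun _ => t0, fun _ => t0, fun _ => ht0, rfl⟩
  have h1 : ∀ r : Fin R, I.value (fun j => Ψ r (xstar j)) ≤ optOn I (T r) := by
    intro r
    exact le_csSup ((hAfin (T r)).bddAbove)
      ⟨fun j => Ψ r (xstar j),
        fun j => hT1 r (Finset.mem_image_of_mem _ (Finset.mem_univ _)), rfl⟩
  have h2 : ∀ r : Fin R, I.wor ≤ worOn I (T r) := by
    intro r
    obtain ⟨y, -, hy⟩ := (hAne r).csInf_mem (hAfin (T r))
    have : worOn I (T r) = I.value y := hy
    rw [this]; exact hwor_le y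
  have h3' : ∀ r : Fin R, ρ * I.value (fun j => Ψ r (xstar j)) + (1 - ρ) * I.wor
      ≤ I.value (xT (T r)) := by
    intro r
    have hap := happx (T r) (hT2 r)
    have hA := mul_le_mul_of_nonneg_left (h1 r) hρ0
    have hB := mul_le_mul_of_nonneg_left (h2 r) (by linarith : (0:ℝ) ≤ 1 - ρ)
    linarith
  have hsum : ρ * (∑ r : Fin R, I.value (fun j => Ψ r (xstar j))) + R * ((1 - ρ) * I.wor)
      ≤ ∑ r : Fin R, I.value (xT (T r)) := by
    calc ρ * (∑ r : Fin R, I.value (fun j => Ψ r (xstar j))) + R * ((1 - ρ) * I.wor)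
        = ∑ r : Fin R, (ρ * I.value (fun j => Ψ r (xstar j)) + (1 - ρ) * I.wor) := by
          rw [Finset.sum_add_distrib, ← Finset.mul_sum, Finset.sum_const,
            Finset.card_univ, Fintype.card_fin, nsmul_eq_mul]
      _ ≤ ∑ r : Fin R, I.value (xT (T r)) := Finset.sum_le_sum fun r _ => h3' r
  have e1 : ∀ r ∈ Finset.univ.filter (fun r => ∀ j : Fin q, Φ r j = j),
      I.value (fun j => Φ r (xstar j)) = I.opt := by
    intro r hr
    rw [← hxstar]
    congr 1
    funext j
    exact (Finset.mem_filter.mp hr).2 (xstar j)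
  have e2 : ∑ r ∈ Finset.univ.filter (fun r => ∀ j : Fin q, Φ r j = j),
      I.value (fun j => Φ r (xstar j)) = (Rstar : ℝ) * I.opt := by
    rw [Finset.sum_congr rfl e1, Finset.sum_const, hcount, nsmul_eq_mul]
  have hcard : (Finset.univ.filter (fun r : Fin R => ¬ ∀ j : Fin q, Φ r j = j)).card
      = R - Rstar := by
    have := Finset.card_filter_add_card_filter_not
      (s := (Finset.univ : Finset (Fin R))) (p := fun r => ∀ j : Fin q, Φ r j = j)
    rw [hcount, Finset.card_univ, Fintype.card_fin] at this
    omega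
  have e3 : ((R : ℝ) - Rstar) * I.wor ≤
      ∑ r ∈ Finset.univ.filter (fun r : Fin R => ¬ ∀ j : Fin q, Φ r j = j),
        I.value (fun j => Φ r (xstar j)) := by
    calc ((R : ℝ) - Rstar) * I.wor = ((R - Rstar : ℕ) : ℝ) * I.wor := by
          rw [Nat.cast_sub hR]
      _ = ∑ _r ∈ Finset.univ.filter (fun r : Fin R => ¬ ∀ j : Fin q, Φ r j = j),
            I.wor := by rw [Finset.sum_const, hcard, nsmul_eq_mul]
      _ ≤ _ := Finset.sum_le_sum fun r _ => hwor_le _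
  have hsplit := Finset.sum_filter_add_sum_filter_not Finset.univ
    (fun r : Fin R => ∀ j : Fin q, Φ r j = j) (fun r => I.value (fun j => Φ r (xstar j)))
  have hPhi : (Rstar : ℝ) * I.opt + ((R : ℝ) - Rstar) * I.wor
      ≤ ∑ r : Fin R, I.value (fun j => Φ r (xstar j)) := by linarith
  have hswap := sum_value_comp_eq Ψ Φ hARPA.2.2 hq hkq I xstar
  obtain ⟨r0, -, hr0⟩ := Finset.exists_max_image (Finset.univ : Finset (Fin R))
    (fun r => I.value (xT (T r))) ⟨⟨0, hRpos⟩, Finset.mem_univ _⟩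
  refine ⟨T r0, hT2 r0, ?_⟩
  have hsum_le : (∑ r : Fin R, I.value (xT (T r))) ≤ R * I.value (xT (T r0)) := by
    calc ∑ r : Fin R, I.value (xT (T r)) ≤ ∑ _r : Fin R, I.value (xT (T r0)) :=
          Finset.sum_le_sum fun r _ => hr0 r (Finset.mem_univ r)
      _ = R * I.value (xT (T r0)) := by
          rw [Finset.sum_const, Finset.card_univ, Fintype.card_fin, nsmul_eq_mul]
  have hRr : (0 : ℝ) < R := by exact_mod_cast hRpos
  have h4 := mul_le_mul_of_nonneg_left hPhi hρ0
  rw [← hswap] at h4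
  have key : ρ * Rstar * I.opt + ((R : ℝ) - ρ * Rstar) * I.wor
      ≤ R * I.value (xT (T r0)) := by nlinarith [hsum, hsum_le, h4]
  have heq : ρ * ((Rstar : ℝ) / R) * I.opt + (1 - ρ * ((Rstar : ℝ) / R)) * I.wor
      = (ρ * Rstar * I.opt + ((R : ℝ) - ρ * Rstar) * I.wor) / R := by
    field_simp
  rw [heq, div_le_iff₀ hRr]
  linarith
end

section
/- Let k ≥ 2, p ≥ k and q ≥ p be integers and let I be a maximization instance of k CSP-q with n variables and opt(I) ≠ wor(I) in which every constraint function belongs to E_q. Then max{v(I,x) : x ∈ Σ_q^n whose coordinates take at most p pairwise distinct values} ≥ γ_E(q,p,k)·opt(I) + (1 − γ_E(q,p,k))·wor(I); that is, the best solutions among those whose coordinates take at most p distinct values are γ_E(q,p,k)-differential approximate on I. -/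
/-- A function `P : Σ_q^κ → ℝ` belongs to the family `E_q` if it is invariant under a
uniform shift of all its inputs (addition is componentwise mod `q`). -/
def MemE (q : ℕ) {κ : ℕ} (P : (Fin κ → Fin q) → ℝ) : Prop :=
  ∀ (y : Fin κ → Fin q) (a : Fin q), P (fun s => y s + a) = P y

/-- `(Ψ, Φ)` is a relaxed `(q,p)`-alphabet reduction pair of arrays of strength `k`:
both arrays have `R` rows, `q` columns indexed by `Σ_q` and entries in `Σ_q`;
`Φ` contains at least one row of the form `(a, 1+a, ..., q−1+a)` (mod `q`) for some
`a ∈ Σ_q`; every row of `Ψ` takes at most `p` pairwise distinct values; and for every `k`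
pairwise distinct columns and every `v ∈ Σ_q^k`, `Ψ` and `Φ` have the same number of rows
whose restriction to these columns lies in `{v + a·𝟏 : a ∈ Σ_q}`. -/
def IsRelaxedARPA (q p k R : ℕ) (Ψ Φ : Fin R → Fin q → Fin q) : Prop :=
  (∃ r, ∃ a : Fin q, ∀ j : Fin q, Φ r j = j + a) ∧
  (∀ r, (Finset.univ.image (Ψ r)).card ≤ p) ∧
  (∀ c : Fin k → Fin q, StrictMono c → ∀ v : Fin k → Fin q,
    (Finset.univ.filter fun r => ∃ a : Fin q, ∀ s, Ψ r (c s) = v s + a).card =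
      (Finset.univ.filter fun r => ∃ a : Fin q, ∀ s, Φ r (c s) = v s + a).card)

/-- `Γ_E(R, R*, q, p, k)` is nonempty: there is a relaxed `(q,p)`-ARPA of strength `k`
with `R` rows in which rows of the form `(a, 1+a, ..., q−1+a)`, `a ∈ Σ_q`, occur `R*`
times in total in `Φ`. -/
def GammaENonempty (R Rstar q p k : ℕ) : Prop :=
  ∃ Ψ Φ : Fin R → Fin q → Fin q, IsRelaxedARPA q p k R Ψ Φ ∧
    (Finset.univ.filter fun r => ∃ a : Fin q, ∀ j : Fin q, Φ r j = j + a).card = Rstar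

/-- `γ_E(q,p,k)`: the supremum of `R*/R` over all integers `R ≥ R* > 0` such that
`Γ_E(R, R*, q, p, k)` is nonempty. -/
noncomputable def gammaE (q p k : ℕ) : ℝ :=
  sSup {x : ℝ | ∃ R Rstar : ℕ, 0 < Rstar ∧ Rstar ≤ R ∧ GammaENonempty R Rstar q p k ∧
    x = (Rstar : ℝ) / R}

open Finset in
lemma sumA {q k : ℕ} [NeZero q] (hk : 0 < k) (f : (Fin k → Fin q) → ℝ) (hf : MemE q f)
    (w : Fin k → Fin q) :
    ∑ v : Fin k → Fin q, (if ∃ a : Fin q, ∀ s, w s = v s + a then f v else 0)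
      = (q : ℝ) * f w := by
  classical
  rw [← Finset.sum_filter]
  have himg : Finset.univ.filter (fun v : Fin k → Fin q => ∃ a : Fin q, ∀ s, w s = v s + a)
      = Finset.univ.image (fun a : Fin q => fun s => w s - a) := by
    ext v
    simp only [mem_filter, mem_univ, true_and, mem_image]
    constructor
    · rintro ⟨a, ha⟩
      exact ⟨a, funext fun s => (eq_sub_iff_add_eq.mpr (ha s).symm).symm⟩
    · rintro ⟨a, rfl⟩
      exact ⟨a, fun s => by simp⟩
  rw [himg, Finset.sum_image (by
    intro a _ b _ h
    have := congrFun h ⟨0, hk⟩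
    simpa using sub_right_injective this)]
  have hconst : ∀ a : Fin q, f (fun s => w s - a) = f w := by
    intro a
    have h1 := hf (fun s => w s - a) a
    rw [show (fun s => (fun s => w s - a) s + a) = w from funext fun s => by simp] at h1
    exact h1.symm
  rw [Finset.sum_congr rfl fun a _ => hconst a, Finset.sum_const, Finset.card_univ,
    Fintype.card_fin, nsmul_eq_mul]

lemma sumB {q k R : ℕ} [NeZero q] (hk : 0 < k) (A A' : Fin R → Fin q → Fin q)
    (c : Fin k → Fin q)
    (hcount : ∀ v : Fin k → Fin q,
      (Finset.univ.filter fun r => ∃ a : Fin q, ∀ s, A r (c s) = v s + a).card =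
      (Finset.univ.filter fun r => ∃ a : Fin q, ∀ s, A' r (c s) = v s + a).card)
    (f : (Fin k → Fin q) → ℝ) (hf : MemE q f) :
    ∑ r, f (fun s => A r (c s)) = ∑ r, f (fun s => A' r (c s)) := by
  classical
  have key : ∀ B : Fin R → Fin q → Fin q,
      (q : ℝ) * ∑ r, f (fun s => B r (c s)) =
        ∑ v : Fin k → Fin q,
          ((Finset.univ.filter fun r => ∃ a : Fin q, ∀ s, B r (c s) = v s + a).card : ℝ) * f v := by
    intro B
    rw [Finset.mul_sum]
    have h1 : ∀ r : Fin R, (q : ℝ) * f (fun s => B r (c s)) =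
        ∑ v : Fin k → Fin q, (if ∃ a : Fin q, ∀ s, B r (c s) = v s + a then f v else 0) :=
      fun r => (sumA hk f hf _).symm
    rw [Finset.sum_congr rfl fun r _ => h1 r, Finset.sum_comm]
    refine Finset.sum_congr rfl fun v _ => ?_
    rw [← Finset.sum_filter, Finset.sum_const, nsmul_eq_mul]
  have hq : (q : ℝ) ≠ 0 := Nat.cast_ne_zero.mpr (NeZero.ne q)
  apply mul_left_cancel₀ hq
  rw [key A, key A']
  exact Finset.sum_congr rfl fun v _ => by rw [hcount v]

lemma sumC {q k R κ : ℕ} [NeZero q] (hk : 0 < k) (hkq : k ≤ q) (hκ : κ ≤ k)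
    (Ψ Φ : Fin R → Fin q → Fin q)
    (hcount : ∀ c : Fin k → Fin q, StrictMono c → ∀ v : Fin k → Fin q,
      (Finset.univ.filter fun r => ∃ a : Fin q, ∀ s, Ψ r (c s) = v s + a).card =
        (Finset.univ.filter fun r => ∃ a : Fin q, ∀ s, Φ r (c s) = v s + a).card)
    (P : (Fin κ → Fin q) → ℝ) (hP : MemE q P) (u : Fin κ → Fin q) :
    ∑ r, P (fun s => Ψ r (u s)) = ∑ r, P (fun s => Φ r (u s)) := by
  classical
  obtain ⟨T, hsub, -, hcard⟩ := Finset.exists_subsuperset_card_eq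
    (Finset.subset_univ (Finset.univ.image u))
    (le_trans Finset.card_image_le (by simpa using hκ))
    (by simpa using hkq)
  set c : Fin k → Fin q := ⇑(T.orderEmbOfFin hcard) with hc
  have hcmono : StrictMono c := (T.orderEmbOfFin hcard).strictMono
  have hgex : ∀ s : Fin κ, ∃ j : Fin k, c j = u s := by
    intro s
    have : u s ∈ Set.range (T.orderEmbOfFin hcard) := by
      rw [Finset.range_orderEmbOfFin]
      exact_mod_cast hsub (Finset.mem_image_of_mem u (Finset.mem_univ s))
    exact this
  choose g hg using hgex
  have hf : MemE q (fun z : Fin k → Fin q => P (fun s => z (g s))) := by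
    intro y a
    exact hP (fun s => y (g s)) a
  have hB := sumB hk Ψ Φ c (hcount c hcmono) _ hf
  have e1 : ∀ (B : Fin R → Fin q → Fin q) (r : Fin R),
      P (fun s => B r (u s)) = P (fun s => B r (c (g s))) := by
    intro B r
    congr 1
    funext s
    rw [hg s]
  calc ∑ r, P (fun s => Ψ r (u s)) = ∑ r, P (fun s => Ψ r (c (g s))) :=
        Finset.sum_congr rfl fun r _ => e1 Ψ r
    _ = ∑ r, P (fun s => Φ r (c (g s))) := hB
    _ = ∑ r, P (fun s => Φ r (u s)) := (Finset.sum_congr rfl fun r _ => e1 Φ r).symm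

lemma sumD {q k n R : ℕ} [NeZero q] (hk : 0 < k) (hkq : k ≤ q)
    (I : CSPInstance q k n) (hEq : ∀ i, MemE q (I.P i))
    (Ψ Φ : Fin R → Fin q → Fin q)
    (hcount : ∀ c : Fin k → Fin q, StrictMono c → ∀ v : Fin k → Fin q,
      (Finset.univ.filter fun r => ∃ a : Fin q, ∀ s, Ψ r (c s) = v s + a).card =
        (Finset.univ.filter fun r => ∃ a : Fin q, ∀ s, Φ r (c s) = v s + a).card)
    (x : Fin n → Fin q) :
    ∑ r, I.value (fun v => Ψ r (x v)) = ∑ r, I.value (fun v => Φ r (x v)) := by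
  unfold CSPInstance.value
  calc ∑ r : Fin R, ∑ i : Fin I.m, I.w i * I.P i (fun s => Ψ r (x (I.idx i s)))
      = ∑ i : Fin I.m, ∑ r : Fin R, I.w i * I.P i (fun s => Ψ r (x (I.idx i s))) :=
        Finset.sum_comm
    _ = ∑ i : Fin I.m, ∑ r : Fin R, I.w i * I.P i (fun s => Φ r (x (I.idx i s))) := by
        refine Finset.sum_congr rfl fun i _ => ?_
        rw [← Finset.mul_sum, ← Finset.mul_sum,
          sumC hk hkq (I.arity_le i) Ψ Φ hcount (I.P i) (hEq i) (fun s => x (I.idx i s))]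
    _ = ∑ r : Fin R, ∑ i : Fin I.m, I.w i * I.P i (fun s => Φ r (x (I.idx i s))) :=
        Finset.sum_comm

lemma valueE {q k n : ℕ} (I : CSPInstance q k n) (hEq : ∀ i, MemE q (I.P i))
    (x : Fin n → Fin q) (a : Fin q) :
    I.value (fun v => x v + a) = I.value x := by
  unfold CSPInstance.value
  exact Finset.sum_congr rfl fun i _ =>
    congrArg (fun t => I.w i * t) (hEq i (fun s => x (I.idx i s)) a)

/-- Let `k ≥ 2`, `p ≥ k`, `q ≥ p`, and let `I` be a maximization
instance of `k CSP-q` with `opt(I) ≠ wor(I)` whose constraint functions all belong to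
`E_q`. Then the best objective value over solutions whose coordinates take at most `p`
pairwise distinct values is at least `γ_E(q,p,k)·opt(I) + (1 − γ_E(q,p,k))·wor(I)`. -/
theorem best_few_values_solution_diff_apx_Eq
    (q p k n : ℕ) (hk : 2 ≤ k) (hpk : k ≤ p) (hqp : p ≤ q)
    (I : CSPInstance q k n) (hne : I.opt ≠ I.wor)
    (hEq : ∀ i : Fin I.m, MemE q (I.P i)) :
    gammaE q p k * I.opt + (1 - gammaE q p k) * I.wor ≤
      sSup {x : ℝ | ∃ y : Fin n → Fin q,
        (Finset.univ.image y).card ≤ p ∧ x = I.value y} := by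
  classical
  haveI : NeZero q := ⟨by omega⟩
  set T : Set ℝ := {x : ℝ | ∃ y : Fin n → Fin q,
      (Finset.univ.image y).card ≤ p ∧ x = I.value y} with hT
  set B := sSup T with hB
  have hfin : (Set.range I.value).Finite := Set.finite_range _
  have hrne : (Set.range I.value).Nonempty := ⟨I.value (fun _ => 0), fun _ => 0, rfl⟩
  obtain ⟨xstar, hxstar⟩ : I.opt ∈ Set.range I.value := hrne.csSup_mem hfin
  have hwor_le : ∀ x, I.wor ≤ I.value x := fun x => csInf_le hfin.bddBelow ⟨x, rfl⟩
  have hle_opt : ∀ x, I.value x ≤ I.opt := fun x => le_csSup hfin.bddAbove ⟨x, rfl⟩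
  have hwo : I.wor < I.opt :=
    lt_of_le_of_ne ((hwor_le xstar).trans_eq hxstar) hne.symm
  have hTsub : T ⊆ Set.range I.value := by
    rintro x ⟨y, -, rfl⟩; exact ⟨y, rfl⟩
  have hTbdd : BddAbove T := hfin.bddAbove.mono hTsub
  have hB_mem : ∀ y : Fin n → Fin q, (Finset.univ.image y).card ≤ p → I.value y ≤ B :=
    fun y h => le_csSup hTbdd ⟨y, h, rfl⟩
  have hy0 : (Finset.univ.image (fun _ : Fin n => (0 : Fin q))).card ≤ p := by
    have hsub0 : (Finset.univ.image (fun _ : Fin n => (0 : Fin q))) ⊆ {0} := by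
      intro b hb
      simp only [Finset.mem_image] at hb
      obtain ⟨v, -, hv⟩ := hb
      simp [← hv]
    exact le_trans (Finset.card_le_card hsub0) (by simpa using by omega : 1 ≤ p)
  have hworB : I.wor ≤ B := (hwor_le _).trans (hB_mem _ hy0)
  have hkey : gammaE q p k ≤ (B - I.wor) / (I.opt - I.wor) := by
    apply Real.sSup_le
    · rintro x ⟨R, Rstar, hR0, hRle, ⟨Ψ, Φ, ⟨⟨r0, hid0⟩, hpdist, hcount⟩, hcardeq⟩, rfl⟩
      have hRpos : 0 < R := lt_of_lt_of_le hR0 hRle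
      -- the sum over rows of Φ-values is at least Rstar * opt + (R - Rstar) * wor
      set F : Finset (Fin R) :=
        Finset.univ.filter (fun r => ∃ a : Fin q, ∀ j : Fin q, Φ r j = j + a) with hF
      have hFval : ∀ r ∈ F, I.value (fun v => Φ r (xstar v)) = I.opt := by
        intro r hr
        obtain ⟨a, ha⟩ := (Finset.mem_filter.mp hr).2
        have : (fun v => Φ r (xstar v)) = fun v => xstar v + a := by
          funext v; rw [ha]
        rw [this, valueE I hEq xstar a, hxstar]
      have hsplit := Finset.sum_filter_add_sum_filter_not Finset.univ
        (fun r => ∃ a : Fin q, ∀ j : Fin q, Φ r j = j + a)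
        (fun r => I.value (fun v => Φ r (xstar v)))
      have hcardF : F.card = Rstar := hcardeq
      have hcardFc : (Finset.univ.filter
          (fun r => ¬ ∃ a : Fin q, ∀ j : Fin q, Φ r j = j + a)).card = R - Rstar := by
        have h2 := Finset.card_filter_add_card_filter_not
          (s := (Finset.univ : Finset (Fin R)))
          (p := fun r => ∃ a : Fin q, ∀ j : Fin q, Φ r j = j + a)
        simp only [Finset.card_univ, Fintype.card_fin] at h2
        have h3 : (Finset.univ.filter
            (fun r => ∃ a : Fin q, ∀ j : Fin q, Φ r j = j + a)).card = Rstar := hcardeq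
        omega
      have hsum1 : ∑ r ∈ F, I.value (fun v => Φ r (xstar v)) = (Rstar : ℝ) * I.opt := by
        rw [Finset.sum_congr rfl hFval, Finset.sum_const, hcardF, nsmul_eq_mul]
      have hsum2 : ((R : ℝ) - Rstar) * I.wor ≤
          ∑ r ∈ Finset.univ.filter
            (fun r => ¬ ∃ a : Fin q, ∀ j : Fin q, Φ r j = j + a),
            I.value (fun v => Φ r (xstar v)) := by
        have := Finset.card_nsmul_le_sum
          (Finset.univ.filter (fun r => ¬ ∃ a : Fin q, ∀ j : Fin q, Φ r j = j + a))
          (fun r => I.value (fun v => Φ r (xstar v))) I.wor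
          (fun r _ => hwor_le _)
        rw [hcardFc, nsmul_eq_mul] at this
        rw [Nat.cast_sub hRle] at this
        exact this
      have hPhi : (Rstar : ℝ) * I.opt + ((R : ℝ) - Rstar) * I.wor ≤
          ∑ r : Fin R, I.value (fun v => Φ r (xstar v)) := by
        rw [← hsplit, hsum1]
        exact add_le_add_right hsum2 _
      have hPsi : ∑ r : Fin R, I.value (fun v => Ψ r (xstar v)) =
          ∑ r : Fin R, I.value (fun v => Φ r (xstar v)) :=
        sumD (by omega) (by omega) I hEq Ψ Φ hcount xstar
      have hub : ∑ r : Fin R, I.value (fun v => Ψ r (xstar v)) ≤ (R : ℝ) * B := by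
        have : ∀ r : Fin R, I.value (fun v => Ψ r (xstar v)) ≤ B := by
          intro r
          apply hB_mem
          refine le_trans (Finset.card_le_card (fun b hb => ?_)) (hpdist r)
          simp only [Finset.mem_image] at hb ⊢
          obtain ⟨v, -, hv⟩ := hb
          exact ⟨xstar v, Finset.mem_univ _, hv⟩
        calc ∑ r : Fin R, I.value (fun v => Ψ r (xstar v)) ≤ ∑ _r : Fin R, B :=
              Finset.sum_le_sum fun r _ => this r
          _ = (R : ℝ) * B := by
              rw [Finset.sum_const, Finset.card_univ, Fintype.card_fin, nsmul_eq_mul]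
      have hmain : (Rstar : ℝ) * I.opt + ((R : ℝ) - Rstar) * I.wor ≤ (R : ℝ) * B :=
        hPhi.trans (hPsi ▸ hub)
      rw [div_le_div_iff₀ (by exact_mod_cast hRpos) (by linarith)]
      nlinarith [hmain]
    · apply div_nonneg <;> linarith
  have hpos : (0 : ℝ) < I.opt - I.wor := by linarith
  have := mul_le_mul_of_nonneg_right hkey hpos.le
  rw [div_mul_cancel₀ _ hpos.ne'] at this
  linarith
end

section
/- Let q ≥ 2 and k ≥ 2 be integers and let I be a maximization instance of k CSP-q with n variables and opt(I) ≠ wor(I) in which every constraint has arity exactly k and every constraint function is balanced (k−1)-wise independent. Then: (1) for every x ∈ Σ_q^n, Σ over all y ∈ Σ_q^n with d_H(x,y) = 1 of v(I,y) equals q·k·E[v(I,X)] + ((q−1)·n − q·k)·v(I,x); (2) every x ∈ Σ_q^n satisfying v(I,x) ≥ v(I,y) for all y ∈ B^1(x) (a local optimum with respect to B^1) satisfies v(I,x) ≥ E[v(I,X)], so its differential ratio is at least the average differential ratio of I; (3) if moreover (q−1)·n ≥ q·k, then for every x ∈ Σ_q^n, max_{y∈B^1(x)} v(I,y) ≥ (qk/((q−1)n))·E[v(I,X)]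 + (1 − qk/((q−1)n))·wor(I), so the best differential ratio over B^1(x) is at least qk/((q−1)n) times the average differential ratio of I. -/
/-- A function `P : Σ_q^κ → ℝ` is balanced `t`-wise independent: for every `t` indices
`j 0 < ... < j (t-1)` and every `v ∈ Σ_q^t`, the average of `P` over the slice
`{y : y ∘ j = v}` equals the average of `P` over `Σ_q^κ` (stated in a fraction-free way:
the slice has `q^(κ-t)` elements and the full cube has `q^κ` elements). -/
def BalancedTwise (q t : ℕ) {κ : ℕ} (P : (Fin κ → Fin q) → ℝ) : Prop :=
  ∀ j : Fin t → Fin κ, StrictMono j → ∀ v : Fin t → Fin q,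
    (∑ y ∈ Finset.univ.filter (fun y : Fin κ → Fin q => ∀ s, y (j s) = v s), P y) * (q : ℝ) ^ t
      = ∑ y : Fin κ → Fin q, P y

open Finset Function

lemma slice_sum {q t : ℕ} (P : (Fin (t+1) → Fin q) → ℝ) (hbal : BalancedTwise q t P)
    (z : Fin (t+1) → Fin q) (s : Fin (t+1)) :
    (∑ a : Fin q, P (Function.update z s a)) * (q:ℝ)^t = ∑ y, P y := by
  have h := hbal s.succAbove (Fin.strictMono_succAbove s) (fun r => z (s.succAbove r))
  rw [← h]
  congr 1
  refine Finset.sum_nbij' (fun a => Function.update z s a) (fun y => y s) ?_ ?_ ?_ ?_ ?_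
  · intro a _
    simp only [mem_filter, mem_univ, true_and]
    intro r
    exact Function.update_of_ne (Fin.succAbove_ne s r) _ _
  · intro y _; exact mem_univ _
  · intro a _; simp
  · intro y hy
    simp only [mem_filter, mem_univ, true_and] at hy
    show Function.update z s (y s) = y
    funext j
    rcases eq_or_ne j s with rfl | hj
    · simp
    · obtain ⟨r, hr⟩ := Fin.exists_succAbove_eq hj
      rw [Function.update_of_ne hj, ← hr, hy r]
  · intro a _; rfl

lemma fiber_card {q n κ : ℕ} (e : Fin κ → Fin n) (he : Function.Injective e)
    (z : Fin κ → Fin q) :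
    (Finset.univ.filter fun x : Fin n → Fin q => (fun s => x (e s)) = z).card = q ^ (n - κ) := by
  classical
  have hcard : Fintype.card {j : Fin n // j ∉ Set.range e} = n - κ := by
    rw [Fintype.card_subtype]
    have himg : (Finset.univ.filter fun j : Fin n => j ∈ Set.range e) = Finset.univ.image e := by
      ext j; simp [Set.mem_range, eq_comm]
    have hsplit := Finset.card_filter_add_card_filter_not
      (s := (Finset.univ : Finset (Fin n))) (p := fun j => j ∈ Set.range e)
    rw [himg, Finset.card_image_of_injective _ he] at hsplit
    simp only [Finset.card_univ, Fintype.card_fin] at hsplit ⊢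
    omega
  have key : (Finset.univ.filter fun x : Fin n → Fin q => (fun s => x (e s)) = z).card
      = Fintype.card ({j : Fin n // j ∉ Set.range e} → Fin q) := by
    rw [← Finset.card_univ]
    refine Finset.card_nbij' (fun x => fun j => x j.1)
      (fun u => fun j => if h : ∃ s, e s = j then z h.choose else u ⟨j, fun hc => h hc⟩)
      ?_ ?_ ?_ ?_
    · intro x _; exact mem_univ _
    · intro u _
      simp only [mem_coe, mem_filter, mem_univ, true_and]
      funext s
      have h : ∃ s', e s' = e s := ⟨s, rfl⟩
      rw [dif_pos h]
      have := h.choose_spec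
      rw [he this]
    · intro x hx
      simp only [mem_coe, mem_filter, mem_univ, true_and] at hx
      funext j
      show (if h : ∃ s, e s = j then z h.choose else x j) = x j
      by_cases h : ∃ s, e s = j
      · rw [dif_pos h]
        have hs := h.choose_spec
        calc z h.choose = x (e h.choose) := (congrFun hx h.choose).symm
          _ = x j := by rw [hs]
      · rw [dif_neg h]
    · intro u _
      funext jj
      show (if h : ∃ s, e s = jj.1 then z h.choose else u ⟨jj.1, fun hc => h hc⟩) = u jj
      rw [dif_neg (show ¬∃ s, e s = jj.1 from fun hc => jj.2 hc)]
  rw [key, Fintype.card_fun, hcard, Fintype.card_fin]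

lemma sum_comp_inj {q n κ : ℕ} (hq : 1 ≤ q) (e : Fin κ → Fin n) (he : Function.Injective e)
    (P : (Fin κ → Fin q) → ℝ) :
    ∑ x : Fin n → Fin q, P (fun s => x (e s)) = (q : ℝ) ^ (n - κ) * ∑ z, P z := by
  classical
  rw [Finset.sum_comp P (fun x : Fin n → Fin q => fun s => x (e s))]
  have himg : (Finset.univ.image fun x : Fin n → Fin q => fun s => x (e s))
      = (Finset.univ : Finset (Fin κ → Fin q)) := by
    apply Finset.eq_univ_iff_forall.mpr
    intro z
    simp only [Finset.mem_image, Finset.mem_univ, true_and]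
    refine ⟨fun j => if h : ∃ s, e s = j then z h.choose else ⟨0, hq⟩, ?_⟩
    funext s
    have h : ∃ s', e s' = e s := ⟨s, rfl⟩
    show (if h : ∃ s', e s' = e s then z h.choose else _) = z s
    rw [dif_pos h, he h.choose_spec]
  rw [himg, Finset.mul_sum]
  apply Finset.sum_congr rfl
  intro z _
  rw [show (Finset.univ.filter fun x : Fin n → Fin q => (fun s => x (e s)) = z).card
    = q ^ (n - κ) from fiber_card e he z]
  rw [nsmul_eq_mul]
  push_cast
  ring

lemma dist_one_sum {q n : ℕ} (x : Fin n → Fin q) (f : (Fin n → Fin q) → ℝ) :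
    ∑ y ∈ Finset.univ.filter (fun y : Fin n → Fin q => hammingDist x y = 1), f y
      = ∑ p ∈ Finset.univ.filter (fun p : Fin n × Fin q => p.2 ≠ x p.1),
          f (Function.update x p.1 p.2) := by
  classical
  refine (Finset.sum_nbij (fun p : Fin n × Fin q => Function.update x p.1 p.2) ?_ ?_ ?_ ?_).symm
  · intro p hp
    simp only [Finset.mem_filter, Finset.mem_univ, true_and] at hp ⊢
    have hset : (Finset.univ.filter fun i => x i ≠ Function.update x p.1 p.2 i) = {p.1} := by
      ext i
      simp only [Finset.mem_filter, Finset.mem_univ, true_and, Finset.mem_singleton]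
      constructor
      · intro hi
        by_contra hne
        exact hi (Function.update_of_ne hne p.2 x).symm
      · rintro rfl
        rw [Function.update_self]
        exact fun h => hp h.symm
    show (Finset.univ.filter fun i => x i ≠ Function.update x p.1 p.2 i).card = 1
    rw [hset, Finset.card_singleton]
  · rintro ⟨j, a⟩ hp ⟨j', a'⟩ hp' hupd
    simp only [Finset.coe_filter, Set.mem_setOf_eq, Finset.mem_univ, true_and] at hp hp'
    have h2 : Function.update x j a j = Function.update x j' a' j := congrFun hupd j
    by_cases hjj : j = j'
    · subst hjj
      simp only [Function.update_self] at h2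
      rw [h2]
    · rw [Function.update_self, Function.update_of_ne hjj] at h2
      exact absurd h2 hp
  · intro y hy
    simp only [Finset.coe_filter, Set.mem_setOf_eq, Finset.mem_univ, true_and] at hy
    obtain ⟨j, hj⟩ := Finset.card_eq_one.mp hy
    have hjmem : j ∈ Finset.univ.filter fun i => x i ≠ y i := by rw [hj]; exact Finset.mem_singleton_self j
    simp only [Finset.mem_filter, Finset.mem_univ, true_and] at hjmem
    refine ⟨(j, y j), ?_, ?_⟩
    · simp only [Finset.coe_filter, Set.mem_setOf_eq, Finset.mem_univ, true_and]
      exact Ne.symm hjmem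
    · funext i
      show Function.update x j (y j) i = y i
      rcases eq_or_ne i j with rfl | hij
      · rw [Function.update_self]
      · rw [Function.update_of_ne hij]
        by_contra hne
        have : i ∈ Finset.univ.filter fun i => x i ≠ y i := by
          simp only [Finset.mem_filter, Finset.mem_univ, true_and]; exact hne
        rw [hj, Finset.mem_singleton] at this
        exact hij this
  · intro p _; rfl

lemma pair_sum {q n : ℕ} (x : Fin n → Fin q) (g : Fin n → Fin q → ℝ) :
    ∑ p ∈ Finset.univ.filter (fun p : Fin n × Fin q => p.2 ≠ x p.1), g p.1 p.2
      = (∑ j, ∑ a, g j a) - ∑ j, g j (x j) := by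
  classical
  have hsplit := Finset.sum_filter_add_sum_filter_not Finset.univ
    (fun p : Fin n × Fin q => p.2 ≠ x p.1) (fun p => g p.1 p.2)
  have h2 : ∑ p ∈ Finset.univ.filter (fun p : Fin n × Fin q => ¬ p.2 ≠ x p.1), g p.1 p.2
      = ∑ j, g j (x j) := by
    refine Finset.sum_nbij' (fun p : Fin n × Fin q => p.1) (fun j => (j, x j)) ?_ ?_ ?_ ?_ ?_
    · intro p _; exact Finset.mem_univ _
    · intro j _; simp
    · intro p hp
      simp only [Finset.mem_filter, Finset.mem_univ, true_and, not_not] at hp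
      show (p.1, x p.1) = p
      exact Prod.ext rfl hp.symm
    · intro j _; rfl
    · intro p hp
      simp only [Finset.mem_filter, Finset.mem_univ, true_and, not_not] at hp
      rw [hp]
  have h3 : ∑ p : Fin n × Fin q, g p.1 p.2 = ∑ j, ∑ a, g j a := Fintype.sum_prod_type _
  rw [h2, h3] at hsplit
  linarith

lemma constraint_key {q n t : ℕ} (hq : 2 ≤ q)
    (e : Fin (t+1) → Fin n) (he : Function.Injective e)
    (P : (Fin (t+1) → Fin q) → ℝ) (hbal : BalancedTwise q t P) (x : Fin n → Fin q) :
    ∑ p ∈ Finset.univ.filter (fun p : Fin n × Fin q => p.2 ≠ x p.1),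
        P (fun s => Function.update x p.1 p.2 (e s))
      = ((q:ℝ) * (t+1)) * (((q:ℝ)^(n-(t+1)) * ∑ z, P z) / (q:ℝ)^n)
        + (((q:ℝ) - 1) * n - (q:ℝ) * (t+1)) * P (fun s => x (e s)) := by
  classical
  have hq0 : (q:ℝ) ≠ 0 := by
    have : (0:ℝ) < q := by exact_mod_cast Nat.lt_of_lt_of_le Nat.zero_lt_two hq
    linarith
  have hqt : ((q:ℝ))^t ≠ 0 := pow_ne_zero _ hq0
  have hqn : ((q:ℝ))^n ≠ 0 := pow_ne_zero _ hq0
  have hκn : t + 1 ≤ n := by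
    have := Fintype.card_le_of_injective e he
    simpa using this
  rw [pair_sum x (fun j a => P (fun s => Function.update x j a (e s)))]
  have hfil : (Finset.univ.filter fun j : Fin n => j ∈ Set.range e) = Finset.univ.image e := by
    ext j; simp [eq_comm]
  have hmain : ∑ j, ∑ a, P (fun s => Function.update x j a (e s))
      = ((t:ℝ)+1) * ((∑ z, P z) / (q:ℝ)^t)
        + ((n:ℝ) - ((t:ℝ)+1)) * ((q:ℝ) * P (fun s => x (e s))) := by
    have hsplit := Finset.sum_filter_add_sum_filter_not Finset.univ
      (fun j : Fin n => j ∈ Set.range e)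
      (fun j => ∑ a, P (fun s => Function.update x j a (e s)))
    have hin : ∑ j ∈ Finset.univ.filter (fun j : Fin n => j ∈ Set.range e),
        ∑ a, P (fun s => Function.update x j a (e s))
        = ((t:ℝ)+1) * ((∑ z, P z) / (q:ℝ)^t) := by
      rw [hfil, Finset.sum_image (fun s _ s' _ h => he h)]
      have hterm : ∀ s0 : Fin (t+1), ∑ a, P (fun s => Function.update x (e s0) a (e s))
          = (∑ z, P z) / (q:ℝ)^t := by
        intro s0
        have heq : ∀ a : Fin q, (fun s => Function.update x (e s0) a (e s))
            = Function.update (fun s => x (e s)) s0 a := by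
          intro a; funext r
          rcases eq_or_ne r s0 with rfl | hr
          · simp
          · rw [Function.update_of_ne (fun h => hr (he h)) a x,
              Function.update_of_ne hr]
        simp_rw [heq]
        rw [eq_div_iff hqt]
        exact slice_sum P hbal (fun s => x (e s)) s0
      rw [Finset.sum_congr rfl (fun s0 _ => hterm s0), Finset.sum_const,
        Finset.card_univ, Fintype.card_fin, nsmul_eq_mul]
      push_cast; ring
    have hout : ∑ j ∈ Finset.univ.filter (fun j : Fin n => ¬ j ∈ Set.range e),
        ∑ a, P (fun s => Function.update x j a (e s))
        = ((n:ℝ) - ((t:ℝ)+1)) * ((q:ℝ) * P (fun s => x (e s))) := by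
      have hcongr : ∀ j ∈ Finset.univ.filter (fun j : Fin n => ¬ j ∈ Set.range e),
          ∑ a : Fin q, P (fun s => Function.update x j a (e s))
            = (q:ℝ) * P (fun s => x (e s)) := by
        intro j hj
        simp only [Finset.mem_filter, Finset.mem_univ, true_and] at hj
        have hupd : ∀ a : Fin q, (fun s => Function.update x j a (e s))
            = fun s => x (e s) := by
          intro a; funext s
          exact Function.update_of_ne (fun h => hj ⟨s, h⟩) a x
        simp_rw [hupd]
        rw [Finset.sum_const, Finset.card_univ, Fintype.card_fin, nsmul_eq_mul]
      rw [Finset.sum_congr rfl hcongr, Finset.sum_const, nsmul_eq_mul]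
      have hc : (Finset.univ.filter (fun j : Fin n => ¬ j ∈ Set.range e)).card
          = n - (t+1) := by
        have h1 := Finset.card_filter_add_card_filter_not
          (s := (Finset.univ : Finset (Fin n))) (p := fun j : Fin n => j ∈ Set.range e)
        rw [hfil, Finset.card_image_of_injective _ he] at h1
        simp only [Finset.card_univ, Fintype.card_fin] at h1
        omega
      rw [hc, Nat.cast_sub hκn]
      push_cast; ring
    rw [← hsplit, hin, hout]
  have hself : ∑ j : Fin n, P (fun s => Function.update x j (x j) (e s))
      = (n:ℝ) * P (fun s => x (e s)) := by
    have hB : ∀ j : Fin n, (fun s => Function.update x j (x j) (e s))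
        = (fun s => x (e s)) := by
      intro j; funext s
      rcases eq_or_ne (e s) j with rfl | hne
      · rw [Function.update_self]
      · rw [Function.update_of_ne hne]
    simp_rw [hB]
    rw [Finset.sum_const, Finset.card_univ, Fintype.card_fin, nsmul_eq_mul]
  rw [hmain, hself]
  have hpowrel : ((q:ℝ))^(n-(t+1)) = (q:ℝ)^n / ((q:ℝ)^t * q) := by
    rw [eq_div_iff (by exact mul_ne_zero hqt hq0)]
    rw [← pow_succ, ← pow_add]
    congr 1
    omega
  rw [hpowrel]
  field_simp
  ring

lemma constraint_key' {q n κ : ℕ} (hq : 2 ≤ q) (k : ℕ) (hκ : κ = k) (hk : 2 ≤ k)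
    (e : Fin κ → Fin n) (he : Function.Injective e)
    (P : (Fin κ → Fin q) → ℝ) (hbal : BalancedTwise q (k-1) P) (x : Fin n → Fin q) :
    ∑ p ∈ Finset.univ.filter (fun p : Fin n × Fin q => p.2 ≠ x p.1),
        P (fun s => Function.update x p.1 p.2 (e s))
      = ((q:ℝ) * k) * (((q:ℝ)^(n-k) * ∑ z, P z) / (q:ℝ)^n)
        + (((q:ℝ) - 1) * n - (q:ℝ) * k) * P (fun s => x (e s)) := by
  subst hκ
  obtain ⟨t, rfl⟩ : ∃ t, κ = t + 1 := ⟨κ - 1, by omega⟩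
  have hbal' : BalancedTwise q t P := by
    have : t + 1 - 1 = t := by omega
    rwa [this] at hbal
  have h := constraint_key hq e he P hbal' x
  rw [h]
  push_cast
  ring

/-- Let `q ≥ 2`, `k ≥ 2`, and let `I` be a maximization instance of
`k CSP-q` with `n` variables and `opt(I) ≠ wor(I)` in which every constraint has arity
exactly `k` and every constraint function is balanced `(k−1)`-wise independent. Then:
(1) for every `x`, the sum of `v(I,y)` over all `y` at Hamming distance exactly `1` from
`x` equals `q·k·E[v(I,X)] + ((q−1)·n − q·k)·v(I,x)`;
(2) every local optimum `x` with respect to `B¹` satisfies `v(I,x) ≥ E[v(I,X)]`;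
(3) if `(q−1)·n ≥ q·k`, then for every `x` there is `y ∈ B¹(x)` with
`v(I,y) ≥ (qk/((q−1)n))·E[v(I,X)] + (1 − qk/((q−1)n))·wor(I)`. -/
theorem balanced_Ek_local_search
    (q k n : ℕ) (hq : 2 ≤ q) (hk : 2 ≤ k)
    (I : CSPInstance q k n) (hne : I.opt ≠ I.wor)
    (harity : ∀ i : Fin I.m, I.arity i = k)
    (hbal : ∀ i : Fin I.m, BalancedTwise q (k - 1) (I.P i)) :
    (∀ x : Fin n → Fin q,
      (∑ y ∈ Finset.univ.filter fun y : Fin n → Fin q => hammingDist x y = 1, I.value y) =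
        (q : ℝ) * k * I.avg + (((q : ℝ) - 1) * n - (q : ℝ) * k) * I.value x) ∧
    (∀ x : Fin n → Fin q,
      (∀ y : Fin n → Fin q, hammingDist x y ≤ 1 → I.value y ≤ I.value x) →
        I.avg ≤ I.value x) ∧
    (q * k ≤ (q - 1) * n →
      ∀ x : Fin n → Fin q, ∃ y : Fin n → Fin q, hammingDist x y ≤ 1 ∧
        (q : ℝ) * k / (((q : ℝ) - 1) * n) * I.avg +
            (1 - (q : ℝ) * k / (((q : ℝ) - 1) * n)) * I.wor ≤ I.value y) := by
  classical
  have hq1 : 1 ≤ q := by omega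
  have hq0 : (q:ℝ) ≠ 0 := Nat.cast_ne_zero.mpr (by omega)
  have hqn : ((q:ℝ))^n ≠ 0 := pow_ne_zero _ hq0
  have hkey : ∀ (x : Fin n → Fin q) (i : Fin I.m),
      ∑ p ∈ Finset.univ.filter (fun p : Fin n × Fin q => p.2 ≠ x p.1),
        I.P i (fun s => Function.update x p.1 p.2 (I.idx i s))
      = ((q:ℝ) * k) * (((q:ℝ)^(n-k) * ∑ z, I.P i z) / (q:ℝ)^n)
        + (((q:ℝ) - 1) * n - (q:ℝ) * k) * I.P i (fun s => x (I.idx i s)) :=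
    fun x i => constraint_key' hq k (harity i) hk (I.idx i) (I.idx_mono i).injective
      (I.P i) (hbal i) x
  have hsum : ∀ i : Fin I.m,
      ∑ x : Fin n → Fin q, I.P i (fun s => x (I.idx i s))
        = (q:ℝ)^(n-k) * ∑ z, I.P i z := by
    intro i
    have h := sum_comp_inj hq1 (I.idx i) (I.idx_mono i).injective (I.P i)
    have hnk : n - I.arity i = n - k := by rw [harity i]
    rw [hnk] at h
    exact h
  have havg : I.avg = (∑ i : Fin I.m, I.w i * ((q:ℝ)^(n-k) * ∑ z, I.P i z)) / (q:ℝ)^n := by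
    unfold CSPInstance.avg CSPInstance.value
    congr 1
    rw [Finset.sum_comm]
    exact Finset.sum_congr rfl fun i _ => by rw [← Finset.mul_sum, hsum i]
  have part1 : ∀ x : Fin n → Fin q,
      (∑ y ∈ Finset.univ.filter fun y : Fin n → Fin q => hammingDist x y = 1, I.value y) =
        (q : ℝ) * k * I.avg + (((q : ℝ) - 1) * n - (q : ℝ) * k) * I.value x := by
    intro x
    rw [dist_one_sum x I.value]
    unfold CSPInstance.value
    calc ∑ p ∈ Finset.univ.filter (fun p : Fin n × Fin q => p.2 ≠ x p.1),
          ∑ i : Fin I.m, I.w i * I.P i (fun s => Function.update x p.1 p.2 (I.idx i s))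
        = ∑ i : Fin I.m, ∑ p ∈ Finset.univ.filter (fun p : Fin n × Fin q => p.2 ≠ x p.1),
            I.w i * I.P i (fun s => Function.update x p.1 p.2 (I.idx i s)) :=
          Finset.sum_comm
      _ = ∑ i : Fin I.m, I.w i * (((q:ℝ) * k) * (((q:ℝ)^(n-k) * ∑ z, I.P i z) / (q:ℝ)^n)
            + (((q:ℝ) - 1) * n - (q:ℝ) * k) * I.P i (fun s => x (I.idx i s))) := by
          refine Finset.sum_congr rfl fun i _ => ?_
          rw [← Finset.mul_sum, hkey x i]
      _ = (q : ℝ) * k * I.avg + (((q : ℝ) - 1) * n - (q : ℝ) * k)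
            * ∑ i : Fin I.m, I.w i * I.P i (fun s => x (I.idx i s)) := by
          rw [havg, Finset.sum_div, Finset.mul_sum, Finset.mul_sum, ← Finset.sum_add_distrib]
          exact Finset.sum_congr rfl fun i _ => by ring
  refine ⟨part1, ?_, ?_⟩
  · intro x hloc
    have hcard1 : ((Finset.univ.filter
        (fun y : Fin n → Fin q => hammingDist x y = 1)).card : ℝ) = ((q:ℝ)-1)*n := by
      have h := dist_one_sum x (fun _ => (1:ℝ))
      rw [pair_sum x (fun _ _ => (1:ℝ))] at h
      simp only [Finset.sum_const, nsmul_eq_mul, mul_one, Finset.card_univ,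
        Fintype.card_fin] at h
      rw [h]; push_cast; ring
    have hsum_le : ∑ y ∈ Finset.univ.filter
          (fun y : Fin n → Fin q => hammingDist x y = 1), I.value y
        ≤ (((q:ℝ)-1)*n) * I.value x := by
      calc ∑ y ∈ Finset.univ.filter (fun y : Fin n → Fin q => hammingDist x y = 1), I.value y
          ≤ ∑ y ∈ Finset.univ.filter (fun y : Fin n → Fin q => hammingDist x y = 1),
              I.value x := by
            refine Finset.sum_le_sum fun y hy => ?_
            simp only [Finset.mem_filter, Finset.mem_univ, true_and] at hy
            exact hloc y (le_of_eq hy)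
        _ = (((q:ℝ)-1)*n) * I.value x := by
            rw [Finset.sum_const, nsmul_eq_mul, hcard1]
    have h1 := part1 x
    have hqk : (0:ℝ) < (q:ℝ) * k := by
      have h2 : (0:ℝ) < (q:ℝ) := by exact_mod_cast Nat.lt_of_lt_of_le Nat.zero_lt_two hq
      have h3 : (0:ℝ) < (k:ℝ) := by exact_mod_cast Nat.lt_of_lt_of_le Nat.zero_lt_two hk
      exact mul_pos h2 h3
    have h5 : (q:ℝ)*k*I.avg ≤ (q:ℝ)*k*I.value x := by linarith
    exact (mul_le_mul_iff_right₀ hqk).mp h5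
  · intro h3 x
    have h4 : 4 ≤ q * k := Nat.mul_le_mul hq hk
    have hn : 0 < n := by
      rcases Nat.eq_zero_or_pos n with rfl | h
      · exfalso
        have h0 : q * k ≤ 0 := by simpa using h3
        exact absurd (h4.trans h0) (by norm_num)
      · exact h
    have hcast3 : (q:ℝ) * k ≤ ((q:ℝ) - 1) * n := by
      have h5 : ((q*k : ℕ) : ℝ) ≤ (((q-1)*n : ℕ) : ℝ) := Nat.cast_le.mpr h3
      push_cast [Nat.cast_sub (by omega : 1 ≤ q)] at h5
      exact h5
    have hR : (0:ℝ) < ((q:ℝ) - 1) * n := by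
      have h5 : (2:ℝ) ≤ (q:ℝ) := by exact_mod_cast hq
      have h6 : (1:ℝ) ≤ (n:ℝ) := by exact_mod_cast hn
      nlinarith
    obtain ⟨y0, hy0mem, hy0max⟩ := Finset.exists_max_image
      (Finset.univ.filter fun y : Fin n → Fin q => hammingDist x y ≤ 1) I.value
      ⟨x, by simp⟩
    simp only [Finset.mem_filter, Finset.mem_univ, true_and] at hy0mem
    refine ⟨y0, hy0mem, ?_⟩
    have hcard1 : ((Finset.univ.filter
        (fun y : Fin n → Fin q => hammingDist x y = 1)).card : ℝ) = ((q:ℝ)-1)*n := by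
      have h := dist_one_sum x (fun _ => (1:ℝ))
      rw [pair_sum x (fun _ _ => (1:ℝ))] at h
      simp only [Finset.sum_const, nsmul_eq_mul, mul_one, Finset.card_univ,
        Fintype.card_fin] at h
      rw [h]; push_cast; ring
    have hsum_le : ∑ y ∈ Finset.univ.filter
          (fun y : Fin n → Fin q => hammingDist x y = 1), I.value y
        ≤ (((q:ℝ)-1)*n) * I.value y0 := by
      calc ∑ y ∈ Finset.univ.filter (fun y : Fin n → Fin q => hammingDist x y = 1), I.value y
          ≤ ∑ y ∈ Finset.univ.filter (fun y : Fin n → Fin q => hammingDist x y = 1),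
              I.value y0 := by
            refine Finset.sum_le_sum fun y hy => ?_
            simp only [Finset.mem_filter, Finset.mem_univ, true_and] at hy
            exact hy0max y (by simp [hy.le])
        _ = (((q:ℝ)-1)*n) * I.value y0 := by
            rw [Finset.sum_const, nsmul_eq_mul, hcard1]
    have hwor : I.wor ≤ I.value x :=
      csInf_le (Set.Finite.bddBelow (Set.finite_range I.value)) ⟨x, rfl⟩
    have h1 := part1 x
    have hcoef : (0:ℝ) ≤ ((q:ℝ) - 1) * n - (q:ℝ)*k := by linarith
    have hkeyineq : (q:ℝ)*k*I.avg + (((q:ℝ)-1)*n - (q:ℝ)*k)*I.wor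
        ≤ (((q:ℝ)-1)*n) * I.value y0 := by
      nlinarith [mul_le_mul_of_nonneg_left hwor hcoef]
    have heq : (q : ℝ) * k / (((q : ℝ) - 1) * n) * I.avg +
        (1 - (q : ℝ) * k / (((q : ℝ) - 1) * n)) * I.wor
        = ((q:ℝ)*k*I.avg + (((q:ℝ)-1)*n - (q:ℝ)*k)*I.wor) / (((q:ℝ)-1)*n) := by
      have hqm1 : (q:ℝ) - 1 ≠ 0 := by
        have : (2:ℝ) ≤ q := by exact_mod_cast hq
        linarith
      have hn0 : (n:ℝ) ≠ 0 := by exact_mod_cast hn.ne'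
      field_simp
    rw [heq, div_le_iff₀ hR]
    nlinarith [hkeyineq]
end

section
/- Let q ≥ 2, k ≥ 2 and d ≥ k be integers, let I be a maximization instance of k CSP-q with n ≥ d variables and opt(I) ≠ wor(I), and let x ∈ Σ_q^n. Then max_{y∈B^d(x)} v(I,y) ≥ δ(n,d,k)·opt(I) + (1 − δ(n,d,k))·wor(I). Moreover, if ⌊n(q−1)/q⌋ ≥ d, then max_{y∈B̃^d(x)} v(I,y) ≥ δ(⌊n(q−1)/q⌋, d, k)·opt(I) + (1 − δ(⌊n(q−1)/q⌋, d, k))·wor(I). -/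
/-- `(Ψ, Φ)` is an `(n,d)`-cover pair of arrays (CPA) of strength `k`: both arrays have
`R` rows, `n` columns and Boolean entries; `Φ` contains at least one all-ones row; every
row of `Ψ` has at most `d` ones; and for every `k` pairwise distinct columns and every
`v ∈ {0,1}^k`, `Ψ` and `Φ` have the same number of rows whose restriction to these columns
equals `v`. -/
def IsCPA (n d k R : ℕ) (Ψ Φ : Fin R → Fin n → Bool) : Prop :=
  (∃ r, ∀ j, Φ r j = true) ∧
  (∀ r, (Finset.univ.filter fun j => Ψ r j = true).card ≤ d) ∧
  (∀ c : Fin k → Fin n, StrictMono c → ∀ v : Fin k → Bool,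
    (Finset.univ.filter fun r => ∀ s, Ψ r (c s) = v s).card =
      (Finset.univ.filter fun r => ∀ s, Φ r (c s) = v s).card)

/-- `Δ(R, R*, n, d, k)` is nonempty: there is an `(n,d)`-CPA of strength `k` with `R` rows
in which the all-ones row occurs exactly `R*` times in `Φ`. -/
def DeltaNonempty (R Rstar n d k : ℕ) : Prop :=
  ∃ Ψ Φ : Fin R → Fin n → Bool, IsCPA n d k R Ψ Φ ∧
    (Finset.univ.filter fun r => ∀ j, Φ r j = true).card = Rstar

/-- `δ(n,d,k)`: the supremum of `R*/R` over all integers `R ≥ R* > 0` such that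
`Δ(R, R*, n, d, k)` is nonempty. -/
noncomputable def deltaCPA (n d k : ℕ) : ℝ :=
  sSup {x : ℝ | ∃ R Rstar : ℕ, 0 < Rstar ∧ Rstar ≤ R ∧ DeltaNonempty R Rstar n d k ∧
    x = (Rstar : ℝ) / R}

open Finset in

lemma sum_comp_count {α β : Type*} [Fintype α] [Fintype β] [DecidableEq β]
    (F : α → β) (G : β → ℝ) :
    ∑ a, G (F a) = ∑ b, ((Finset.univ.filter fun a => F a = b).card : ℝ) * G b := by
  have h : ∀ a : α, G (F a) = ∑ b, if F a = b then G b else 0 := by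
    intro a; simp
  simp_rw [h]
  rw [Finset.sum_comm]
  refine Finset.sum_congr rfl fun b _ => ?_
  rw [← Finset.sum_filter, Finset.sum_const, nsmul_eq_mul]

lemma sum_eq_of_depends_on_small {N k R : ℕ} (hkN : k ≤ N)
    (Ψ Φ : Fin R → Fin N → Bool)
    (hstr : ∀ c : Fin k → Fin N, StrictMono c → ∀ v : Fin k → Bool,
      (Finset.univ.filter fun r => ∀ s, Ψ r (c s) = v s).card =
        (Finset.univ.filter fun r => ∀ s, Φ r (c s) = v s).card)
    (g : (Fin N → Bool) → ℝ) (S : Finset (Fin N)) (hS : S.card ≤ k)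
    (hdep : ∀ b b' : Fin N → Bool, (∀ j ∈ S, b j = b' j) → g b = g b') :
    ∑ r, g (Ψ r) = ∑ r, g (Φ r) := by
  obtain ⟨S', hSS', hcard⟩ := Finset.exists_superset_card_eq hS (by simpa using hkN)
  set e := S'.orderIsoOfFin hcard with he
  set c : Fin k → Fin N := fun s => (e s : Fin N) with hc
  have hcmono : StrictMono c := fun a b hab => by
    exact_mod_cast e.strictMono hab
  set G : (Fin k → Bool) → ℝ :=
    fun u => g (fun j => if hj : j ∈ S' then u (e.symm ⟨j, hj⟩) else false) with hG
  have key : ∀ b : Fin N → Bool, g b = G (fun s => b (c s)) := by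
    intro b
    refine hdep _ _ fun j hj => ?_
    have hj' : j ∈ S' := hSS' hj
    rw [dif_pos hj']
    show b j = b (c (e.symm ⟨j, hj'⟩))
    congr 1
    show j = ((e (e.symm ⟨j, hj'⟩) : S') : Fin N)
    rw [OrderIso.apply_symm_apply]
  simp_rw [key]
  rw [sum_comp_count (fun r => fun s => Ψ r (c s)) G,
      sum_comp_count (fun r => fun s => Φ r (c s)) G]
  refine Finset.sum_congr rfl fun v _ => ?_
  have h1 : (Finset.univ.filter fun r => (fun s => Ψ r (c s)) = v)
      = Finset.univ.filter fun r => ∀ s, Ψ r (c s) = v s := by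
    simp [funext_iff]
  have h2 : (Finset.univ.filter fun r => (fun s => Φ r (c s)) = v)
      = Finset.univ.filter fun r => ∀ s, Φ r (c s) = v s := by
    simp [funext_iff]
  rw [h1, h2, hstr c hcmono v]

open Finset in
lemma exists_good_shift {q n : ℕ} (hq : 2 ≤ q) (x xstar : Fin n → Fin q) :
    ∃ a : Fin q, (Finset.univ.filter fun j => x j + a ≠ xstar j).card ≤ n * (q - 1) / q := by
  classical
  haveI : NeZero q := ⟨by omega⟩
  have hcol : ∀ j : Fin n,
      (Finset.univ.filter fun a : Fin q => x j + a ≠ xstar j).card = q - 1 := by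
    intro j
    have h1 : (Finset.univ.filter fun a : Fin q => x j + a = xstar j).card = 1 := by
      have : (Finset.univ.filter fun a : Fin q => x j + a = xstar j)
          = {xstar j - x j} := by
        ext a
        simp only [mem_filter, mem_univ, true_and, mem_singleton]
        constructor
        · intro h; rw [← h]; simp
        · intro h; rw [h]; simp
      rw [this, Finset.card_singleton]
    have h2 := Finset.card_filter_add_card_filter_not
      (s := (Finset.univ : Finset (Fin q))) (p := fun a => x j + a = xstar j)
    simp only [card_univ, Fintype.card_fin] at h2
    simp only [ne_eq]
    omega
  have hsum : ∑ a : Fin q, (Finset.univ.filter fun j => x j + a ≠ xstar j).card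
      = n * (q - 1) := by
    have expand : ∀ a : Fin q, (Finset.univ.filter fun j => x j + a ≠ xstar j).card
        = ∑ j : Fin n, if x j + a ≠ xstar j then 1 else 0 := by
      intro a
      rw [Finset.card_filter]
    simp_rw [expand]
    rw [Finset.sum_comm]
    have : ∀ j : Fin n, ∑ a : Fin q, (if x j + a ≠ xstar j then 1 else 0) = q - 1 := by
      intro j
      rw [← Finset.card_filter]
      exact hcol j
    simp_rw [this]
    simp [Finset.sum_const, mul_comm]
  by_contra hcon
  push_neg at hcon
  have hbig : ∀ a : Fin q, n * (q - 1) / q + 1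
      ≤ (Finset.univ.filter fun j => x j + a ≠ xstar j).card := fun a => hcon a
  have : q * (n * (q - 1) / q + 1) ≤ n * (q - 1) := by
    calc q * (n * (q - 1) / q + 1)
        = ∑ _a : Fin q, (n * (q - 1) / q + 1) := by
          rw [Finset.sum_const, card_univ, Fintype.card_fin, smul_eq_mul]
      _ ≤ ∑ a : Fin q, (Finset.univ.filter fun j => x j + a ≠ xstar j).card :=
          Finset.sum_le_sum fun a _ => hbig a
      _ = n * (q - 1) := hsum
  rw [Nat.mul_succ] at this
  have hmod := Nat.div_add_mod (n * (q - 1)) q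
  have hlt := Nat.mod_lt (n * (q - 1)) (show 0 < q by omega)
  omega

open Finset in
lemma core_exists {q k n : ℕ} (I : CSPInstance q k n)
    {N d R Rstar : ℕ} (hkN : k ≤ N)
    (Ψ Φ : Fin R → Fin N → Bool) (hcpa : IsCPA N d k R Ψ Φ)
    (hRstar : (Finset.univ.filter fun r => ∀ j, Φ r j = true).card = Rstar)
    (hpos : 0 < Rstar)
    (z xstar : Fin n → Fin q) (W : ℝ) (hW : ∀ y, W ≤ I.value y)
    (D : Finset (Fin n)) (σ : Fin n → Fin N) (hσ : Set.InjOn σ D)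
    (hz : ∀ j ∉ D, z j = xstar j) :
    ∃ y : Fin n → Fin q, hammingDist z y ≤ d ∧
      (Rstar : ℝ)/R * I.value xstar + (1 - (Rstar : ℝ)/R) * W ≤ I.value y := by
  classical
  obtain ⟨hall, hrow, hstr⟩ := hcpa
  have hRsR : Rstar ≤ R := by
    rw [← hRstar]; exact (Finset.card_filter_le _ _).trans (by simp)
  have hR : 0 < R := lt_of_lt_of_le hpos hRsR
  -- the candidate solutions
  set yy : Fin R → Fin n → Fin q :=
    fun r j => if j ∈ D ∧ Ψ r (σ j) = true then xstar j else z j with hyy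
  set zz : Fin R → Fin n → Fin q :=
    fun r j => if j ∈ D ∧ Φ r (σ j) = true then xstar j else z j with hzz
  -- Step 1: Hamming distance bound
  have hdist : ∀ r, hammingDist z (yy r) ≤ d := by
    intro r
    have : hammingDist z (yy r) = (Finset.univ.filter fun j => z j ≠ yy r j).card := rfl
    rw [this]
    refine le_trans (Finset.card_le_card_of_injOn σ ?_ ?_) (hrow r)
    · intro j hj
      simp only [Finset.mem_coe, mem_filter, mem_univ, true_and] at hj ⊢
      by_contra h
      apply hj
      rw [hyy]
      exact (if_neg (fun hc : _ ∧ _ => h hc.2)).symm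
    · intro j1 hj1 j2 hj2 hj
      simp only [coe_filter, Set.mem_setOf_eq] at hj1 hj2
      have m1 : j1 ∈ D := by
        by_contra h; exact hj1.2 (by rw [hyy]; simp [h])
      have m2 : j2 ∈ D := by
        by_contra h; exact hj2.2 (by rw [hyy]; simp [h])
      exact hσ m1 m2 hj
  -- Step 2: equal sums
  have hsum_eq : ∑ r, I.value (yy r) = ∑ r, I.value (zz r) := by
    unfold CSPInstance.value
    conv_lhs => rw [Finset.sum_comm]
    conv_rhs => rw [Finset.sum_comm]
    refine Finset.sum_congr rfl fun i _ => ?_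
    set g : (Fin N → Bool) → ℝ := fun b => I.w i * I.P i
      (fun s => if I.idx i s ∈ D ∧ b (σ (I.idx i s)) = true
        then xstar (I.idx i s) else z (I.idx i s)) with hg
    have hgy : ∀ r, I.w i * I.P i (fun s => yy r (I.idx i s)) = g (Ψ r) := fun r => rfl
    have hgz : ∀ r, I.w i * I.P i (fun s => zz r (I.idx i s)) = g (Φ r) := fun r => rfl
    simp_rw [hgy, hgz]
    refine sum_eq_of_depends_on_small hkN Ψ Φ hstr g
      (((Finset.univ.image (I.idx i)) ∩ D).image σ) ?_ ?_
    · refine le_trans (Finset.card_image_le) ?_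
      refine le_trans (Finset.card_le_card Finset.inter_subset_left) ?_
      exact le_trans (Finset.card_image_le) (by simpa using I.arity_le i)
    · intro b b' hbb'
      have hfun : (fun s => if I.idx i s ∈ D ∧ b (σ (I.idx i s)) = true
            then xstar (I.idx i s) else z (I.idx i s))
          = (fun s => if I.idx i s ∈ D ∧ b' (σ (I.idx i s)) = true
            then xstar (I.idx i s) else z (I.idx i s)) := by
        funext s
        by_cases hD : I.idx i s ∈ D
        · have hmem : σ (I.idx i s) ∈ ((Finset.univ.image (I.idx i)) ∩ D).image σ :=
            Finset.mem_image_of_mem σ (by simp [hD])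
          rw [hbb' _ hmem]
        · simp [hD]
      simp only [hg, hfun]
  -- Step 3: lower bound on the Φ-side sum
  have hA : ∀ r ∈ Finset.univ.filter (fun r => ∀ c, Φ r c = true),
      I.value (zz r) = I.value xstar := by
    intro r hr
    simp only [mem_filter, mem_univ, true_and] at hr
    have : zz r = xstar := by
      funext j
      by_cases hD : j ∈ D
      · rw [hzz]; simp [hD, hr (σ j)]
      · rw [hzz]; simp [hD, hz j hD]
    rw [this]
  have hlow : (Rstar : ℝ) * I.value xstar + ((R : ℝ) - Rstar) * W
      ≤ ∑ r, I.value (zz r) := by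
    rw [← Finset.sum_filter_add_sum_filter_not Finset.univ (fun r => ∀ c, Φ r c = true)]
    have h1 : ∑ r ∈ Finset.univ.filter (fun r => ∀ c, Φ r c = true), I.value (zz r)
        = (Rstar : ℝ) * I.value xstar := by
      rw [Finset.sum_congr rfl hA, Finset.sum_const, hRstar, nsmul_eq_mul]
    have h2 : ((R : ℝ) - Rstar) * W
        ≤ ∑ r ∈ Finset.univ.filter (fun r => ¬ ∀ c, Φ r c = true), I.value (zz r) := by
      have hc : (Finset.univ.filter (fun r : Fin R => ¬ ∀ c, Φ r c = true)).card
          = R - Rstar := by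
        have := Finset.card_filter_add_card_filter_not
          (s := (Finset.univ : Finset (Fin R))) (p := fun r => ∀ c, Φ r c = true)
        simp only [card_univ, Fintype.card_fin] at this
        omega
      calc ((R : ℝ) - Rstar) * W = ((R - Rstar : ℕ) : ℝ) * W := by
            rw [Nat.cast_sub hRsR]
        _ = ∑ _r ∈ Finset.univ.filter (fun r : Fin R => ¬ ∀ c, Φ r c = true), W := by
            rw [Finset.sum_const, hc, nsmul_eq_mul]
        _ ≤ _ := Finset.sum_le_sum fun r _ => hW (zz r)
    linarith
  -- Step 4: extract a good row
  have htot : ∑ _r : Fin R, ((Rstar : ℝ) * I.value xstar + ((R : ℝ) - Rstar) * W) / R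
      ≤ ∑ r, I.value (yy r) := by
    rw [Finset.sum_const, card_univ, Fintype.card_fin, nsmul_eq_mul, hsum_eq]
    rw [mul_div_cancel₀]
    · exact hlow
    · exact_mod_cast hR.ne'
  obtain ⟨r, -, hr⟩ := Finset.exists_le_of_sum_le ⟨⟨0, hR⟩, Finset.mem_univ _⟩ htot
  refine ⟨yy r, hdist r, ?_⟩
  refine le_trans (le_of_eq ?_) hr
  have hRne : (R : ℝ) ≠ 0 := by exact_mod_cast hR.ne'
  field_simp
  try ring

/-- Let `q ≥ 2`, `k ≥ 2`, `d ≥ k`, let `I` be a maximization instance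
of `k CSP-q` with `n ≥ d` variables and `opt(I) ≠ wor(I)`, and let `x ∈ Σ_q^n`. Then some
`y` in the Hamming ball `B^d(x)` satisfies
`v(I,y) ≥ δ(n,d,k)·opt(I) + (1 − δ(n,d,k))·wor(I)`; moreover, if `⌊n(q−1)/q⌋ ≥ d`, some
`y` in `B̃^d(x) = ∪_{a∈Σ_q} B^d(x + a·𝟏)` satisfies
`v(I,y) ≥ δ(⌊n(q−1)/q⌋,d,k)·opt(I) + (1 − δ(⌊n(q−1)/q⌋,d,k))·wor(I)`. -/
theorem hamming_ball_diff_apx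
    (q k d n : ℕ) (hq : 2 ≤ q) (hk : 2 ≤ k) (hdk : k ≤ d) (hnd : d ≤ n)
    (I : CSPInstance q k n) (hne : I.opt ≠ I.wor) (x : Fin n → Fin q) :
    (∃ y : Fin n → Fin q, hammingDist x y ≤ d ∧
      deltaCPA n d k * I.opt + (1 - deltaCPA n d k) * I.wor ≤ I.value y) ∧
    (d ≤ n * (q - 1) / q →
      ∃ y : Fin n → Fin q, (∃ a : Fin q, hammingDist (fun j => x j + a) y ≤ d) ∧
        deltaCPA (n * (q - 1) / q) d k * I.opt +
            (1 - deltaCPA (n * (q - 1) / q) d k) * I.wor ≤ I.value y) := by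
  classical
  haveI : NeZero q := ⟨by omega⟩
  have hbddA : BddAbove (Set.range I.value) := (Set.finite_range _).bddAbove
  have hbddB : BddBelow (Set.range I.value) := (Set.finite_range _).bddBelow
  have hwor_le : ∀ y, I.wor ≤ I.value y := fun y => csInf_le hbddB ⟨y, rfl⟩
  have hle_opt : ∀ y, I.value y ≤ I.opt := fun y => le_csSup hbddA ⟨y, rfl⟩
  obtain ⟨xstar, hxstar⟩ := Finite.exists_max I.value
  have hopt : I.opt = I.value xstar :=
    le_antisymm (csSup_le ⟨_, ⟨xstar, rfl⟩⟩ (by rintro _ ⟨y, rfl⟩; exact hxstar y))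
      (le_csSup hbddA ⟨xstar, rfl⟩)
  have hwlt : I.wor < I.opt := lt_of_le_of_ne ((hwor_le x).trans (hle_opt x)) (Ne.symm hne)
  constructor
  · -- Part 1
    set T := Finset.univ.filter (fun y : Fin n → Fin q => hammingDist x y ≤ d) with hT
    have hTne : T.Nonempty := ⟨x, by simp [hT, hammingDist_self]⟩
    obtain ⟨y0, hy0T, hy0max⟩ := T.exists_max_image I.value hTne
    have hy0d : hammingDist x y0 ≤ d := (Finset.mem_filter.mp hy0T).2
    refine ⟨y0, hy0d, ?_⟩
    have hδ : deltaCPA n d k ≤ (I.value y0 - I.wor) / (I.opt - I.wor) := by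
      refine Real.sSup_le ?_ ?_
      · rintro ρ ⟨R, Rstar, hpos, hle, ⟨Ψ, Φ, hcpa, hcount⟩, rfl⟩
        obtain ⟨y, hyd, hyv⟩ := core_exists I (hdk.trans hnd) Ψ Φ hcpa hcount hpos x xstar
          I.wor hwor_le Finset.univ id Function.injective_id.injOn (by simp)
        have hyT : y ∈ T := Finset.mem_filter.mpr ⟨Finset.mem_univ _, hyd⟩
        have h1 : (Rstar : ℝ)/R * I.opt + (1 - (Rstar : ℝ)/R) * I.wor ≤ I.value y0 := by
          rw [hopt]; exact hyv.trans (hy0max y hyT)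
        rw [le_div_iff₀ (by linarith)]
        nlinarith [h1]
      · exact div_nonneg (by linarith [hwor_le y0]) (by linarith)
    have h2 : deltaCPA n d k * (I.opt - I.wor) ≤ I.value y0 - I.wor :=
      (le_div_iff₀ (by linarith)).mp hδ
    nlinarith [h2]
  · -- Part 2
    intro hd'
    obtain ⟨a, haD⟩ := exists_good_shift hq x xstar
    set z : Fin n → Fin q := fun j => x j + a with hzdef
    set D := Finset.univ.filter (fun j => z j ≠ xstar j) with hDdef
    have hDcard : D.card ≤ n * (q - 1) / q := haD
    have hn'pos : 0 < n * (q - 1) / q := lt_of_lt_of_le (by omega) hd'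
    set σ : Fin n → Fin (n * (q - 1) / q) := fun j =>
      if h : j ∈ D then Fin.castLE hDcard ((D.orderIsoOfFin rfl).symm ⟨j, h⟩)
      else ⟨0, hn'pos⟩ with hσdef
    have hσinj : Set.InjOn σ D := by
      intro j1 h1 j2 h2 heq
      simp only [Finset.mem_coe] at h1 h2
      simp only [hσdef, dif_pos h1, dif_pos h2] at heq
      have h3 := Fin.castLE_injective hDcard heq
      have h4 := (D.orderIsoOfFin rfl).symm.injective h3
      exact congrArg Subtype.val h4
    have hzout : ∀ j ∉ D, z j = xstar j := by
      intro j hj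
      simp only [hDdef, Finset.mem_filter, Finset.mem_univ, true_and, not_not] at hj
      exact hj
    set T2 := Finset.univ.filter
      (fun y : Fin n → Fin q => ∃ a' : Fin q, hammingDist (fun j => x j + a') y ≤ d) with hT2
    have hT2ne : T2.Nonempty := by
      refine ⟨z, Finset.mem_filter.mpr ⟨Finset.mem_univ _, ⟨a, ?_⟩⟩⟩
      rw [← hzdef]
      simp [hammingDist_self]
    obtain ⟨y0, hy0T, hy0max⟩ := T2.exists_max_image I.value hT2ne
    have hy0d : ∃ a' : Fin q, hammingDist (fun j => x j + a') y0 ≤ d :=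
      (Finset.mem_filter.mp hy0T).2
    refine ⟨y0, hy0d, ?_⟩
    have hδ : deltaCPA (n * (q - 1) / q) d k ≤ (I.value y0 - I.wor) / (I.opt - I.wor) := by
      refine Real.sSup_le ?_ ?_
      · rintro ρ ⟨R, Rstar, hpos, hle, ⟨Ψ, Φ, hcpa, hcount⟩, rfl⟩
        obtain ⟨y, hyd, hyv⟩ := core_exists I (hdk.trans hd') Ψ Φ hcpa hcount hpos z xstar
          I.wor hwor_le D σ hσinj hzout
        have hyT : y ∈ T2 := Finset.mem_filter.mpr
          ⟨Finset.mem_univ _, ⟨a, by rw [← hzdef]; exact hyd⟩⟩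
        have h1 : (Rstar : ℝ)/R * I.opt + (1 - (Rstar : ℝ)/R) * I.wor ≤ I.value y0 := by
          rw [hopt]; exact hyv.trans (hy0max y hyT)
        rw [le_div_iff₀ (by linarith)]
        nlinarith [h1]
      · exact div_nonneg (by linarith [hwor_le y0]) (by linarith)
    have h2 : deltaCPA (n * (q - 1) / q) d k * (I.opt - I.wor) ≤ I.value y0 - I.wor :=
      (le_div_iff₀ (by linarith)).mp hδ
    nlinarith [h2]
end
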